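/- arXiv:2007.12576 — 6 statements merged into one kernel-verified Lean document; each statement's English description precedes it below -/
import Mathlib

section
/- Let β ∈ (0,1), let A₁, A₂ be positive definite complex matrices and B₁, B₂ be positive semidefinite complex matrices, with A₁, B₁ of the same size and A₂, B₂ of the same size. Then (A₁ ⊗ A₂) #_β (B₁ ⊗ B₂) = (A₁ #_β B₁) ⊗ (A₂ #_β B₂), where ⊗ denotes the Kronecker product. -/
open Matrix Filter
open scoped Kronecker Classical ComplexOrder

noncomputable def Matrix.rpowH {n : Type*} [Fintype n] [DecidableEq n]
    (A : Matrix n n ℂ) (r : ℝ) : Matrix n n ℂ :=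
  if hA : A.IsHermitian then
    (hA.eigenvectorUnitary : Matrix n n ℂ) *
      Matrix.diagonal (fun i => ((hA.eigenvalues i ^ r : ℝ) : ℂ)) *
      star (hA.eigenvectorUnitary : Matrix n n ℂ)
  else 0

noncomputable def Matrix.gmean {n : Type*} [Fintype n] [DecidableEq n]
    (β : ℝ) (S A : Matrix n n ℂ) : Matrix n n ℂ :=
  S.rpowH (1/2) * ((S.rpowH (-(1/2)) * A * S.rpowH (-(1/2))).rpowH β) * S.rpowH (1/2)

noncomputable def QSharp {n : Type*} [Fintype n] [DecidableEq n]
    (α : ℝ) (ρ σ : Matrix n n ℂ) : ℝ :=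
  sInf { t : ℝ | ∃ A : Matrix n n ℂ, A.PosSemidef ∧
    (Matrix.gmean (1/α) σ A - ρ).PosSemidef ∧ t = A.trace.re }

noncomputable def DSharp {n : Type*} [Fintype n] [DecidableEq n]
    (α : ℝ) (ρ σ : Matrix n n ℂ) : ℝ :=
  1/(α-1) * Real.logb 2 (QSharp α ρ σ)

noncomputable def opNorm {n : Type*} [Fintype n] [DecidableEq n] (A : Matrix n n ℂ) : ℝ :=
  ‖(Matrix.toEuclideanCLM (𝕜 := ℂ) A : EuclideanSpace ℂ n →L[ℂ] EuclideanSpace ℂ n)‖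

noncomputable def Dtilde {n : Type*} [Fintype n] [DecidableEq n]
    (α : ℝ) (ρ σ : Matrix n n ℂ) : ℝ :=
  1/(α-1) * Real.logb 2
    (((σ.rpowH ((1-α)/(2*α)) * ρ * σ.rpowH ((1-α)/(2*α))).rpowH α).trace.re)

noncomputable def Dhat {n : Type*} [Fintype n] [DecidableEq n]
    (α : ℝ) (ρ σ : Matrix n n ℂ) : ℝ :=
  1/(α-1) * Real.logb 2
    ((σ.rpowH (1/2) * ((σ.rpowH (-(1/2)) * ρ * σ.rpowH (-(1/2))).rpowH α) * σ.rpowH (1/2)).trace.re)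

set_option linter.unusedSectionVars false

namespace MyAux

variable {n : Type*} [Fintype n] [DecidableEq n]

lemma kron_conjTranspose {m : Type*} (A : Matrix n n ℂ) (B : Matrix m m ℂ) :
    (A ⊗ₖ B)ᴴ = Aᴴ ⊗ₖ Bᴴ := by
  ext ⟨i, j⟩ ⟨k, l⟩
  simp [conjTranspose_apply, kroneckerMap_apply, mul_comm]

lemma kron_star {n₁ n₂ : Type*} [Fintype n₁] [DecidableEq n₁] [Fintype n₂] [DecidableEq n₂] (A : Matrix n₁ n₁ ℂ) (B : Matrix n₂ n₂ ℂ) :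
    star (A ⊗ₖ B) = star A ⊗ₖ star B := by
  rw [Matrix.star_eq_conjTranspose, Matrix.star_eq_conjTranspose, Matrix.star_eq_conjTranspose,
    kron_conjTranspose]

lemma kron_mem_unitary {n₁ n₂ : Type*} [Fintype n₁] [DecidableEq n₁] [Fintype n₂] [DecidableEq n₂]
    {U₁ : Matrix n₁ n₁ ℂ} {U₂ : Matrix n₂ n₂ ℂ}
    (h₁ : U₁ ∈ Matrix.unitaryGroup n₁ ℂ) (h₂ : U₂ ∈ Matrix.unitaryGroup n₂ ℂ) :
    U₁ ⊗ₖ U₂ ∈ Matrix.unitaryGroup (n₁ × n₂) ℂ := by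
  rw [Matrix.mem_unitaryGroup_iff]
  rw [Matrix.star_eq_conjTranspose, kron_conjTranspose, ← Matrix.mul_kronecker_mul,
    ← Matrix.star_eq_conjTranspose, ← Matrix.star_eq_conjTranspose,
    Matrix.mem_unitaryGroup_iff.mp h₁, Matrix.mem_unitaryGroup_iff.mp h₂,
    Matrix.one_kronecker_one]

/-- spectrum of a unitarily diagonalized matrix -/
lemma spectrum_eq_range {A : Matrix n n ℂ} (U : Matrix n n ℂ)
    (hU : U ∈ Matrix.unitaryGroup n ℂ) (d : n → ℝ)
    (hAd : A = U * Matrix.diagonal (fun i => (d i : ℂ)) * star U) :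
    spectrum ℝ A = Set.range d := by
  have hU' : (⟨U, hU⟩ : Matrix.unitaryGroup n ℂ) = (⟨U, hU⟩ : unitary (Matrix n n ℂ)) := rfl
  ext x
  conv_lhs => rw [hAd]
  rw [show U = ((⟨U, hU⟩ : unitary (Matrix n n ℂ)) : Matrix n n ℂ) from rfl,
    show star U = star ((⟨U, hU⟩ : unitary (Matrix n n ℂ)) : Matrix n n ℂ) from rfl,
    Unitary.spectrum_star_right_conjugate, ← spectrum.algebraMap_mem_iff ℂ,
    _root_.spectrum_diagonal]
  simp [Algebra.algebraMap_eq_smul_one, Complex.real_smul]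

noncomputable def diagAux {A : Matrix n n ℂ} (U : Matrix n n ℂ)
    (hU : U ∈ Matrix.unitaryGroup n ℂ) (d : n → ℝ)
    (hd : ∀ i, d i ∈ spectrum ℝ A) :
    C(spectrum ℝ A, ℝ) →⋆ₐ[ℝ] Matrix n n ℂ where
  toFun := fun g => U *
    diagonal (fun i => ((g ⟨d i, hd i⟩ : ℝ) : ℂ)) * star U
  map_one' := by
    simp only [ContinuousMap.one_apply, Complex.ofReal_one]
    rw [Matrix.diagonal_one (n := n), mul_one, Matrix.mem_unitaryGroup_iff.mp hU]
  map_mul' f g := by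
    have key {a b c e f g : Matrix n n ℂ} :
        (a * b * c) * (e * f * g) = a * (b * (c * e) * f) * g := by
      simp only [mul_assoc]
    simp only [key, ContinuousMap.coe_mul, Matrix.mem_unitaryGroup_iff'.mp hU, mul_one,
      diagonal_mul_diagonal]
    congr! with i
    simp
  map_zero' := by
    simp only [ContinuousMap.zero_apply, Complex.ofReal_zero, diagonal_zero, mul_zero, zero_mul]
  map_add' f g := by
    simp only [ContinuousMap.add_apply, Complex.ofReal_add, ← diagonal_add, ← add_mul, ← mul_add]
  commutes' r := by
    have h1 : (fun i => (((algebraMap ℝ C(spectrum ℝ A, ℝ) r) ⟨d i, hd i⟩ : ℝ) : ℂ))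
        = fun _ : n => algebraMap ℝ ℂ r := by
      funext i
      simp [Algebra.algebraMap_eq_smul_one]
    show U * diagonal _ * star U = _
    rw [h1, show (Matrix.diagonal (fun _ : n => algebraMap ℝ ℂ r))
        = algebraMap ℝ (Matrix n n ℂ) r from by
      ext i j
      simp [Matrix.algebraMap_matrix_apply, Matrix.diagonal_apply],
      ← Algebra.commutes r U, mul_assoc, Matrix.mem_unitaryGroup_iff.mp hU, mul_one]
  map_star' f := by
    simp only [star_trivial, StarMul.star_mul, star_star,
      Matrix.star_eq_conjTranspose (Matrix.diagonal _), diagonal_conjTranspose, mul_assoc]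
    congr! with i
    simp

lemma diagAux_continuous {A : Matrix n n ℂ} (U : Matrix n n ℂ)
    (hU : U ∈ Matrix.unitaryGroup n ℂ) (d : n → ℝ)
    (hd : ∀ i, d i ∈ spectrum ℝ A) :
    Continuous (diagAux U hU d hd) := by
  have h : Continuous fun (g : C(spectrum ℝ A, ℝ)) =>
      Matrix.diagonal (fun i => ((g ⟨d i, hd i⟩ : ℝ) : ℂ)) := by
    apply continuous_matrix
    intro i j
    simp only [Matrix.diagonal_apply]
    split
    · exact Complex.continuous_ofReal.comp (continuous_eval_const _)
    · exact continuous_const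
  exact (continuous_const.matrix_mul h).matrix_mul continuous_const

/-- key uniqueness lemma -/
lemma cfc_unitary_diag {A : Matrix n n ℂ} (hA : A.IsHermitian) (U : Matrix n n ℂ)
    (hU : U ∈ Matrix.unitaryGroup n ℂ) (d : n → ℝ)
    (hAd : A = U * Matrix.diagonal (fun i => (d i : ℂ)) * star U) (f : ℝ → ℝ) :
    cfc f A = U * Matrix.diagonal (fun i => ((f (d i) : ℝ) : ℂ)) * star U := by
  have hd : ∀ i, d i ∈ spectrum ℝ A := fun i =>
    (spectrum_eq_range U hU d hAd) ▸ Set.mem_range_self i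
  have hA' : IsSelfAdjoint A := hA
  have hc : ContinuousOn f (spectrum ℝ A) := by
    have : (spectrum ℝ A).Finite := A.finite_real_spectrum
    exact Set.Finite.continuousOn this _
  have h1 : diagAux U hU d hd (ContinuousMap.restrict (spectrum ℝ A) (ContinuousMap.id ℝ)) = A := by
    conv_rhs => rw [hAd]
    rfl
  have := cfcHom_eq_of_continuous_of_map_id hA' (diagAux U hU d hd)
    (diagAux_continuous U hU d hd) h1
  rw [cfc_apply f A hA' hc, this]
  rfl

lemma rpowH_eq {A : Matrix n n ℂ} (hA : A.IsHermitian) (r : ℝ) :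
    A.rpowH r = cfc (fun x : ℝ => x ^ r) A := by
  rw [Matrix.rpowH, dif_pos hA, hA.cfc_eq, Matrix.IsHermitian.cfc, Unitary.conjStarAlgAut_apply]
  congr! with i

lemma rpowH_of_diag {A : Matrix n n ℂ} (hA : A.IsHermitian) (U : Matrix n n ℂ)
    (hU : U ∈ Matrix.unitaryGroup n ℂ) (d : n → ℝ)
    (hAd : A = U * Matrix.diagonal (fun i => (d i : ℂ)) * star U) (r : ℝ) :
    A.rpowH r = U * Matrix.diagonal (fun i => ((d i ^ r : ℝ) : ℂ)) * star U := by
  rw [rpowH_eq hA r, cfc_unitary_diag hA U hU d hAd]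

lemma rpowH_isHermitian {A : Matrix n n ℂ} (hA : A.IsHermitian) (r : ℝ) :
    (A.rpowH r).IsHermitian := by
  rw [Matrix.rpowH, dif_pos hA, Matrix.star_eq_conjTranspose]
  apply Matrix.isHermitian_mul_mul_conjTranspose
  rw [Matrix.IsHermitian, Matrix.diagonal_conjTranspose]
  congr! with i
  simp [Pi.star_def]

lemma rpowH_kron {n₁ n₂ : Type*} [Fintype n₁] [DecidableEq n₁] [Fintype n₂] [DecidableEq n₂]
    {M₁ : Matrix n₁ n₁ ℂ} {M₂ : Matrix n₂ n₂ ℂ}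
    (h₁ : M₁.PosSemidef) (h₂ : M₂.PosSemidef) (r : ℝ) :
    (M₁ ⊗ₖ M₂).rpowH r = M₁.rpowH r ⊗ₖ M₂.rpowH r := by
  have hH₁ := h₁.1
  have hH₂ := h₂.1
  set U₁ : Matrix n₁ n₁ ℂ := (hH₁.eigenvectorUnitary : Matrix n₁ n₁ ℂ) with hU₁def
  set U₂ : Matrix n₂ n₂ ℂ := (hH₂.eigenvectorUnitary : Matrix n₂ n₂ ℂ) with hU₂def
  have hU₁ : U₁ ∈ Matrix.unitaryGroup n₁ ℂ := (hH₁.eigenvectorUnitary).2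
  have hU₂ : U₂ ∈ Matrix.unitaryGroup n₂ ℂ := (hH₂.eigenvectorUnitary).2
  have hs₁ : M₁ = U₁ * Matrix.diagonal (fun i => ((hH₁.eigenvalues i : ℝ) : ℂ)) * star U₁ := by
    conv_lhs => rw [hH₁.spectral_theorem, Unitary.conjStarAlgAut_apply]
    congr! with i
  have hs₂ : M₂ = U₂ * Matrix.diagonal (fun i => ((hH₂.eigenvalues i : ℝ) : ℂ)) * star U₂ := by
    conv_lhs => rw [hH₂.spectral_theorem, Unitary.conjStarAlgAut_apply]
    congr! with i
  have hUk : U₁ ⊗ₖ U₂ ∈ Matrix.unitaryGroup (n₁ × n₂) ℂ := kron_mem_unitary hU₁ hU₂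
  have hkron : M₁ ⊗ₖ M₂ = (U₁ ⊗ₖ U₂) *
      Matrix.diagonal (fun p : n₁ × n₂ => ((hH₁.eigenvalues p.1 * hH₂.eigenvalues p.2 : ℝ) : ℂ)) *
      star (U₁ ⊗ₖ U₂) := by
    conv_lhs => rw [hs₁, hs₂]
    rw [Matrix.mul_kronecker_mul, Matrix.mul_kronecker_mul,
      Matrix.diagonal_kronecker_diagonal, ← kron_star]
    congr! with p
    push_cast
    ring
  have hHk : (M₁ ⊗ₖ M₂).IsHermitian := by
    rw [Matrix.IsHermitian, kron_conjTranspose, hH₁.eq, hH₂.eq]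
  rw [rpowH_of_diag hHk (U₁ ⊗ₖ U₂) hUk _ hkron r,
    rpowH_of_diag hH₁ U₁ hU₁ _ hs₁ r, rpowH_of_diag hH₂ U₂ hU₂ _ hs₂ r,
    Matrix.mul_kronecker_mul, Matrix.mul_kronecker_mul,
    Matrix.diagonal_kronecker_diagonal, ← kron_star]
  congr! with p
  rw [Real.mul_rpow (h₁.eigenvalues_nonneg p.1) (h₂.eigenvalues_nonneg p.2)]
  push_cast
  ring

end MyAux

/-- the β-weighted matrix geometric mean is multiplicative under
Kronecker products: (A₁ ⊗ A₂) #_β (B₁ ⊗ B₂) = (A₁ #_β B₁) ⊗ (A₂ #_β B₂). -/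
theorem gmean_kronecker
    {n₁ n₂ : Type*} [Fintype n₁] [DecidableEq n₁] [Fintype n₂] [DecidableEq n₂]
    (β : ℝ) (hβ0 : 0 < β) (hβ1 : β < 1)
    (A₁ : Matrix n₁ n₁ ℂ) (A₂ : Matrix n₂ n₂ ℂ)
    (B₁ : Matrix n₁ n₁ ℂ) (B₂ : Matrix n₂ n₂ ℂ)
    (hA₁ : A₁.PosDef) (hA₂ : A₂.PosDef)
    (hB₁ : B₁.PosSemidef) (hB₂ : B₂.PosSemidef) :
    Matrix.gmean β (A₁ ⊗ₖ A₂) (B₁ ⊗ₖ B₂)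
      = (Matrix.gmean β A₁ B₁) ⊗ₖ (Matrix.gmean β A₂ B₂) := by
  have hA₁s := hA₁.posSemidef
  have hA₂s := hA₂.posSemidef
  have hM₁ : (A₁.rpowH (-(1/2)) * B₁ * A₁.rpowH (-(1/2))).PosSemidef := by
    have h := hB₁.mul_mul_conjTranspose_same (A₁.rpowH (-(1/2)))
    rwa [(MyAux.rpowH_isHermitian hA₁.1 (-(1/2))).eq] at h
  have hM₂ : (A₂.rpowH (-(1/2)) * B₂ * A₂.rpowH (-(1/2))).PosSemidef := by
    have h := hB₂.mul_mul_conjTranspose_same (A₂.rpowH (-(1/2)))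
    rwa [(MyAux.rpowH_isHermitian hA₂.1 (-(1/2))).eq] at h
  unfold Matrix.gmean
  rw [MyAux.rpowH_kron hA₁s hA₂s (1/2), MyAux.rpowH_kron hA₁s hA₂s (-(1/2)),
    ← Matrix.mul_kronecker_mul, ← Matrix.mul_kronecker_mul,
    MyAux.rpowH_kron hM₁ hM₂ β,
    ← Matrix.mul_kronecker_mul, ← Matrix.mul_kronecker_mul]
end

section
/- Let α ∈ (1,∞) and λ ∈ [0,1]. Let ρ₀, ρ₁ be positive semidefinite complex matrices and σ₀, σ₁ positive definite complex matrices, all of the same size. Then Q^#_α( (1−λ)ρ₀ + λρ₁ ‖ (1−λ)σ₀ + λσ₁ ) ≤ (1−λ) Q^#_α(ρ₀‖σ₀) + λ Q^#_α(ρ₁‖σ₁), i.e., Q^#_α is jointly convex. -/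
open Matrix Filter
open scoped Kronecker Classical ComplexOrder

open Matrix
open scoped ComplexOrder

set_option linter.unusedSectionVars false

namespace QAux
variable {n : Type*} [Fintype n] [DecidableEq n]

noncomputable def qf (M : Matrix n n ℂ) (x : n → ℂ) : ℂ := star x ⬝ᵥ M *ᵥ x

lemma qf_add (M N : Matrix n n ℂ) (x : n → ℂ) : qf (M + N) x = qf M x + qf N x := by
  simp [qf, add_mulVec, dotProduct_add]

lemma qf_sub (M N : Matrix n n ℂ) (x : n → ℂ) : qf (M - N) x = qf M x - qf N x := by
  simp [qf, sub_mulVec, dotProduct_sub]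

lemma qf_smul (c : ℂ) (M : Matrix n n ℂ) (x : n → ℂ) : qf (c • M) x = c * qf M x := by
  simp [qf, smul_mulVec]

lemma herm_swap {M : Matrix n n ℂ} (hM : M.IsHermitian) (a b : n → ℂ) :
    star a ⬝ᵥ M *ᵥ b = star (M *ᵥ a) ⬝ᵥ b := by
  rw [star_mulVec, dotProduct_mulVec, hM.eq]

lemma qf_conj (B M : Matrix n n ℂ) (x : n → ℂ) : qf (Bᴴ * M * B) x = qf M (B *ᵥ x) := by
  simp only [qf, ← mulVec_mulVec, star_mulVec, ← dotProduct_mulVec]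

lemma star_qf {M : Matrix n n ℂ} (hM : M.IsHermitian) (x : n → ℂ) :
    star (qf M x) = qf M x := by
  rw [qf, ← star_dotProduct]
  exact (herm_swap hM x x).symm

lemma qf_real {M : Matrix n n ℂ} (hM : M.IsHermitian) (x : n → ℂ) :
    qf M x = ((qf M x).re : ℂ) :=
  (Complex.conj_eq_iff_re.mp (star_qf hM x)).symm

lemma posSemidef_of_qf {M : Matrix n n ℂ} (hM : M.IsHermitian)
    (h : ∀ x, 0 ≤ (qf M x).re) : M.PosSemidef := by
  refine Matrix.PosSemidef.of_dotProduct_mulVec_nonneg hM fun x => ?_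
  have : star x ⬝ᵥ M *ᵥ x = qf M x := rfl
  rw [this, qf_real hM]
  exact_mod_cast Complex.zero_le_real.mpr (h x)

lemma qf_re_nonneg {M : Matrix n n ℂ} (hM : M.PosSemidef) (x : n → ℂ) :
    0 ≤ (qf M x).re := hM.re_dotProduct_nonneg x

lemma qf_re_pos {M : Matrix n n ℂ} (hM : M.PosDef) {x : n → ℂ} (hx : x ≠ 0) :
    0 < (qf M x).re := hM.re_dotProduct_pos hx

lemma posDef_of_qf {M : Matrix n n ℂ} (hM : M.IsHermitian)
    (h : ∀ x, x ≠ 0 → 0 < (qf M x).re) : M.PosDef := by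
  refine Matrix.PosDef.of_dotProduct_mulVec_pos hM fun x hx => ?_
  have : star x ⬝ᵥ M *ᵥ x = qf M x := rfl
  rw [this, qf_real hM]
  exact_mod_cast Complex.zero_lt_real.mpr (h x hx)

lemma psd_smul {c : ℝ} (hc : 0 ≤ c) {A : Matrix n n ℂ} (hA : A.PosSemidef) :
    (((c : ℂ)) • A).PosSemidef := by
  refine posSemidef_of_qf ?_ fun x => ?_
  · show (((c:ℂ)) • A)ᴴ = _
    rw [conjTranspose_smul, hA.1.eq]
    congr 1
    simp [Complex.star_def, Complex.conj_ofReal]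
  · rw [qf_smul]
    rw [Complex.re_ofReal_mul]
    exact mul_nonneg hc (qf_re_nonneg hA x)

lemma real_smul_eq {c : ℝ} (A : Matrix n n ℂ) : c • A = ((c : ℂ)) • A := by
  ext i j; simp [Matrix.smul_apply, Complex.real_smul]

/-- convex combination of PSD is PSD -/
lemma psd_conv {t : ℝ} (ht0 : 0 ≤ t) (ht1 : t ≤ 1) {A B : Matrix n n ℂ}
    (hA : A.PosSemidef) (hB : B.PosSemidef) :
    ((1 - t) • A + t • B).PosSemidef := by
  rw [real_smul_eq, real_smul_eq]
  exact (psd_smul (by linarith) hA).add (psd_smul ht0 hB)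

/-- convex combination of PosDef is PosDef -/
lemma posdef_conv {t : ℝ} (ht0 : 0 ≤ t) (ht1 : t ≤ 1) {A B : Matrix n n ℂ}
    (hA : A.PosDef) (hB : B.PosDef) :
    ((1 - t) • A + t • B).PosDef := by
  have hpsd := psd_conv ht0 ht1 hA.posSemidef hB.posSemidef
  refine posDef_of_qf hpsd.1 fun x hx => ?_
  have h : (qf ((1 - t) • A + t • B) x).re
      = (1 - t) * (qf A x).re + t * (qf B x).re := by
    rw [real_smul_eq, real_smul_eq (c := t), qf_add, qf_smul, qf_smul]
    simp [Complex.re_ofReal_mul]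
  rw [h]
  rcases lt_or_eq_of_le ht1 with h1 | h1
  · have := qf_re_pos hA hx
    have := mul_nonneg ht0 (qf_re_nonneg hB.posSemidef x)
    nlinarith
  · have := qf_re_pos hB hx
    rw [← h1]; simp
    nlinarith

end QAux
section RpowH
open scoped ComplexOrder
variable {n : Type*} [Fintype n] [DecidableEq n]
open QAux

lemma rpowH_def {A : Matrix n n ℂ} (hA : A.IsHermitian) (r : ℝ) :
    A.rpowH r = (hA.eigenvectorUnitary : Matrix n n ℂ) *
      Matrix.diagonal (fun i => ((hA.eigenvalues i ^ r : ℝ) : ℂ)) *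
      star (hA.eigenvectorUnitary : Matrix n n ℂ) := dif_pos hA

lemma UDU_isHermitian (V : Matrix n n ℂ) (c : n → ℝ) :
    (V * Matrix.diagonal (fun i => ((c i : ℝ) : ℂ)) * star V).IsHermitian := by
  have : (Matrix.diagonal (fun i => ((c i : ℝ) : ℂ))).IsHermitian := by
    rw [Matrix.IsHermitian, Matrix.diagonal_conjTranspose]
    have hst : (star fun i => ((c i : ℝ) : ℂ)) = fun i => ((c i : ℝ) : ℂ) := by
      funext i; exact Complex.conj_ofReal _
    rw [hst]
  have h2 := Matrix.isHermitian_mul_mul_conjTranspose V this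
  simpa [Matrix.star_eq_conjTranspose] using h2

lemma rpowH_isHermitian (A : Matrix n n ℂ) (r : ℝ) : (A.rpowH r).IsHermitian := by
  unfold Matrix.rpowH
  split
  · exact UDU_isHermitian _ _
  · exact Matrix.isHermitian_zero

lemma eigUnitary_mul_star {A : Matrix n n ℂ} (hA : A.IsHermitian) :
    (hA.eigenvectorUnitary : Matrix n n ℂ) * star (hA.eigenvectorUnitary : Matrix n n ℂ) = 1 :=
  (Matrix.mem_unitaryGroup_iff).mp hA.eigenvectorUnitary.2

lemma star_mul_eigUnitary {A : Matrix n n ℂ} (hA : A.IsHermitian) :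
    star (hA.eigenvectorUnitary : Matrix n n ℂ) * (hA.eigenvectorUnitary : Matrix n n ℂ) = 1 :=
  (Matrix.mem_unitaryGroup_iff').mp hA.eigenvectorUnitary.2

lemma spectral' {A : Matrix n n ℂ} (hA : A.IsHermitian) :
    A = (hA.eigenvectorUnitary : Matrix n n ℂ) *
      Matrix.diagonal (fun i => ((hA.eigenvalues i : ℝ) : ℂ)) *
      star (hA.eigenvectorUnitary : Matrix n n ℂ) := by
  convert hA.spectral_theorem using 3
  rw [Unitary.conjStarAlgAut_apply]; rfl

lemma rpowH_mul_rpowH {S : Matrix n n ℂ} (hS : S.PosDef) (r s : ℝ) :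
    S.rpowH r * S.rpowH s = S.rpowH (r + s) := by
  have hH := hS.isHermitian
  rw [rpowH_def hH r, rpowH_def hH s, rpowH_def hH (r+s)]
  rw [show ∀ (U D1 D2 : Matrix n n ℂ), (U * D1 * star U) * (U * D2 * star U) =
    U * (D1 * (star U * U) * D2) * star U from fun U D1 D2 => by
      simp only [Matrix.mul_assoc],
    star_mul_eigUnitary hH, mul_one, Matrix.diagonal_mul_diagonal]
  have hd : (fun i => ((hH.eigenvalues i ^ r : ℝ) : ℂ) * ((hH.eigenvalues i ^ s : ℝ) : ℂ))
      = fun i => ((hH.eigenvalues i ^ (r + s) : ℝ) : ℂ) := by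
    funext i
    rw [← Complex.ofReal_mul, ← Real.rpow_add (hS.eigenvalues_pos i)]
  rw [hd]

lemma rpowH_one {A : Matrix n n ℂ} (hA : A.IsHermitian) : A.rpowH 1 = A := by
  rw [rpowH_def hA]
  simp only [Real.rpow_one]
  exact (spectral' hA).symm

lemma rpowH_zero {A : Matrix n n ℂ} (hA : A.IsHermitian) : A.rpowH 0 = 1 := by
  rw [rpowH_def hA]
  simp only [Real.rpow_zero, Complex.ofReal_one]
  rw [Matrix.diagonal_one, mul_one]
  exact eigUnitary_mul_star hA

end RpowH
section Prods
open scoped ComplexOrder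
open QAux Matrix
variable {n : Type*} [Fintype n] [DecidableEq n] {S A : Matrix n n ℂ}

lemma sh_mul_snh (hS : S.PosDef) : S.rpowH (1/2) * S.rpowH (-(1/2)) = 1 := by
  rw [rpowH_mul_rpowH hS, show (1/2 : ℝ) + -(1/2) = 0 by norm_num, rpowH_zero hS.isHermitian]

lemma snh_mul_sh (hS : S.PosDef) : S.rpowH (-(1/2)) * S.rpowH (1/2) = 1 := by
  rw [rpowH_mul_rpowH hS, show -(1/2 : ℝ) + 1/2 = 0 by norm_num, rpowH_zero hS.isHermitian]

lemma sh_mul_sh (hS : S.PosDef) : S.rpowH (1/2) * S.rpowH (1/2) = S := by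
  rw [rpowH_mul_rpowH hS, show (1/2 : ℝ) + 1/2 = 1 by norm_num, rpowH_one hS.isHermitian]

lemma S_mul_snh (hS : S.PosDef) : S * S.rpowH (-(1/2)) = S.rpowH (1/2) := by
  nth_rewrite 1 [← rpowH_one hS.isHermitian]
  rw [rpowH_mul_rpowH hS, show (1 : ℝ) + -(1/2) = 1/2 by norm_num]

lemma snh_mul_S (hS : S.PosDef) : S.rpowH (-(1/2)) * S = S.rpowH (1/2) := by
  nth_rewrite 2 [← rpowH_one hS.isHermitian]
  rw [rpowH_mul_rpowH hS, show -(1/2 : ℝ) + 1 = 1/2 by norm_num]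

lemma X_psd (hS : S.PosDef) (hA : A.PosSemidef) :
    (S.rpowH (-(1/2)) * A * S.rpowH (-(1/2))).PosSemidef := by
  have h := hA.conjTranspose_mul_mul_same (S.rpowH (-(1/2)))
  rwa [(rpowH_isHermitian S (-(1/2))).eq] at h

lemma A_eq (hS : S.PosDef) (A : Matrix n n ℂ) :
    S.rpowH (1/2) * (S.rpowH (-(1/2)) * A * S.rpowH (-(1/2))) * S.rpowH (1/2) = A := by
  have h : S.rpowH (1/2) * (S.rpowH (-(1/2)) * A * S.rpowH (-(1/2))) * S.rpowH (1/2)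
      = (S.rpowH (1/2) * S.rpowH (-(1/2))) * A * (S.rpowH (-(1/2)) * S.rpowH (1/2)) := by
    simp only [Matrix.mul_assoc]
  rw [h, sh_mul_snh hS, snh_mul_sh hS, one_mul, mul_one]

lemma qf_diag (c : n → ℝ) (w : n → ℂ) :
    qf (Matrix.diagonal fun i => ((c i : ℝ) : ℂ)) w
      = ∑ i, ((c i * Complex.normSq (w i) : ℝ) : ℂ) := by
  unfold qf
  rw [dotProduct]
  refine Finset.sum_congr rfl fun i _ => ?_
  rw [Matrix.mulVec_diagonal, Pi.star_apply]
  push_cast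
  rw [Complex.star_def, Complex.normSq_eq_conj_mul_self]
  ring

lemma qf_VDV_re (V : Matrix n n ℂ) (c : n → ℝ) (x : n → ℂ) :
    (qf (V * Matrix.diagonal (fun i => ((c i : ℝ) : ℂ)) * star V) x).re
      = ∑ i, c i * Complex.normSq ((star V *ᵥ x) i) := by
  have h1 : V * Matrix.diagonal (fun i => ((c i : ℝ) : ℂ)) * star V
      = (star V)ᴴ * Matrix.diagonal (fun i => ((c i : ℝ) : ℂ)) * star V := by
    rw [Matrix.star_eq_conjTranspose, Matrix.conjTranspose_conjTranspose]
  rw [h1, qf_conj, qf_diag, ← Complex.ofReal_sum]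
  exact Complex.ofReal_re _

lemma posdef_smul {c : ℝ} (hc : 0 < c) (hS : S.PosDef) : (((c : ℂ)) • S).PosDef := by
  refine posDef_of_qf ?_ fun x hx => ?_
  · show (((c : ℂ)) • S)ᴴ = _
    rw [Matrix.conjTranspose_smul, hS.isHermitian.eq]
    congr 1
    simp [Complex.star_def, Complex.conj_ofReal]
  · rw [qf_smul, Complex.re_ofReal_mul]
    exact mul_pos hc (qf_re_pos hS hx)

lemma AlS_posdef (hS : S.PosDef) (hA : A.PosSemidef) {l : ℝ} (hl : 0 < l) :
    (A + ((l : ℂ)) • S).PosDef :=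
  Matrix.PosDef.posSemidef_add hA (posdef_smul hl hS)
end Prods
section Spec
open scoped ComplexOrder
open QAux Matrix
variable {n : Type*} [Fintype n] [DecidableEq n] {S A : Matrix n n ℂ}

/-- sandwich algebra helpers -/
lemma sandwich_sub (P Q D E : Matrix n n ℂ) :
    P * (Q * D * star Q) * P - P * (Q * E * star Q) * P = P * (Q * (D - E) * star Q) * P := by
  simp only [Matrix.sub_mul, Matrix.mul_sub]

lemma sandwich_add (P Q D E : Matrix n n ℂ) :
    P * (Q * D * star Q) * P + P * (Q * E * star Q) * P = P * (Q * (D + E) * star Q) * P := by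
  simp only [Matrix.add_mul, Matrix.mul_add]

lemma sandwich_smul (c : ℂ) (P Q D : Matrix n n ℂ) :
    c • (P * (Q * D * star Q) * P) = P * (Q * (c • D) * star Q) * P := by
  simp only [Matrix.mul_smul, Matrix.smul_mul]

lemma diag_cast_smul (c : ℝ) (f : n → ℝ) :
    ((c : ℂ)) • (Matrix.diagonal fun i => ((f i : ℝ) : ℂ))
      = Matrix.diagonal fun i => ((c * f i : ℝ) : ℂ) := by
  ext i j
  by_cases h : i = j
  · subst h
    simp only [Matrix.smul_apply, Matrix.diagonal_apply_eq, smul_eq_mul]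
    push_cast
    ring
  · simp [Matrix.diagonal_apply_ne _ h]

lemma diag_cast_sub (f g : n → ℝ) :
    (Matrix.diagonal fun i => ((f i : ℝ) : ℂ)) - (Matrix.diagonal fun i => ((g i : ℝ) : ℂ))
      = Matrix.diagonal fun i => ((f i - g i : ℝ) : ℂ) := by
  rw [Matrix.diagonal_sub]
  congr 1
  funext i
  push_cast
  rfl

lemma diag_cast_add (f g : n → ℝ) :
    (Matrix.diagonal fun i => ((f i : ℝ) : ℂ)) + (Matrix.diagonal fun i => ((g i : ℝ) : ℂ))
      = Matrix.diagonal fun i => ((f i + g i : ℝ) : ℂ) := by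
  rw [Matrix.diagonal_add]
  congr 1
  funext i
  push_cast
  rfl

lemma diag_cast_mul (f g : n → ℝ) :
    (Matrix.diagonal fun i => ((f i : ℝ) : ℂ)) * (Matrix.diagonal fun i => ((g i : ℝ) : ℂ))
      = Matrix.diagonal fun i => ((f i * g i : ℝ) : ℂ) := by
  rw [Matrix.diagonal_mul_diagonal]
  congr 1
  funext i
  push_cast
  rfl

lemma smul_one_eq_diag (l : ℝ) :
    ((l : ℂ)) • (1 : Matrix n n ℂ) = Matrix.diagonal fun _ => ((l : ℝ) : ℂ) := by
  ext i j
  by_cases h : i = j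
  · subst h
    simp [Matrix.smul_apply, Matrix.diagonal_apply_eq, Matrix.one_apply_eq]
  · simp [Matrix.diagonal_apply_ne _ h, Matrix.one_apply_ne h]

noncomputable def Uof {S A : Matrix n n ℂ} (hS : S.PosDef) (hA : A.PosSemidef) : Matrix n n ℂ :=
  (((X_psd hS hA).1.eigenvectorUnitary : Matrix n n ℂ))

noncomputable def dof {S A : Matrix n n ℂ} (hS : S.PosDef) (hA : A.PosSemidef) : n → ℝ :=
  (X_psd hS hA).1.eigenvalues

noncomputable def wof {S A : Matrix n n ℂ} (hS : S.PosDef) (hA : A.PosSemidef) (x : n → ℂ) :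
    n → ℂ :=
  star (Uof hS hA) *ᵥ (S.rpowH (1/2) *ᵥ x)

lemma dof_nonneg (hS : S.PosDef) (hA : A.PosSemidef) (i : n) : 0 ≤ dof hS hA i :=
  (X_psd hS hA).eigenvalues_nonneg i

lemma Uof_mul_star (hS : S.PosDef) (hA : A.PosSemidef) :
    Uof hS hA * star (Uof hS hA) = 1 := eigUnitary_mul_star _

lemma star_mul_Uof (hS : S.PosDef) (hA : A.PosSemidef) :
    star (Uof hS hA) * Uof hS hA = 1 := star_mul_eigUnitary _

lemma X_spec (hS : S.PosDef) (hA : A.PosSemidef) :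
    S.rpowH (-(1/2)) * A * S.rpowH (-(1/2))
      = Uof hS hA * Matrix.diagonal (fun i => ((dof hS hA i : ℝ) : ℂ)) * star (Uof hS hA) :=
  spectral' (X_psd hS hA).1

lemma gmean_eq (β : ℝ) (hS : S.PosDef) (hA : A.PosSemidef) :
    Matrix.gmean β S A = S.rpowH (1/2) *
      (Uof hS hA * Matrix.diagonal (fun i => ((dof hS hA i ^ β : ℝ) : ℂ)) * star (Uof hS hA))
      * S.rpowH (1/2) := by
  unfold Matrix.gmean
  rw [rpowH_def (X_psd hS hA).1 β]
  rfl

/-- sandwiched unitary-diagonal qf -/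
lemma qf_sandwich_re (hS : S.PosDef) (hA : A.PosSemidef) (c : n → ℝ) (x : n → ℂ) :
    (qf (S.rpowH (1/2) *
        (Uof hS hA * Matrix.diagonal (fun i => ((c i : ℝ) : ℂ)) * star (Uof hS hA))
        * S.rpowH (1/2)) x).re
      = ∑ i, c i * Complex.normSq (wof hS hA x i) := by
  set sh := S.rpowH (1/2) with hsh
  set U := Uof hS hA with hU
  have hshH : star sh = sh := by
    rw [Matrix.star_eq_conjTranspose, (rpowH_isHermitian S (1/2)).eq]
  have h1 : sh * (U * Matrix.diagonal (fun i => ((c i : ℝ) : ℂ)) * star U) * sh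
      = (sh * U) * Matrix.diagonal (fun i => ((c i : ℝ) : ℂ)) * star (sh * U) := by
    rw [Matrix.star_mul, hshH]
    simp only [Matrix.mul_assoc]
  rw [h1, qf_VDV_re]
  congr 1
  funext i
  congr 2
  rw [Matrix.star_mul, hshH, ← Matrix.mulVec_mulVec]
  rfl

lemma qf_gmean_re (β : ℝ) (hS : S.PosDef) (hA : A.PosSemidef) (x : n → ℂ) :
    (qf (Matrix.gmean β S A) x).re
      = ∑ i, dof hS hA i ^ β * Complex.normSq (wof hS hA x i) := by
  rw [gmean_eq β hS hA, qf_sandwich_re hS hA]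

lemma AlS_spec (hS : S.PosDef) (hA : A.PosSemidef) (l : ℝ) :
    A + ((l : ℂ)) • S = S.rpowH (1/2) *
      (Uof hS hA * Matrix.diagonal (fun i => ((dof hS hA i + l : ℝ) : ℂ)) * star (Uof hS hA))
      * S.rpowH (1/2) := by
  rw [← diag_cast_add, ← sandwich_add, ← X_spec hS hA, A_eq hS A]
  congr 1
  rw [show (Matrix.diagonal fun i => ((l:ℝ):ℂ)) = ((l:ℂ)) • (1 : Matrix n n ℂ) from
    (smul_one_eq_diag l).symm, ← sandwich_smul]
  congr 1
  rw [mul_one, Uof_mul_star hS hA, mul_one, sh_mul_sh hS]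

lemma S_sandwich (hS : S.PosDef) (hA : A.PosSemidef) :
    S = S.rpowH (1/2) *
      (Uof hS hA * Matrix.diagonal (fun i => ((1 : ℝ) : ℂ)) * star (Uof hS hA))
      * S.rpowH (1/2) := by
  have : (Matrix.diagonal fun _ : n => ((1:ℝ):ℂ)) = 1 := by
    rw [← Matrix.diagonal_one]; congr 1
  rw [this, mul_one, Uof_mul_star hS hA, mul_one, sh_mul_sh hS]

lemma AlS_inv (hS : S.PosDef) (hA : A.PosSemidef) {l : ℝ} (hl : 0 < l) :
    (A + ((l : ℂ)) • S)⁻¹ = S.rpowH (-(1/2)) *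
      (Uof hS hA * Matrix.diagonal (fun i => (((dof hS hA i + l)⁻¹ : ℝ) : ℂ)) * star (Uof hS hA))
      * S.rpowH (-(1/2)) := by
  have hne : ∀ i, dof hS hA i + l ≠ 0 := fun i =>
    (add_pos_of_nonneg_of_pos (dof_nonneg hS hA i) hl).ne'
  apply Matrix.inv_eq_right_inv
  rw [AlS_spec hS hA l]
  set sh := S.rpowH (1/2)
  set snh := S.rpowH (-(1/2))
  set U := Uof hS hA
  set D1 := Matrix.diagonal (fun i => ((dof hS hA i + l : ℝ) : ℂ))
  set D2 := Matrix.diagonal (fun i => (((dof hS hA i + l)⁻¹ : ℝ) : ℂ))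
  have h1 : sh * (U * D1 * star U) * sh * (snh * (U * D2 * star U) * snh)
      = sh * (U * (D1 * (star U * U) * D2) * star U) * snh := by
    rw [show sh * (U * D1 * star U) * sh * (snh * (U * D2 * star U) * snh)
        = sh * (U * D1 * ((star U * ((sh * snh) * U)) * D2) * star U) * snh by
      simp only [Matrix.mul_assoc], sh_mul_snh hS]
    simp only [Matrix.one_mul, Matrix.mul_assoc]
  rw [h1, star_mul_Uof hS hA, mul_one, diag_cast_mul]
  have h2fun : (fun i => (((dof hS hA i + l) * (dof hS hA i + l)⁻¹ : ℝ) : ℂ))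
      = fun _ : n => ((1:ℝ):ℂ) := by
    funext i
    rw [mul_inv_cancel₀ (hne i)]
  have h2 : (Matrix.diagonal fun _ : n => ((1:ℝ):ℂ)) = 1 := by
    rw [← Matrix.diagonal_one]; congr 1
  rw [h2fun, h2, mul_one, Uof_mul_star hS hA, mul_one, sh_mul_snh hS]

noncomputable def Pm (S A : Matrix n n ℂ) (l : ℝ) : Matrix n n ℂ :=
  S - ((l : ℂ)) • (S * (A + ((l : ℂ)) • S)⁻¹ * S)

lemma SRS (hS : S.PosDef) (hA : A.PosSemidef) {l : ℝ} (hl : 0 < l) :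
    S * (A + ((l : ℂ)) • S)⁻¹ * S = S.rpowH (1/2) *
      (Uof hS hA * Matrix.diagonal (fun i => (((dof hS hA i + l)⁻¹ : ℝ) : ℂ)) * star (Uof hS hA))
      * S.rpowH (1/2) := by
  rw [AlS_inv hS hA hl]
  rw [show S * (S.rpowH (-(1/2)) *
      (Uof hS hA * Matrix.diagonal (fun i => (((dof hS hA i + l)⁻¹ : ℝ) : ℂ)) * star (Uof hS hA))
      * S.rpowH (-(1/2))) * S
      = (S * S.rpowH (-(1/2))) *
      (Uof hS hA * Matrix.diagonal (fun i => (((dof hS hA i + l)⁻¹ : ℝ) : ℂ)) * star (Uof hS hA))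
      * (S.rpowH (-(1/2)) * S) by simp only [Matrix.mul_assoc]]
  rw [S_mul_snh hS, snh_mul_S hS]

lemma Pm_spec (hS : S.PosDef) (hA : A.PosSemidef) {l : ℝ} (hl : 0 < l) :
    Pm S A l = S.rpowH (1/2) *
      (Uof hS hA * Matrix.diagonal
        (fun i => ((dof hS hA i / (dof hS hA i + l) : ℝ) : ℂ)) * star (Uof hS hA))
      * S.rpowH (1/2) := by
  have hne : ∀ i, dof hS hA i + l ≠ 0 := fun i =>
    (add_pos_of_nonneg_of_pos (dof_nonneg hS hA i) hl).ne'
  rw [Pm, SRS hS hA hl, sandwich_smul, diag_cast_smul]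
  nth_rewrite 1 [S_sandwich hS hA]
  rw [sandwich_sub, diag_cast_sub]
  have hfun : (fun i => ((1 - l * (dof hS hA i + l)⁻¹ : ℝ) : ℂ))
      = fun i => ((dof hS hA i / (dof hS hA i + l) : ℝ) : ℂ) := by
    funext i
    congr 1
    have h := hne i
    field_simp
    ring
  rw [hfun]

lemma qf_Pm_re (hS : S.PosDef) (hA : A.PosSemidef) {l : ℝ} (hl : 0 < l) (x : n → ℂ) :
    (qf (Pm S A l) x).re
      = ∑ i, (dof hS hA i / (dof hS hA i + l)) * Complex.normSq (wof hS hA x i) := by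
  rw [Pm_spec hS hA hl, qf_sandwich_re hS hA]

end Spec
section Integrals
open MeasureTheory Set

lemma contOn_g {β d : ℝ} (hd : 0 ≤ d) {s : Set ℝ} (hs : s ⊆ Ioi 0) :
    ContinuousOn (fun l : ℝ => l ^ (β - 1) * (d / (d + l))) s := by
  apply ContinuousOn.mul
  · intro l hl
    exact (Real.continuousAt_rpow_const l (β-1) (Or.inl (hs hl).ne')).continuousWithinAt
  · apply ContinuousOn.div continuousOn_const (continuous_const.add continuous_id).continuousOn
    intro l hl
    exact (add_pos_of_nonneg_of_pos hd (hs hl)).ne'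

lemma g_integrable {β : ℝ} (hβ0 : 0 < β) (hβ1 : β < 1) {d : ℝ} (hd : 0 ≤ d) :
    IntegrableOn (fun l : ℝ => l ^ (β - 1) * (d / (d + l))) (Ioi 0) := by
  have hsplit : Ioi (0:ℝ) = Ioc 0 1 ∪ Ioi 1 := (Ioc_union_Ioi_eq_Ioi zero_le_one).symm
  rw [hsplit]
  refine IntegrableOn.union ?_ ?_
  · have hmaj : IntegrableOn (fun l : ℝ => l ^ (β - 1)) (Ioc 0 1) := by
      rw [← intervalIntegrable_iff_integrableOn_Ioc_of_le zero_le_one]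
      exact intervalIntegral.intervalIntegrable_rpow' (by linarith)
    refine hmaj.mono' ?_ ?_
    · exact (contOn_g hd (by intro l hl; exact hl.1)).aestronglyMeasurable measurableSet_Ioc
    · rw [ae_restrict_iff' measurableSet_Ioc]
      refine ae_of_all _ fun l hl => ?_
      have hl0 : 0 < l := hl.1
      have hdl : 0 < d + l := add_pos_of_nonneg_of_pos hd hl0
      have h1 : 0 ≤ d / (d + l) := div_nonneg hd hdl.le
      have h2 : d / (d + l) ≤ 1 := (div_le_one hdl).mpr (by linarith)
      rw [Real.norm_eq_abs, abs_of_nonneg (mul_nonneg (Real.rpow_nonneg hl0.le _) h1)]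
      calc l ^ (β-1) * (d / (d+l)) ≤ l ^ (β-1) * 1 :=
            mul_le_mul_of_nonneg_left h2 (Real.rpow_nonneg hl0.le _)
        _ = l ^ (β-1) := mul_one _
  · have hmaj : IntegrableOn (fun l : ℝ => d * l ^ (β - 2)) (Ioi 1) :=
      (integrableOn_Ioi_rpow_of_lt (by linarith) one_pos).const_mul d
    refine hmaj.mono' ?_ ?_
    · exact (contOn_g (s := Ioi 1) hd (fun l hl => mem_Ioi.mpr (lt_trans one_pos (mem_Ioi.mp hl)))).aestronglyMeasurable
        measurableSet_Ioi
    · rw [ae_restrict_iff' measurableSet_Ioi]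
      refine ae_of_all _ fun l hl => ?_
      have hl0 : 0 < l := lt_trans one_pos hl
      have hdl : 0 < d + l := add_pos_of_nonneg_of_pos hd hl0
      have h1 : 0 ≤ d / (d + l) := div_nonneg hd hdl.le
      rw [Real.norm_eq_abs, abs_of_nonneg (mul_nonneg (Real.rpow_nonneg hl0.le _) h1)]
      have h2 : d / (d + l) ≤ d / l := div_le_div_of_nonneg_left hd hl0 (by linarith)
      calc l ^ (β-1) * (d / (d+l)) ≤ l ^ (β-1) * (d / l) :=
            mul_le_mul_of_nonneg_left h2 (Real.rpow_nonneg hl0.le _)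
        _ = d * l ^ (β-2) := by
            rw [show β-2 = (β-1) + (-1) by ring, Real.rpow_add hl0, Real.rpow_neg_one,
              div_eq_mul_inv, mul_comm d l⁻¹, ← mul_assoc, mul_comm]

noncomputable def Jc (β : ℝ) : ℝ := ∫ l in Ioi (0:ℝ), l ^ (β - 1) * (1 / (1 + l))

lemma Jc_pos {β : ℝ} (hβ0 : 0 < β) (hβ1 : β < 1) : 0 < Jc β := by
  have hint : IntegrableOn (fun l : ℝ => l ^ (β - 1) * ((1:ℝ) / (1 + l))) (Ioi 0) := by
    simpa using g_integrable hβ0 hβ1 (zero_le_one)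
  have hnn : 0 ≤ᵐ[volume.restrict (Ioi (0:ℝ))] fun l : ℝ => l ^ (β - 1) * (1 / (1 + l)) := by
    filter_upwards [ae_restrict_mem measurableSet_Ioi] with l hl
    have hl0 : (0:ℝ) < l := hl
    positivity
  rw [Jc, setIntegral_pos_iff_support_of_nonneg_ae hnn hint]
  have hsub : Ioi (0:ℝ) ⊆ Function.support (fun l : ℝ => l ^ (β - 1) * (1 / (1 + l))) := by
    intro l hl
    have hl0 : (0:ℝ) < l := hl
    have : 0 < l ^ (β - 1) * (1 / (1 + l)) := by positivity
    exact this.ne'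
  calc (0:ENNReal) < volume (Ioi (0:ℝ)) := by simp [Real.volume_Ioi]
    _ ≤ volume (Function.support (fun l : ℝ => l ^ (β - 1) * (1 / (1 + l))) ∩ Ioi 0) :=
        measure_mono (fun l hl => ⟨hsub hl, hl⟩)

lemma g_integral {β : ℝ} (hβ0 : 0 < β) (hβ1 : β < 1) {d : ℝ} (hd : 0 ≤ d) :
    ∫ l in Ioi (0:ℝ), l ^ (β - 1) * (d / (d + l)) = d ^ β * Jc β := by
  rcases eq_or_lt_of_le hd with h0 | hdpos
  · subst h0
    simp [Real.zero_rpow hβ0.ne']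
  · have key := MeasureTheory.integral_comp_mul_left_Ioi
      (g := fun l : ℝ => l ^ (β - 1) * (d / (d + l))) 0 hdpos
    rw [mul_zero] at key
    have heq : EqOn (fun x : ℝ => (d * x) ^ (β - 1) * (d / (d + d * x)))
        (fun x : ℝ => d ^ (β - 1) * (x ^ (β - 1) * (1 / (1 + x)))) (Ioi 0) := by
      intro x hx
      have hx0 : (0:ℝ) < x := hx
      have h1 : d + d * x = d * (1 + x) := by ring
      simp only
      rw [Real.mul_rpow hdpos.le hx0.le, h1, div_mul_eq_div_div, div_self hdpos.ne']
      ring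
    rw [setIntegral_congr_fun measurableSet_Ioi heq] at key
    have hjc : (∫ x in Ioi (0:ℝ), d ^ (β - 1) * (x ^ (β - 1) * (1 / (1 + x))))
        = d ^ (β - 1) * Jc β := by
      rw [MeasureTheory.integral_const_mul]
      rfl
    rw [hjc] at key
    have hI : ∫ l in Ioi (0:ℝ), l ^ (β-1) * (d/(d+l)) = d * (d ^ (β-1) * Jc β) := by
      rw [key, smul_eq_mul, ← mul_assoc, mul_inv_cancel₀ hdpos.ne', one_mul]
    have h4 : d * d ^ (β-1) = d ^ β := by
      have h5 := Real.rpow_add hdpos 1 (β-1)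
      rw [Real.rpow_one] at h5
      rw [← h5]
      congr 1
      ring
    rw [hI, ← mul_assoc, h4]

end Integrals

section Rep
open MeasureTheory Set QAux Matrix
open scoped ComplexOrder
variable {n : Type*} [Fintype n] [DecidableEq n] {S A : Matrix n n ℂ}

lemma rep {β : ℝ} (hβ0 : 0 < β) (hβ1 : β < 1) (hS : S.PosDef) (hA : A.PosSemidef) (x : n → ℂ) :
    IntegrableOn (fun l : ℝ => l ^ (β-1) * (qf (Pm S A l) x).re) (Ioi 0) ∧
    ∫ l in Ioi (0:ℝ), l ^ (β-1) * (qf (Pm S A l) x).re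
      = Jc β * (qf (Matrix.gmean β S A) x).re := by
  have hpt : EqOn (fun l : ℝ => l ^ (β-1) * (qf (Pm S A l) x).re)
      (fun l : ℝ => ∑ i, Complex.normSq (wof hS hA x i) *
        (l ^ (β-1) * (dof hS hA i / (dof hS hA i + l)))) (Ioi 0) := by
    intro l hl
    simp only
    rw [qf_Pm_re hS hA hl x, Finset.mul_sum]
    exact Finset.sum_congr rfl fun i _ => by ring
  have hterm : ∀ i : n, IntegrableOn
      (fun l : ℝ => Complex.normSq (wof hS hA x i) *
        (l ^ (β-1) * (dof hS hA i / (dof hS hA i + l)))) (Ioi 0) :=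
    fun i => (g_integrable hβ0 hβ1 (dof_nonneg hS hA i)).const_mul _
  have hsum : IntegrableOn (fun l : ℝ => ∑ i, Complex.normSq (wof hS hA x i) *
      (l ^ (β-1) * (dof hS hA i / (dof hS hA i + l)))) (Ioi 0) :=
    MeasureTheory.integrable_finset_sum _ fun i _ => hterm i
  constructor
  · exact (integrableOn_congr_fun hpt measurableSet_Ioi).mpr hsum
  · rw [setIntegral_congr_fun measurableSet_Ioi hpt,
      MeasureTheory.integral_finset_sum _ fun i _ => hterm i]
    have hval : ∀ i : n, (∫ l in Ioi (0:ℝ), Complex.normSq (wof hS hA x i) *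
        (l ^ (β-1) * (dof hS hA i / (dof hS hA i + l))))
        = Complex.normSq (wof hS hA x i) * (dof hS hA i ^ β * Jc β) := by
      intro i
      rw [MeasureTheory.integral_const_mul, g_integral hβ0 hβ1 (dof_nonneg hS hA i)]
    rw [Finset.sum_congr rfl fun i _ => hval i, qf_gmean_re β hS hA x, Finset.mul_sum]
    exact Finset.sum_congr rfl fun i _ => by ring
end Rep

section Slice
open QAux Matrix
open scoped ComplexOrder
variable {n : Type*} [Fintype n] [DecidableEq n] {S A : Matrix n n ℂ}

lemma herm_smul_ofReal (c : ℝ) {A : Matrix n n ℂ} (hA : A.IsHermitian) :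
    (((c : ℂ)) • A).IsHermitian := by
  show _ᴴ = _
  rw [Matrix.conjTranspose_smul, hA.eq]
  congr 1
  simp [Complex.star_def, Complex.conj_ofReal]

lemma Pm_variational (hS : S.PosDef) (hA : A.PosSemidef) {l : ℝ} (hl : 0 < l) (x u : n → ℂ) :
    (qf (Pm S A l) x).re ≤ (1/l) * (qf A u).re + (qf S (x - u)).re ∧
    (u = (((l:ℂ)) • (A + ((l:ℂ)) • S)⁻¹) *ᵥ (S *ᵥ x) →
      (qf (Pm S A l) x).re = (1/l) * (qf A u).re + (qf S (x - u)).re) := by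
  set R := (A + ((l:ℂ)) • S)⁻¹ with hR
  set z := S *ᵥ x with hz
  set ustar := (((l:ℂ)) • R) *ᵥ z with hustar
  set M := (((1/l : ℝ) : ℂ)) • A + S with hM
  have hPD : (A + ((l:ℂ)) • S).PosDef := AlS_posdef hS hA hl
  have hRH : R.IsHermitian := hPD.inv.isHermitian
  have hMH : M.IsHermitian := (herm_smul_ofReal _ hA.1).add hS.isHermitian
  have hMpsd : M.PosSemidef :=
    (psd_smul (by positivity) hA).add hS.posSemidef
  have hMul : (A + ((l:ℂ)) • S) * R = 1 :=
    Matrix.mul_nonsing_inv _ ((Matrix.isUnit_iff_isUnit_det _).mp hPD.isUnit)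
  have hlM : ((l:ℂ)) • M = A + ((l:ℂ)) • S := by
    rw [hM, smul_add, smul_smul]
    have h1 : ((l:ℂ)) * ((1/l : ℝ) : ℂ) = 1 := by
      rw [← Complex.ofReal_mul, mul_one_div, div_self hl.ne', Complex.ofReal_one]
    rw [h1, one_smul]
  have hMR : M * (((l:ℂ)) • R) = 1 := by
    rw [Matrix.mul_smul, ← Matrix.smul_mul, hlM, hMul]
  have hMu : M *ᵥ ustar = z := by
    rw [hustar, Matrix.mulVec_mulVec, hMR, Matrix.one_mulVec]
  -- the complex identity
  have hid : ∀ v : n → ℂ, ((1/l : ℝ) : ℂ) * qf A v + qf S (x - v)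
      = qf (Pm S A l) x + qf M (v - ustar) := by
    intro v
    have e1 : qf S (x - v) = qf S x - star z ⬝ᵥ v - star v ⬝ᵥ z + qf S v := by
      rw [qf, star_sub, Matrix.mulVec_sub, sub_dotProduct, dotProduct_sub, dotProduct_sub]
      rw [show star x ⬝ᵥ S *ᵥ v = star z ⬝ᵥ v from herm_swap hS.isHermitian x v]
      rw [show star v ⬝ᵥ S *ᵥ x = star v ⬝ᵥ z from rfl]
      rw [show star v ⬝ᵥ S *ᵥ v = qf S v from rfl,
        show star x ⬝ᵥ S *ᵥ x = qf S x from rfl]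
      ring
    have e2 : qf (Pm S A l) x = qf S x - ((l:ℂ)) * (star z ⬝ᵥ R *ᵥ z) := by
      rw [Pm, qf_sub, qf_smul]
      have h7 : qf (S * R * S) x = star z ⬝ᵥ R *ᵥ z := by
        rw [qf, ← Matrix.mulVec_mulVec, ← Matrix.mulVec_mulVec]
        rw [show star x ⬝ᵥ S *ᵥ (R *ᵥ (S *ᵥ x)) = star (S *ᵥ x) ⬝ᵥ (R *ᵥ (S *ᵥ x)) from
          herm_swap hS.isHermitian x _]
      rw [h7]
    have e3 : qf M (v - ustar) = qf M v - star v ⬝ᵥ z - star z ⬝ᵥ v + star z ⬝ᵥ ustar := by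
      rw [qf, star_sub, Matrix.mulVec_sub, sub_dotProduct, dotProduct_sub, dotProduct_sub, hMu]
      rw [show star ustar ⬝ᵥ M *ᵥ v = star (M *ᵥ ustar) ⬝ᵥ v from herm_swap hMH ustar v, hMu]
      rw [show star ustar ⬝ᵥ z = star z ⬝ᵥ ustar from ?_]
      · rw [show star v ⬝ᵥ M *ᵥ v = qf M v from rfl]
        ring
      · rw [hustar]
        exact (herm_swap (herm_smul_ofReal l hRH) z z).symm
    have e4 : qf M v = ((1/l : ℝ) : ℂ) * qf A v + qf S v := by
      rw [hM, qf_add, qf_smul]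
    have e5 : star z ⬝ᵥ ustar = ((l:ℂ)) * (star z ⬝ᵥ R *ᵥ z) := by
      rw [hustar, Matrix.smul_mulVec, dotProduct_smul, smul_eq_mul]
    rw [e1, e2, e3, e4, e5]
    ring
  have hre : ∀ v : n → ℂ, (1/l) * (qf A v).re + (qf S (x - v)).re
      = (qf (Pm S A l) x).re + (qf M (v - ustar)).re := by
    intro v
    have := congrArg Complex.re (hid v)
    simpa [Complex.add_re, Complex.re_ofReal_mul] using this
  constructor
  · rw [hre u]
    have := qf_re_nonneg hMpsd (u - ustar)
    linarith
  · intro hu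
    have hu' : u = ustar := hu
    rw [hre u, hu']
    have : qf M (ustar - ustar) = 0 := by
      rw [sub_self, qf, Matrix.mulVec_zero, dotProduct_zero]
    rw [this]
    simp
end Slice
section Concave
open MeasureTheory Set QAux Matrix
open scoped ComplexOrder
variable {n : Type*} [Fintype n] [DecidableEq n] {S A : Matrix n n ℂ}

lemma qf_comb_re {t : ℝ} (P Q : Matrix n n ℂ) (v : n → ℂ) :
    (qf ((1-t) • P + t • Q) v).re = (1-t) * (qf P v).re + t * (qf Q v).re := by
  rw [real_smul_eq, real_smul_eq (c := t), qf_add, qf_smul, qf_smul]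
  simp [Complex.add_re, Complex.re_ofReal_mul]

lemma slice_concave {t : ℝ} (ht0 : 0 ≤ t) (ht1 : t ≤ 1)
    {S₀ S₁ A₀ A₁ : Matrix n n ℂ} (hS₀ : S₀.PosDef) (hS₁ : S₁.PosDef)
    (hA₀ : A₀.PosSemidef) (hA₁ : A₁.PosSemidef) {l : ℝ} (hl : 0 < l) (x : n → ℂ) :
    (1-t) * (qf (Pm S₀ A₀ l) x).re + t * (qf (Pm S₁ A₁ l) x).re
      ≤ (qf (Pm ((1-t) • S₀ + t • S₁) ((1-t) • A₀ + t • A₁) l) x).re := by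
  have hSc : ((1-t) • S₀ + t • S₁).PosDef := posdef_conv ht0 ht1 hS₀ hS₁
  have hAc : ((1-t) • A₀ + t • A₁).PosSemidef := psd_conv ht0 ht1 hA₀ hA₁
  set uc := (((l:ℂ)) • (((1-t) • A₀ + t • A₁) + ((l:ℂ)) • ((1-t) • S₀ + t • S₁))⁻¹) *ᵥ
    (((1-t) • S₀ + t • S₁) *ᵥ x) with huc
  have heq := (Pm_variational hSc hAc hl x uc).2 rfl
  have h₀ := (Pm_variational hS₀ hA₀ hl x uc).1
  have h₁ := (Pm_variational hS₁ hA₁ hl x uc).1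
  rw [heq, qf_comb_re, qf_comb_re]
  have h1t : (0:ℝ) ≤ 1 - t := by linarith
  have hr : (0:ℝ) ≤ 1/l := by positivity
  nlinarith [mul_le_mul_of_nonneg_left h₀ h1t, mul_le_mul_of_nonneg_left h₁ ht0]

lemma sandwich_VDV (hS : S.PosDef) (U : Matrix n n ℂ) (c : n → ℝ) :
    S.rpowH (1/2) * (U * Matrix.diagonal (fun i => ((c i : ℝ) : ℂ)) * star U) * S.rpowH (1/2)
      = (S.rpowH (1/2) * U) * Matrix.diagonal (fun i => ((c i : ℝ) : ℂ))
        * star (S.rpowH (1/2) * U) := by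
  rw [Matrix.star_mul, show star (S.rpowH (1/2)) = S.rpowH (1/2) from by
    rw [Matrix.star_eq_conjTranspose, (rpowH_isHermitian S (1/2)).eq]]
  simp only [Matrix.mul_assoc]

lemma gmean_isHermitian (β : ℝ) (hS : S.PosDef) (hA : A.PosSemidef) :
    (Matrix.gmean β S A).IsHermitian := by
  rw [gmean_eq β hS hA, sandwich_VDV hS]
  exact UDU_isHermitian _ _

lemma herm_real_smul (c : ℝ) {A : Matrix n n ℂ} (hA : A.IsHermitian) :
    (c • A).IsHermitian := by
  rw [real_smul_eq]
  exact herm_smul_ofReal c hA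

theorem gmean_concave {β t : ℝ} (hβ0 : 0 < β) (hβ1 : β < 1) (ht0 : 0 ≤ t) (ht1 : t ≤ 1)
    {S₀ S₁ A₀ A₁ : Matrix n n ℂ} (hS₀ : S₀.PosDef) (hS₁ : S₁.PosDef)
    (hA₀ : A₀.PosSemidef) (hA₁ : A₁.PosSemidef) :
    (Matrix.gmean β ((1-t) • S₀ + t • S₁) ((1-t) • A₀ + t • A₁)
      - ((1-t) • Matrix.gmean β S₀ A₀ + t • Matrix.gmean β S₁ A₁)).PosSemidef := by
  have hSc : ((1-t) • S₀ + t • S₁).PosDef := posdef_conv ht0 ht1 hS₀ hS₁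
  have hAc : ((1-t) • A₀ + t • A₁).PosSemidef := psd_conv ht0 ht1 hA₀ hA₁
  apply posSemidef_of_qf
  · exact ((gmean_isHermitian β hSc hAc).sub
      ((herm_real_smul _ (gmean_isHermitian β hS₀ hA₀)).add
        (herm_real_smul _ (gmean_isHermitian β hS₁ hA₁))))
  · intro x
    rw [qf_sub, Complex.sub_re, qf_comb_re]
    have rc := rep hβ0 hβ1 hSc hAc x
    have r0 := rep hβ0 hβ1 hS₀ hA₀ x
    have r1 := rep hβ0 hβ1 hS₁ hA₁ x
    have hcomb_int : IntegrableOn (fun l : ℝ =>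
        (1-t) * (l ^ (β-1) * (qf (Pm S₀ A₀ l) x).re)
          + t * (l ^ (β-1) * (qf (Pm S₁ A₁ l) x).re)) (Ioi 0) :=
      (r0.1.const_mul (1-t)).add (r1.1.const_mul t)
    have hmono : ∀ l ∈ Ioi (0:ℝ),
        (1-t) * (l ^ (β-1) * (qf (Pm S₀ A₀ l) x).re)
          + t * (l ^ (β-1) * (qf (Pm S₁ A₁ l) x).re)
        ≤ l ^ (β-1) * (qf (Pm ((1-t) • S₀ + t • S₁) ((1-t) • A₀ + t • A₁) l) x).re := by
      intro l hl
      have hslice := slice_concave ht0 ht1 hS₀ hS₁ hA₀ hA₁ hl x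
      have hr : (0:ℝ) ≤ l ^ (β-1) := Real.rpow_nonneg (le_of_lt hl) _
      nlinarith [mul_le_mul_of_nonneg_left hslice hr]
    have hint := setIntegral_mono_on hcomb_int rc.1 measurableSet_Ioi hmono
    rw [MeasureTheory.integral_add (r0.1.const_mul (1-t)) (r1.1.const_mul t),
      MeasureTheory.integral_const_mul, MeasureTheory.integral_const_mul,
      r0.2, r1.2, rc.2] at hint
    have hJ := Jc_pos hβ0 hβ1
    nlinarith [hint]
end Concave
section Main
open MeasureTheory Set QAux Matrix
open scoped ComplexOrder
variable {n : Type*} [Fintype n] [DecidableEq n]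

lemma trace_re_nonneg {A : Matrix n n ℂ} (hA : A.PosSemidef) : 0 ≤ A.trace.re := by
  have h : ∀ i, A i i = qf A (Pi.single i 1) := by
    intro i
    simp [qf, dotProduct, Matrix.mulVec_single, Pi.single_apply, apply_ite, mul_comm]
  rw [Matrix.trace, Complex.re_sum]
  refine Finset.sum_nonneg fun i _ => ?_
  rw [Matrix.diag_apply, h i]
  exact qf_re_nonneg hA _

lemma psd_of_isEmpty [IsEmpty n] (M : Matrix n n ℂ) : M.PosSemidef := by
  constructor
  · ext i j
    exact isEmptyElim i
  · intro x
    rw [Subsingleton.elim x 0]; simp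

lemma dot_self_re (y : n → ℂ) : (star y ⬝ᵥ y).re = ∑ i, Complex.normSq (y i) := by
  rw [dotProduct, Complex.re_sum]
  refine Finset.sum_congr rfl fun i _ => ?_
  rw [Pi.star_apply, Complex.star_def, ← Complex.normSq_eq_conj_mul_self]
  exact Complex.ofReal_re _

lemma qf_herm_re {M : Matrix n n ℂ} (hM : M.IsHermitian) (x : n → ℂ) :
    (qf M x).re = ∑ i, hM.eigenvalues i *
      Complex.normSq ((star (hM.eigenvectorUnitary : Matrix n n ℂ) *ᵥ x) i) := by
  conv_lhs => rw [spectral' hM]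
  rw [qf_VDV_re]

lemma norm_pres {M : Matrix n n ℂ} (hM : M.IsHermitian) (x : n → ℂ) :
    ∑ i, Complex.normSq ((star (hM.eigenvectorUnitary : Matrix n n ℂ) *ᵥ x) i)
      = ∑ i, Complex.normSq (x i) := by
  rw [← dot_self_re, ← dot_self_re]
  congr 1
  have h1 : star ((star (hM.eigenvectorUnitary : Matrix n n ℂ)) *ᵥ x)
      ⬝ᵥ ((star (hM.eigenvectorUnitary : Matrix n n ℂ)) *ᵥ x)
      = qf ((star (hM.eigenvectorUnitary : Matrix n n ℂ))ᴴ * 1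
          * star (hM.eigenvectorUnitary : Matrix n n ℂ)) x := by
    rw [qf_conj]
    rw [qf, Matrix.one_mulVec]
  rw [h1, Matrix.star_eq_conjTranspose, Matrix.conjTranspose_conjTranspose, mul_one,
    ← Matrix.star_eq_conjTranspose, eigUnitary_mul_star hM]
  rw [qf, Matrix.one_mulVec]

lemma bound_exists [Nonempty n] {ρ σ : Matrix n n ℂ} (hρ : ρ.PosSemidef) (hσ : σ.PosDef) :
    ∃ K : ℝ, 0 < K ∧ ∀ x, (qf ρ x).re ≤ K * (qf σ x).re := by
  obtain ⟨i₀, -, hmin⟩ := Finset.exists_min_image Finset.univ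
    (fun i => hσ.isHermitian.eigenvalues i) Finset.univ_nonempty
  set m := hσ.isHermitian.eigenvalues i₀ with hm
  have hm0 : 0 < m := hσ.eigenvalues_pos i₀
  set E := ∑ i, hρ.1.eigenvalues i with hE
  have hE0 : 0 ≤ E := Finset.sum_nonneg fun i _ => hρ.eigenvalues_nonneg i
  refine ⟨E / m + 1, by positivity, fun x => ?_⟩
  set N := ∑ i, Complex.normSq (x i) with hN
  have hN0 : 0 ≤ N := Finset.sum_nonneg fun i _ => Complex.normSq_nonneg _
  have hup : (qf ρ x).re ≤ E * N := by
    rw [qf_herm_re hρ.1 x]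
    calc ∑ i, hρ.1.eigenvalues i *
          Complex.normSq ((star (hρ.1.eigenvectorUnitary : Matrix n n ℂ) *ᵥ x) i)
        ≤ ∑ i, hρ.1.eigenvalues i * N := by
          refine Finset.sum_le_sum fun i _ => ?_
          refine mul_le_mul_of_nonneg_left ?_ (hρ.eigenvalues_nonneg i)
          rw [hN, ← norm_pres hρ.1 x]
          exact Finset.single_le_sum (fun j _ => Complex.normSq_nonneg _) (Finset.mem_univ i)
      _ = E * N := by rw [hE, ← Finset.sum_mul]
  have hlow : m * N ≤ (qf σ x).re := by
    rw [qf_herm_re hσ.isHermitian x]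
    calc m * N = ∑ i, m *
          Complex.normSq ((star (hσ.isHermitian.eigenvectorUnitary : Matrix n n ℂ) *ᵥ x) i) := by
          rw [← Finset.mul_sum, hN, norm_pres hσ.isHermitian x]
      _ ≤ _ := by
          refine Finset.sum_le_sum fun i _ => ?_
          exact mul_le_mul_of_nonneg_right (hmin i (Finset.mem_univ i))
            (Complex.normSq_nonneg _)
  have h1 : (E/m+1) * (m*N) = E*N + m*N := by
    field_simp
  have h2 : (E/m+1) * (m*N) ≤ (E/m+1) * (qf σ x).re :=
    mul_le_mul_of_nonneg_left hlow (by positivity)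
  have h3 : 0 ≤ m*N := by positivity
  linarith

lemma rpowH_smul_one (c : ℝ) (β : ℝ) :
    ((((c:ℂ)) • (1 : Matrix n n ℂ)).rpowH β) = ((c ^ β : ℝ) : ℂ) • 1 := by
  have hH : (((c:ℂ)) • (1 : Matrix n n ℂ)).IsHermitian :=
    herm_smul_ofReal c Matrix.isHermitian_one
  set U := (hH.eigenvectorUnitary : Matrix n n ℂ) with hUdef
  have hU1 : star U * U = 1 := star_mul_eigUnitary hH
  have hU2 : U * star U = 1 := eigUnitary_mul_star hH
  have h1 : star U * ((((c:ℂ)) • (1 : Matrix n n ℂ))) * U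
      = Matrix.diagonal (fun i => ((hH.eigenvalues i : ℝ) : ℂ)) := by
    nth_rewrite 1 [spectral' hH]
    calc star U * (U * Matrix.diagonal (fun i => ((hH.eigenvalues i : ℝ) : ℂ)) * star U) * U
        = (star U * U) * Matrix.diagonal (fun i => ((hH.eigenvalues i : ℝ) : ℂ))
          * (star U * U) := by simp only [Matrix.mul_assoc]
      _ = _ := by rw [hU1, one_mul, mul_one]
  have h2 : star U * ((((c:ℂ)) • (1 : Matrix n n ℂ))) * U = ((c:ℂ)) • 1 := by
    rw [Matrix.mul_smul, mul_one, Matrix.smul_mul, hU1]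
  have hev : ∀ i, hH.eigenvalues i = c := by
    intro i
    have h3 := h1.symm.trans h2
    have h4 := congrFun (congrFun h3 i) i
    simp only [Matrix.diagonal_apply_eq, Matrix.smul_apply, Matrix.one_apply_eq,
      smul_eq_mul, mul_one] at h4
    exact_mod_cast h4
  rw [rpowH_def hH β]
  have h5 : (fun i => ((hH.eigenvalues i ^ β : ℝ) : ℂ)) = fun _ : n => ((c ^ β : ℝ) : ℂ) := by
    funext i
    rw [hev i]
  rw [h5, ← smul_one_eq_diag (c ^ β), Matrix.mul_smul, mul_one, Matrix.smul_mul, hU2]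

lemma gmean_csigma {σ : Matrix n n ℂ} (hσ : σ.PosDef) (c : ℝ) (β : ℝ) :
    Matrix.gmean β σ (((c:ℂ)) • σ) = ((c ^ β : ℝ) : ℂ) • σ := by
  unfold Matrix.gmean
  have h1 : σ.rpowH (-(1/2)) * (((c:ℂ)) • σ) * σ.rpowH (-(1/2))
      = ((c:ℂ)) • (1 : Matrix n n ℂ) := by
    rw [Matrix.mul_smul, Matrix.smul_mul, snh_mul_S hσ, sh_mul_snh hσ]
  rw [h1, rpowH_smul_one, Matrix.mul_smul, mul_one, Matrix.smul_mul, sh_mul_sh hσ]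

lemma feas_nonempty {α : ℝ} (hα : 1 < α) {ρ σ : Matrix n n ℂ}
    (hρ : ρ.PosSemidef) (hσ : σ.PosDef) :
    {t : ℝ | ∃ A : Matrix n n ℂ, A.PosSemidef ∧
      (Matrix.gmean (1/α) σ A - ρ).PosSemidef ∧ t = A.trace.re}.Nonempty := by
  cases isEmpty_or_nonempty n with
  | inl h => exact ⟨(0 : Matrix n n ℂ).trace.re, 0, psd_of_isEmpty _, psd_of_isEmpty _, rfl⟩
  | inr h =>
    obtain ⟨K, hK, hbound⟩ := bound_exists hρ hσ
    have hβ0 : 0 < 1/α := by positivity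
    set c := K ^ α with hc
    have hc0 : 0 < c := Real.rpow_pos_of_pos hK α
    have hcβ : c ^ (1/α) = K := by
      rw [hc, ← Real.rpow_mul hK.le, mul_one_div, div_self (ne_of_gt (by linarith : (0:ℝ) < α)),
        Real.rpow_one]
    refine ⟨((((c:ℂ)) • σ)).trace.re, ((c:ℂ)) • σ, psd_smul hc0.le hσ.posSemidef, ?_, rfl⟩
    rw [gmean_csigma hσ c (1/α), hcβ]
    refine posSemidef_of_qf ((herm_smul_ofReal K hσ.isHermitian).sub hρ.1) fun x => ?_
    rw [qf_sub, Complex.sub_re, qf_smul, Complex.re_ofReal_mul]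
    have := hbound x
    linarith
end Main
/-- joint convexity of Q^#_α. -/
theorem QSharp_jointly_convex
    {n : Type*} [Fintype n] [DecidableEq n]
    (α : ℝ) (hα : 1 < α) (lam : ℝ) (hl0 : 0 ≤ lam) (hl1 : lam ≤ 1)
    (ρ₀ ρ₁ σ₀ σ₁ : Matrix n n ℂ)
    (hρ₀ : ρ₀.PosSemidef) (hρ₁ : ρ₁.PosSemidef)
    (hσ₀ : σ₀.PosDef) (hσ₁ : σ₁.PosDef) :
    QSharp α ((1 - lam) • ρ₀ + lam • ρ₁) ((1 - lam) • σ₀ + lam • σ₁)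
      ≤ (1 - lam) * QSharp α ρ₀ σ₀ + lam * QSharp α ρ₁ σ₁ := by
  have hα0 : (0:ℝ) < α := lt_trans one_pos hα
  have hβ0 : 0 < 1/α := by positivity
  have hβ1 : 1/α < 1 := by rw [div_lt_one hα0]; exact hα
  have hbdd : ∀ (ρ σ : Matrix n n ℂ), BddBelow {t : ℝ | ∃ A : Matrix n n ℂ, A.PosSemidef ∧
      (Matrix.gmean (1/α) σ A - ρ).PosSemidef ∧ t = A.trace.re} := by
    intro ρ σ
    refine ⟨0, fun t ht => ?_⟩
    obtain ⟨A, hA, -, rfl⟩ := ht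
    exact trace_re_nonneg hA
  have hne₀ := feas_nonempty hα hρ₀ hσ₀
  have hne₁ := feas_nonempty hα hρ₁ hσ₁
  have key : ∀ ε : ℝ, 0 < ε →
      QSharp α ((1 - lam) • ρ₀ + lam • ρ₁) ((1 - lam) • σ₀ + lam • σ₁)
        ≤ (1 - lam) * QSharp α ρ₀ σ₀ + lam * QSharp α ρ₁ σ₁ + ε := by
    intro ε hε
    obtain ⟨t₀, ht₀mem, ht₀⟩ := Real.lt_sInf_add_pos hne₀ hε
    obtain ⟨t₁, ht₁mem, ht₁⟩ := Real.lt_sInf_add_pos hne₁ hε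
    obtain ⟨A₀, hA₀, hf₀, rfl⟩ := ht₀mem
    obtain ⟨A₁, hA₁, hf₁, rfl⟩ := ht₁mem
    have hAc := QAux.psd_conv hl0 hl1 hA₀ hA₁
    have hconc := gmean_concave (β := 1/α) (t := lam) hβ0 hβ1 hl0 hl1 hσ₀ hσ₁ hA₀ hA₁
    have halg : Matrix.gmean (1/α) ((1-lam) • σ₀ + lam • σ₁) ((1-lam) • A₀ + lam • A₁)
        - ((1-lam) • ρ₀ + lam • ρ₁)
        = (Matrix.gmean (1/α) ((1-lam) • σ₀ + lam • σ₁) ((1-lam) • A₀ + lam • A₁)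
            - ((1-lam) • Matrix.gmean (1/α) σ₀ A₀ + lam • Matrix.gmean (1/α) σ₁ A₁))
          + ((1-lam) • (Matrix.gmean (1/α) σ₀ A₀ - ρ₀)
              + lam • (Matrix.gmean (1/α) σ₁ A₁ - ρ₁)) := by
      module
    have hfc : (Matrix.gmean (1/α) ((1-lam) • σ₀ + lam • σ₁) ((1-lam) • A₀ + lam • A₁)
        - ((1-lam) • ρ₀ + lam • ρ₁)).PosSemidef := by
      rw [halg]
      exact hconc.add (QAux.psd_conv hl0 hl1 hf₀ hf₁)
    have h1 : QSharp α ((1 - lam) • ρ₀ + lam • ρ₁) ((1 - lam) • σ₀ + lam • σ₁)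
        ≤ ((1-lam) • A₀ + lam • A₁).trace.re :=
      csInf_le (hbdd _ _) ⟨(1-lam) • A₀ + lam • A₁, hAc, hfc, rfl⟩
    have htr : ((1-lam) • A₀ + lam • A₁).trace.re
        = (1-lam) * A₀.trace.re + lam * A₁.trace.re := by
      rw [Matrix.trace_add, Matrix.trace_smul, Matrix.trace_smul, Complex.add_re]
      simp [Complex.real_smul, Complex.re_ofReal_mul]
    have e0 : (1-lam) * A₀.trace.re ≤ (1-lam) * (QSharp α ρ₀ σ₀ + ε) :=
      mul_le_mul_of_nonneg_left ht₀.le (by linarith)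
    have e1 : lam * A₁.trace.re ≤ lam * (QSharp α ρ₁ σ₁ + ε) :=
      mul_le_mul_of_nonneg_left ht₁.le hl0
    nlinarith [e0, e1, h1, htr]
  by_contra hcon
  push_neg at hcon
  have hδ : 0 < (QSharp α ((1 - lam) • ρ₀ + lam • ρ₁) ((1 - lam) • σ₀ + lam • σ₁)
      - ((1 - lam) * QSharp α ρ₀ σ₀ + lam * QSharp α ρ₁ σ₁)) / 2 := by linarith
  have := key _ hδ
  linarith
end

section
/- Let α ∈ (1,∞), let ρ be a nonzero positive semidefinite complex matrix and σ a positive definite complex matrix of the same size, and assume ρ and σ commute (ρσ = σρ). Then D^#_α(ρ‖σ) = (1/(α−1)) · log₂ tr(ρ^α σ^(1−α)), i.e., D^#_α coincides with the classical α-Rényi divergence of the commuting pair. -/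
open Matrix Filter
open scoped Kronecker Classical ComplexOrder

section SharpAux
set_option linter.unusedSectionVars false

variable {n : Type*} [Fintype n] [DecidableEq n]

noncomputable def cdiag (d : n → ℝ) : Matrix n n ℂ :=
  Matrix.diagonal (fun i => ((d i : ℝ) : ℂ))

lemma cdiag_mul (d e : n → ℝ) : cdiag d * cdiag e = cdiag (fun i => d i * e i) := by
  simp [cdiag, Matrix.diagonal_mul_diagonal]

lemma cdiag_herm (d : n → ℝ) : (cdiag (n := n) d).IsHermitian := by
  apply Matrix.isHermitian_diagonal_of_self_adjoint
  ext i
  simp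

lemma unitary_star_mul {U : Matrix n n ℂ} (hU : U ∈ Matrix.unitaryGroup n ℂ) :
    star U * U = 1 := (Matrix.mem_unitaryGroup_iff').mp hU

lemma unitary_mul_star {U : Matrix n n ℂ} (hU : U ∈ Matrix.unitaryGroup n ℂ) :
    U * star U = 1 := (Matrix.mem_unitaryGroup_iff).mp hU

lemma diag_comm_transfer {V : Matrix n n ℂ} (d e : n → ℝ) (f : ℝ → ℝ)
    (h : cdiag d * V = V * cdiag e) :
    cdiag (fun i => f (d i)) * V = V * cdiag (fun i => f (e i)) := by
  ext i j
  have h' : (d i : ℂ) * V i j = V i j * (e j : ℂ) := by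
    have := congrFun (congrFun h i) j
    simpa [cdiag, Matrix.diagonal_mul, Matrix.mul_diagonal] using this
  simp only [cdiag, Matrix.diagonal_mul, Matrix.mul_diagonal]
  rcases eq_or_ne (V i j) 0 with h0 | h0
  · simp [h0]
  · have hde : (d i : ℂ) = (e j : ℂ) := by
      rw [mul_comm] at h'
      exact mul_left_cancel₀ h0 (by rw [← h'])
    have : d i = e j := by exact_mod_cast hde
    rw [this, mul_comm]

lemma conj_herm {U M : Matrix n n ℂ} (hM : M.IsHermitian) :
    (U * M * star U).IsHermitian := by
  show (U * M * star U)ᴴ = _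
  simp [Matrix.star_eq_conjTranspose, Matrix.conjTranspose_mul, mul_assoc, hM.eq]

lemma herm_spectral {A : Matrix n n ℂ} (hA : A.IsHermitian) :
    A = (hA.eigenvectorUnitary : Matrix n n ℂ) * cdiag hA.eigenvalues *
      star (hA.eigenvectorUnitary : Matrix n n ℂ) := by
  convert hA.spectral_theorem using 2
  rw [Unitary.conjStarAlgAut_apply]; rfl

/-- rpowH of a unitary conjugation of a real diagonal. -/
lemma rpowH_conj_cdiag {U : Matrix n n ℂ} (hU : U ∈ Matrix.unitaryGroup n ℂ)
    (d : n → ℝ) (r : ℝ) :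
    (U * cdiag d * star U).rpowH r = U * cdiag (fun i => d i ^ r) * star U := by
  have hA : (U * cdiag d * star U).IsHermitian := conj_herm (cdiag_herm d)
  have hspec := herm_spectral hA
  set W : Matrix n n ℂ := (hA.eigenvectorUnitary : Matrix n n ℂ) with hW
  have hWu : W ∈ Matrix.unitaryGroup n ℂ := hA.eigenvectorUnitary.2
  have h1 : U * cdiag d * star U * W = W * cdiag hA.eigenvalues := by
    conv_lhs => rw [hspec]
    simp only [mul_assoc, unitary_star_mul hWu, mul_one]
  have hcomm : cdiag d * (star U * W) = (star U * W) * cdiag hA.eigenvalues := by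
    calc cdiag d * (star U * W)
        = star U * (U * (cdiag d * (star U * W))) := by
          rw [← mul_assoc, ← mul_assoc, unitary_star_mul hU, one_mul]
      _ = star U * (U * cdiag d * star U * W) := by simp only [mul_assoc]
      _ = star U * (W * cdiag hA.eigenvalues) := by rw [h1]
      _ = (star U * W) * cdiag hA.eigenvalues := by simp only [mul_assoc]
  have h2 := diag_comm_transfer d hA.eigenvalues (fun x => x ^ r) hcomm
  have key : U * cdiag (fun i => d i ^ r) * star U
      = W * cdiag (fun i => hA.eigenvalues i ^ r) * star W := by
    calc U * cdiag (fun i => d i ^ r) * star U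
        = U * cdiag (fun i => d i ^ r) * star U * (W * star W) := by
          rw [unitary_mul_star hWu, mul_one]
      _ = U * ((cdiag fun i => d i ^ r) * (star U * W)) * star W := by
          simp only [mul_assoc]
      _ = U * ((star U * W) * cdiag fun i => hA.eigenvalues i ^ r) * star W := by rw [h2]
      _ = (U * star U) * (W * (cdiag (fun i => hA.eigenvalues i ^ r) * star W)) := by
          simp only [mul_assoc]
      _ = W * cdiag (fun i => hA.eigenvalues i ^ r) * star W := by
          rw [unitary_mul_star hU, one_mul]; simp only [mul_assoc]
  unfold Matrix.rpowH
  rw [dif_pos hA, key, hW]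
  simp only [cdiag, mul_assoc]

lemma rpowH_conj_herm {U M : Matrix n n ℂ} (hU : U ∈ Matrix.unitaryGroup n ℂ)
    (hM : M.IsHermitian) (r : ℝ) :
    (U * M * star U).rpowH r = U * M.rpowH r * star U := by
  have hspec := herm_spectral hM
  set W : Matrix n n ℂ := (hM.eigenvectorUnitary : Matrix n n ℂ) with hW
  have hWu : W ∈ Matrix.unitaryGroup n ℂ := hM.eigenvectorUnitary.2
  have hUW : U * W ∈ Matrix.unitaryGroup n ℂ := mul_mem hU hWu
  have e1 : U * M * star U = (U * W) * cdiag hM.eigenvalues * star (U * W) := by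
    rw [Matrix.star_mul]
    conv_lhs => rw [hspec]
    simp only [mul_assoc]
  have e2 : M.rpowH r = W * cdiag (fun i => hM.eigenvalues i ^ r) * star W := by
    conv_lhs => rw [hspec]
    exact rpowH_conj_cdiag hWu _ r
  rw [e1, rpowH_conj_cdiag hUW, e2, Matrix.star_mul]
  simp only [mul_assoc]

lemma conj_mul_conj {U : Matrix n n ℂ} (hU : U ∈ Matrix.unitaryGroup n ℂ)
    (M N : Matrix n n ℂ) :
    (U * M * star U) * (U * N * star U) = U * (M * N) * star U := by
  calc (U * M * star U) * (U * N * star U)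
      = U * M * (star U * U) * N * star U := by simp only [mul_assoc]
    _ = U * (M * N) * star U := by rw [unitary_star_mul hU]; simp only [mul_one, mul_assoc]

lemma conj_trace {U : Matrix n n ℂ} (hU : U ∈ Matrix.unitaryGroup n ℂ)
    (M : Matrix n n ℂ) : (U * M * star U).trace = M.trace := by
  rw [Matrix.trace_mul_cycle, unitary_star_mul hU, one_mul]

lemma conj_posSemidef {U M : Matrix n n ℂ} (hM : M.PosSemidef) :
    (U * M * star U).PosSemidef := by
  simpa [Matrix.star_eq_conjTranspose] using hM.mul_mul_conjTranspose_same U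

lemma posSemidef_of_conj {U M : Matrix n n ℂ} (hU : U ∈ Matrix.unitaryGroup n ℂ)
    (h : (U * M * star U).PosSemidef) : M.PosSemidef := by
  have h2 := h.mul_mul_conjTranspose_same (star U)
  have e : star U * (U * M * star U) * (star U)ᴴ = M := by
    rw [Matrix.star_eq_conjTranspose, Matrix.conjTranspose_conjTranspose,
      ← Matrix.star_eq_conjTranspose]
    calc star U * (U * M * star U) * U
        = (star U * U) * M * (star U * U) := by simp only [mul_assoc]
      _ = M := by rw [unitary_star_mul hU, one_mul, mul_one]
  rwa [e] at h2

lemma cdiag_posSemidef {d : n → ℝ} (hd : ∀ i, 0 ≤ d i) : (cdiag (n := n) d).PosSemidef := by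
  apply Matrix.PosSemidef.diagonal
  intro i
  show (0:ℂ) ≤ ((d i : ℝ) : ℂ)
  exact Complex.zero_le_real.mpr (hd i)

lemma psd_diag_re_nonneg {M : Matrix n n ℂ} (hM : M.PosSemidef) (i : n) :
    0 ≤ (M i i).re := by
  have h := hM.diag_nonneg (i := i)
  exact (Complex.le_def.mp h).1

end SharpAux

section SimulDiag
set_option linter.unusedSectionVars false
set_option maxHeartbeats 1000000

variable {n : Type*} [Fintype n] [DecidableEq n]

lemma simul_diag {ρ σ : Matrix n n ℂ} (hρ : ρ.PosSemidef) (hσ : σ.PosDef)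
    (hcomm : ρ * σ = σ * ρ) :
    ∃ U ∈ Matrix.unitaryGroup n ℂ, ∃ p s : n → ℝ, (∀ i, 0 ≤ p i) ∧ (∀ i, 0 < s i) ∧
      ρ = U * cdiag p * star U ∧ σ = U * cdiag s * star U := by
  classical
  have hσH : σ.IsHermitian := hσ.1
  set W : Matrix n n ℂ := (hσH.eigenvectorUnitary : Matrix n n ℂ) with hWdef
  have hWu : W ∈ Matrix.unitaryGroup n ℂ := hσH.eigenvectorUnitary.2
  set s : n → ℝ := hσH.eigenvalues with hsdef
  have hs : ∀ i, 0 < s i := hσ.eigenvalues_pos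
  have hσspec : σ = W * cdiag s * star W := herm_spectral hσH
  set ρ' : Matrix n n ℂ := star W * ρ * W with hρ'def
  have hρ'psd : ρ'.PosSemidef := by
    have := hρ.mul_mul_conjTranspose_same (star W)
    simpa [Matrix.star_eq_conjTranspose, Matrix.conjTranspose_conjTranspose, hρ'def] using this
  have hρ'W : ρ = W * ρ' * star W := by
    rw [hρ'def]
    calc ρ = (W * star W) * ρ * (W * star W) := by rw [unitary_mul_star hWu]; simp
      _ = W * (star W * ρ * W) * star W := by simp only [mul_assoc]
  have hσ' : star W * σ * W = cdiag s := by
    rw [hσspec]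
    calc star W * (W * cdiag s * star W) * W
        = (star W * W) * cdiag s * (star W * W) := by simp only [mul_assoc]
      _ = cdiag s := by rw [unitary_star_mul hWu]; simp
  have hc : ρ' * cdiag s = cdiag s * ρ' := by
    rw [← hσ', hρ'def]
    calc (star W * ρ * W) * (star W * σ * W)
        = star W * (ρ * (W * star W) * σ) * W := by simp only [mul_assoc]
      _ = star W * (ρ * σ) * W := by rw [unitary_mul_star hWu]; simp only [mul_one, mul_assoc]
      _ = star W * (σ * ρ) * W := by rw [hcomm]
      _ = star W * (σ * (W * star W) * ρ) * W := by
          rw [unitary_mul_star hWu]; simp only [mul_one, mul_assoc]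
      _ = (star W * σ * W) * (star W * ρ * W) := by simp only [mul_assoc]
  have hzero : ∀ i j, s i ≠ s j → ρ' i j = 0 := by
    intro i j hij
    have h1 := congrFun (congrFun hc i) j
    have h2 : ρ' i j * (s j : ℂ) = (s i : ℂ) * ρ' i j := by
      simpa [cdiag, Matrix.mul_diagonal, Matrix.diagonal_mul] using h1
    by_contra h0
    apply hij
    have h3 : ρ' i j * (s j : ℂ) = ρ' i j * (s i : ℂ) := by rw [h2]; ring
    have := mul_left_cancel₀ h0 h3
    exact_mod_cast this.symm
  -- block structure
  set f : n → { v : ℝ // v ∈ Set.range s } := fun i => ⟨s i, Set.mem_range_self i⟩ with hfdef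
  set e := Equiv.sigmaFiberEquiv f with hedef
  set B : ∀ v : { v : ℝ // v ∈ Set.range s },
      Matrix { i : n // f i = v } { i : n // f i = v } ℂ :=
    fun v => ρ'.submatrix (fun x => x.1) (fun x => x.1) with hBdef
  have hB : ∀ v, (B v).PosSemidef := fun v => hρ'psd.submatrix _
  set W2 : ∀ v : { v : ℝ // v ∈ Set.range s },
      Matrix { i : n // f i = v } { i : n // f i = v } ℂ :=
    fun v => ((hB v).1.eigenvectorUnitary : Matrix _ _ ℂ) with hW2def
  have hW2u : ∀ v, W2 v ∈ Matrix.unitaryGroup _ ℂ := fun v => (hB v).1.eigenvectorUnitary.2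
  set q2 : ∀ v : { v : ℝ // v ∈ Set.range s }, { i : n // f i = v } → ℝ :=
    fun v => (hB v).1.eigenvalues with hq2def
  have hq2 : ∀ v x, 0 ≤ q2 v x := fun v => (hB v).eigenvalues_nonneg
  have hBspec : ∀ v, B v = W2 v * cdiag (q2 v) * star (W2 v) := fun v => herm_spectral (hB v).1
  set Vb := Matrix.blockDiagonal' W2 with hVbdef
  have claim1 : ρ'.submatrix ⇑e ⇑e = Matrix.blockDiagonal' B := by
    ext x y
    rcases x with ⟨k, i⟩
    rcases y with ⟨k', j⟩
    by_cases h : k = k'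
    · subst h
      rw [Matrix.blockDiagonal'_apply_eq]
      rfl
    · rw [Matrix.blockDiagonal'_apply_ne _ _ _ h]
      apply hzero
      intro hs'
      apply h
      rw [← i.2, ← j.2]
      exact Subtype.ext hs'
  have claim2 : Matrix.blockDiagonal' B
      = Vb * Matrix.diagonal (fun x : Σ v, { i : n // f i = v } => ((q2 x.1 x.2 : ℝ) : ℂ))
        * star Vb := by
    have hdiag : (Matrix.diagonal
        (fun x : Σ v : { v : ℝ // v ∈ Set.range s }, { i : n // f i = v } =>
          ((q2 x.1 x.2 : ℝ) : ℂ)))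
        = Matrix.blockDiagonal' (fun v => cdiag (q2 v)) :=
      (Matrix.blockDiagonal'_diagonal (fun v x => ((q2 v x : ℝ) : ℂ))).symm
    rw [hVbdef, Matrix.star_eq_conjTranspose, Matrix.blockDiagonal'_conjTranspose, hdiag,
      ← Matrix.blockDiagonal'_mul, ← Matrix.blockDiagonal'_mul]
    refine congrArg Matrix.blockDiagonal' (funext fun v => ?_)
    simpa [Matrix.star_eq_conjTranspose] using hBspec v
  have hVbu : Vb * star Vb = 1 := by
    have hone : (fun k => W2 k * (W2 k)ᴴ)
        = (1 : ∀ v : { v : ℝ // v ∈ Set.range s },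
            Matrix { i : n // f i = v } { i : n // f i = v } ℂ) := by
      funext k
      rw [← Matrix.star_eq_conjTranspose]
      exact unitary_mul_star (hW2u k)
    rw [hVbdef, Matrix.star_eq_conjTranspose, Matrix.blockDiagonal'_conjTranspose,
      ← Matrix.blockDiagonal'_mul, hone, Matrix.blockDiagonal'_one]
  set V := Vb.submatrix ⇑e.symm ⇑e.symm with hVdef
  have hstarV : star V = (star Vb).submatrix ⇑e.symm ⇑e.symm := by
    rw [hVdef, Matrix.star_eq_conjTranspose, Matrix.star_eq_conjTranspose,
      Matrix.conjTranspose_submatrix]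
  have hVu : V ∈ Matrix.unitaryGroup n ℂ := by
    rw [Matrix.mem_unitaryGroup_iff, hVdef, hstarV,
      Matrix.submatrix_mul_equiv Vb (star Vb) _ e.symm _, hVbu, Matrix.submatrix_one_equiv]
  set q : n → ℝ := fun i => q2 (f i) ⟨i, rfl⟩ with hqdef
  have hq : ∀ i, 0 ≤ q i := fun i => hq2 _ _
  have hρ'V : ρ' = V * cdiag q * star V := by
    have h3 : ρ' = (Matrix.blockDiagonal' B).submatrix ⇑e.symm ⇑e.symm := by
      rw [← claim1]
      ext i j
      simp [Matrix.submatrix_apply]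
    rw [h3, claim2, hstarV, hVdef,
      ← Matrix.submatrix_mul_equiv (Vb * Matrix.diagonal _) (star Vb) _ e.symm _,
      ← Matrix.submatrix_mul_equiv Vb (Matrix.diagonal _) _ e.symm _,
      Matrix.submatrix_diagonal_equiv]
    rfl
  have hsV : cdiag s * V = V * cdiag s := by
    ext i j
    simp only [cdiag, Matrix.diagonal_mul, Matrix.mul_diagonal]
    rcases eq_or_ne (s i) (s j) with h | h
    · rw [h, mul_comm]
    · have hV0 : V i j = 0 := by
        show Vb (e.symm i) (e.symm j) = 0
        exact Matrix.blockDiagonal'_apply_ne W2 _ _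
          (fun hk => h (congrArg Subtype.val hk))
      simp [hV0]
  refine ⟨W * V, mul_mem hWu hVu, q, s, hq, hs, ?_, ?_⟩
  · rw [hρ'W, hρ'V, Matrix.star_mul]
    simp only [mul_assoc]
  · have hVs : V * cdiag s * star V = cdiag s := by
      rw [← hsV, mul_assoc, unitary_mul_star hVu, mul_one]
    rw [hσspec, Matrix.star_mul]
    calc W * cdiag s * star W
        = W * (V * cdiag s * star V) * star W := by rw [hVs]
      _ = W * V * cdiag s * (star V * star W) := by simp only [mul_assoc]

end SimulDiag

section Helpers2
set_option linter.unusedSectionVars false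
set_option maxHeartbeats 1000000

variable {n : Type*} [Fintype n] [DecidableEq n]

lemma one_mem_unitary : (1 : Matrix n n ℂ) ∈ Matrix.unitaryGroup n ℂ := by
  rw [Matrix.mem_unitaryGroup_iff]
  simp

lemma rpowH_cdiag (d : n → ℝ) (r : ℝ) :
    (cdiag (n := n) d).rpowH r = cdiag (fun i => d i ^ r) := by
  have h := rpowH_conj_cdiag (U := (1 : Matrix n n ℂ)) one_mem_unitary d r
  simpa using h

lemma unconj {U : Matrix n n ℂ} (hU : U ∈ Matrix.unitaryGroup n ℂ) (M : Matrix n n ℂ) :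
    star U * (U * M * star U) * U = M := by
  calc star U * (U * M * star U) * U
      = (star U * U) * M * (star U * U) := by simp only [mul_assoc]
    _ = M := by rw [unitary_star_mul hU]; simp

lemma unconj_posSemidef {U A : Matrix n n ℂ} (hA : A.PosSemidef) :
    (star U * A * U).PosSemidef := by
  have h := conj_posSemidef (U := star U) hA
  rwa [star_star] at h

lemma cdiag_conj_posSemidef {A : Matrix n n ℂ} (hA : A.PosSemidef) (d : n → ℝ) :
    (cdiag d * A * cdiag d).PosSemidef := by
  have h := hA.mul_mul_conjTranspose_same (cdiag d)
  rwa [(cdiag_herm d).eq] at h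

lemma cdiag_conj_herm {A : Matrix n n ℂ} (hA : A.IsHermitian) (d : n → ℝ) :
    (cdiag d * A * cdiag d).IsHermitian := by
  have h : (cdiag d * A * star (cdiag d)).IsHermitian := conj_herm hA
  rwa [Matrix.star_eq_conjTranspose, (cdiag_herm d).eq] at h

lemma herm_unconj {U A : Matrix n n ℂ} (hA : A.IsHermitian) :
    (star U * A * U).IsHermitian := by
  have h := conj_herm (U := star U) hA
  rwa [star_star] at h

lemma gmean_conj {U A : Matrix n n ℂ} (hU : U ∈ Matrix.unitaryGroup n ℂ)
    (hA : A.IsHermitian) (d : n → ℝ) (β : ℝ) :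
    Matrix.gmean β (U * cdiag d * star U) A
      = U * Matrix.gmean β (cdiag d) (star U * A * U) * star U := by
  unfold Matrix.gmean
  rw [rpowH_conj_cdiag hU, rpowH_conj_cdiag hU, rpowH_cdiag, rpowH_cdiag]
  have hmid : U * cdiag (fun i => d i ^ (-(1/2) : ℝ)) * star U * A
        * (U * cdiag (fun i => d i ^ (-(1/2) : ℝ)) * star U)
      = U * (cdiag (fun i => d i ^ (-(1/2) : ℝ)) * (star U * A * U)
        * cdiag (fun i => d i ^ (-(1/2) : ℝ))) * star U := by
    simp only [mul_assoc]
  have hM : (cdiag (fun i => d i ^ (-(1/2) : ℝ)) * (star U * A * U)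
      * cdiag (fun i => d i ^ (-(1/2) : ℝ))).IsHermitian :=
    cdiag_conj_herm (herm_unconj hA) _
  rw [hmid, rpowH_conj_herm hU hM, conj_mul_conj hU, conj_mul_conj hU]

lemma cdiag_trace_re (d : n → ℝ) : (cdiag (n := n) d).trace.re = ∑ i, d i := by
  simp [cdiag, Matrix.trace_diagonal, Complex.re_sum]

end Helpers2

section Helpers3
set_option linter.unusedSectionVars false
set_option maxHeartbeats 1000000

variable {n : Type*} [Fintype n] [DecidableEq n]

lemma conj_cdiag_entry (W : Matrix n n ℂ) (g : n → ℝ) (i : n) :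
    (W * cdiag g * star W) i i
      = ((∑ j, g j * Complex.normSq (W i j) : ℝ) : ℂ) := by
  rw [Matrix.mul_apply]
  push_cast
  refine Finset.sum_congr rfl fun j _ => ?_
  simp only [cdiag]
  rw [Matrix.mul_diagonal, Matrix.star_apply]
  calc W i j * (g j : ℂ) * star (W i j)
      = (g j : ℂ) * (W i j * star (W i j)) := by ring
    _ = (g j : ℂ) * (Complex.normSq (W i j) : ℂ) := by
        rw [Complex.star_def, Complex.mul_conj]

lemma weights_sum_one {W : Matrix n n ℂ} (hWu : W ∈ Matrix.unitaryGroup n ℂ) (i : n) :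
    ∑ j, Complex.normSq (W i j) = 1 := by
  have h0 : W * cdiag (fun _ => (1 : ℝ)) * star W = 1 := by
    have : cdiag (fun _ : n => (1 : ℝ)) = 1 := by
      simp [cdiag, Matrix.diagonal_one]
    rw [this, mul_one, unitary_mul_star hWu]
  have h1 := congrFun (congrFun h0 i) i
  rw [conj_cdiag_entry, Matrix.one_apply_eq] at h1
  have h2 : ((∑ j, Complex.normSq (W i j) : ℝ) : ℂ) = 1 := by
    simpa using h1
  exact_mod_cast h2

lemma rpowH_psd_entry {B : Matrix n n ℂ} (hB : B.PosSemidef) (r : ℝ) (i : n) :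
    (B.rpowH r) i i = ((∑ j, hB.1.eigenvalues j ^ r *
      Complex.normSq ((hB.1.eigenvectorUnitary : Matrix n n ℂ) i j) : ℝ) : ℂ) := by
  unfold Matrix.rpowH
  rw [dif_pos hB.1]
  exact conj_cdiag_entry _ _ i

lemma psd_entry_eq {B : Matrix n n ℂ} (hB : B.PosSemidef) (i : n) :
    B i i = ((∑ j, hB.1.eigenvalues j *
      Complex.normSq ((hB.1.eigenvectorUnitary : Matrix n n ℂ) i j) : ℝ) : ℂ) := by
  conv_lhs => rw [herm_spectral hB.1]
  exact conj_cdiag_entry _ _ i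

/-- Jensen inequality for diagonal entries of matrix powers (concave case). -/
lemma rpowH_diag_entry_le {B : Matrix n n ℂ} (hB : B.PosSemidef) {α : ℝ} (hα : 1 < α)
    (i : n) :
    ((B.rpowH (1/α)) i i).re ≤ ((B i i).re) ^ (1/α : ℝ) := by
  set μ : n → ℝ := hB.1.eigenvalues with hμdef
  have hμ : ∀ j, 0 ≤ μ j := hB.eigenvalues_nonneg
  set W : Matrix n n ℂ := (hB.1.eigenvectorUnitary : Matrix n n ℂ) with hWdef
  set w : n → ℝ := fun j => Complex.normSq (W i j) with hwdef
  have hw0 : ∀ j, 0 ≤ w j := fun j => Complex.normSq_nonneg _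
  have hw1 : ∑ j, w j = 1 := weights_sum_one hB.1.eigenvectorUnitary.2 i
  have e1 : ((B.rpowH (1/α)) i i).re = ∑ j, w j * μ j ^ (1/α : ℝ) := by
    rw [rpowH_psd_entry hB, Complex.ofReal_re]
    exact Finset.sum_congr rfl fun j _ => mul_comm _ _
  have e2 : ((B i i).re) = ∑ j, w j * μ j := by
    rw [psd_entry_eq hB, Complex.ofReal_re]
    exact Finset.sum_congr rfl fun j _ => mul_comm _ _
  rw [e1, e2]
  have hJ := Real.arith_mean_le_rpow_mean (s := Finset.univ) w (fun j => μ j ^ (1/α : ℝ))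
    (fun j _ => hw0 j) hw1 (fun j _ => Real.rpow_nonneg (hμ j) _) hα.le
  have hα0 : α ≠ 0 := by positivity
  have hz : ∀ j, (μ j ^ (1/α : ℝ)) ^ α = μ j := by
    intro j
    rw [← Real.rpow_mul (hμ j), one_div_mul_cancel hα0, Real.rpow_one]
  calc ∑ j, w j * μ j ^ (1/α : ℝ)
      ≤ (∑ j, w j * (μ j ^ (1/α : ℝ)) ^ α) ^ (1/α : ℝ) := hJ
    _ = (∑ j, w j * μ j) ^ (1/α : ℝ) := by simp only [hz]

end Helpers3

section MainHelpers
set_option linter.unusedSectionVars false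
variable {n : Type*} [Fintype n] [DecidableEq n]

lemma conj_unconj {U : Matrix n n ℂ} (hU : U ∈ Matrix.unitaryGroup n ℂ) (M : Matrix n n ℂ) :
    U * (star U * M * U) * star U = M := by
  calc U * (star U * M * U) * star U
      = (U * star U) * M * (U * star U) := by simp only [mul_assoc]
    _ = M := by rw [unitary_mul_star hU]; simp

lemma conj_diag_entry (M : Matrix n n ℂ) (a : n → ℝ) (i : n) :
    (cdiag a * M * cdiag a) i i = ((a i * a i : ℝ) : ℂ) * M i i := by
  simp only [cdiag, Matrix.diagonal_mul, Matrix.mul_diagonal]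
  push_cast
  ring

lemma trace_re_eq_sum (M : Matrix n n ℂ) : M.trace.re = ∑ i, (M i i).re := by
  simp [Matrix.trace, Matrix.diag, Complex.re_sum]

end MainHelpers

/-- for commuting ρ and σ, D^#_α coincides with the classical
α-Rényi divergence (1/(α−1))·log₂ tr(ρ^α σ^(1−α)). -/
theorem DSharp_commuting
    {n : Type*} [Fintype n] [DecidableEq n]
    (α : ℝ) (hα : 1 < α)
    (ρ σ : Matrix n n ℂ) (hρ : ρ.PosSemidef) (hρ0 : ρ ≠ 0) (hσ : σ.PosDef)
    (hcomm : ρ * σ = σ * ρ) :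
    DSharp α ρ σ = 1/(α-1) * Real.logb 2 ((ρ.rpowH α * σ.rpowH (1-α)).trace.re) := by
  obtain ⟨U, hU, p, s, hp, hs, hρU, hσU⟩ := simul_diag hρ hσ hcomm
  have hα0 : (0:ℝ) < α := lt_trans one_pos hα
  have hαne : α ≠ 0 := ne_of_gt hα0
  set c : n → ℝ := fun i => p i ^ α * s i ^ (1-α) with hcdef
  have hc0 : ∀ i, 0 ≤ c i := fun i =>
    mul_nonneg (Real.rpow_nonneg (hp i) _) (Real.rpow_nonneg (hs i).le _)
  set Q : ℝ := ∑ i, c i with hQdef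
  -- scalar computation
  have hscal : ∀ i, s i ^ (1/2 : ℝ)
      * ((s i ^ (-(1/2) : ℝ) * c i * s i ^ (-(1/2) : ℝ)) ^ (1/α))
      * s i ^ (1/2 : ℝ) = p i := by
    intro i
    have hyp := hs i
    have hxp := hp i
    have h1 : s i ^ (-(1/2) : ℝ) * c i * s i ^ (-(1/2) : ℝ) = p i ^ α * s i ^ (-α) := by
      show s i ^ (-(1/2) : ℝ) * (p i ^ α * s i ^ (1-α)) * s i ^ (-(1/2) : ℝ) = _
      rw [show s i ^ (-(1/2) : ℝ) * (p i ^ α * s i ^ (1-α)) * s i ^ (-(1/2) : ℝ)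
          = p i ^ α * (s i ^ (-(1/2) : ℝ) * s i ^ (1-α) * s i ^ (-(1/2) : ℝ)) from by ring,
        ← Real.rpow_add hyp, ← Real.rpow_add hyp,
        show (-(1/2) + (1-α) + -(1/2) : ℝ) = -α from by ring]
    have h2 : (p i ^ α * s i ^ (-α)) ^ (1/α : ℝ) = p i * s i ^ (-1 : ℝ) := by
      rw [Real.mul_rpow (Real.rpow_nonneg hxp _) (Real.rpow_nonneg hyp.le _),
        ← Real.rpow_mul hxp, ← Real.rpow_mul hyp.le,
        mul_one_div_cancel hαne,
        show (-α * (1/α) : ℝ) = -1 from by rw [neg_mul, mul_one_div_cancel hαne],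
        Real.rpow_one]
    rw [h1, h2,
      show s i ^ (1/2 : ℝ) * (p i * s i ^ (-1 : ℝ)) * s i ^ (1/2 : ℝ)
        = p i * (s i ^ (1/2 : ℝ) * s i ^ (-1 : ℝ) * s i ^ (1/2 : ℝ)) from by ring,
      ← Real.rpow_add hyp, ← Real.rpow_add hyp,
      show (1/2 + -1 + 1/2 : ℝ) = 0 from by norm_num,
      Real.rpow_zero, mul_one]
  -- upper bound witness
  set A₀ : Matrix n n ℂ := U * cdiag c * star U with hA₀def
  have hA₀psd : A₀.PosSemidef := conj_posSemidef (cdiag_posSemidef hc0)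
  have hgm : Matrix.gmean (1/α) σ A₀ = ρ := by
    rw [hσU, gmean_conj hU hA₀psd.1, hA₀def, unconj hU]
    have hgd : Matrix.gmean (1/α) (cdiag s) (cdiag c) = cdiag p := by
      unfold Matrix.gmean
      simp only [rpowH_cdiag, cdiag_mul]
      rw [show (fun i => s i ^ (1/2 : ℝ)
          * ((s i ^ (-(1/2) : ℝ) * c i * s i ^ (-(1/2) : ℝ)) ^ (1/α))
          * s i ^ (1/2 : ℝ)) = p from funext hscal]
    rw [hgd, ← hρU]
  have htrA₀ : A₀.trace.re = Q := by
    rw [hA₀def]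
    have := congrArg Complex.re (conj_trace hU (cdiag c))
    rw [this, cdiag_trace_re]
  have hmem : Q ∈ { t : ℝ | ∃ A : Matrix n n ℂ, A.PosSemidef ∧
      (Matrix.gmean (1/α) σ A - ρ).PosSemidef ∧ t = A.trace.re } :=
    ⟨A₀, hA₀psd, by rw [hgm, sub_self]; exact Matrix.PosSemidef.zero, htrA₀.symm⟩
  -- lower bound
  have hlow : ∀ t ∈ { t : ℝ | ∃ A : Matrix n n ℂ, A.PosSemidef ∧
      (Matrix.gmean (1/α) σ A - ρ).PosSemidef ∧ t = A.trace.re }, Q ≤ t := by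
    rintro t ⟨A, hA, hge, rfl⟩
    set A' := star U * A * U with hA'def
    have hA'psd : A'.PosSemidef := unconj_posSemidef hA
    set B := cdiag (fun i => s i ^ (-(1/2) : ℝ)) * A' * cdiag (fun i => s i ^ (-(1/2) : ℝ))
      with hBdef
    have hBpsd : B.PosSemidef := cdiag_conj_posSemidef hA'psd _
    have hgmA : Matrix.gmean (1/α) (cdiag s) A'
        = cdiag (fun i => s i ^ (1/2 : ℝ)) * B.rpowH (1/α)
          * cdiag (fun i => s i ^ (1/2 : ℝ)) := by
      unfold Matrix.gmean
      simp only [rpowH_cdiag]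
      rfl
    have hge' : (cdiag (fun i => s i ^ (1/2 : ℝ)) * B.rpowH (1/α)
        * cdiag (fun i => s i ^ (1/2 : ℝ)) - cdiag p).PosSemidef := by
      have hid : Matrix.gmean (1/α) σ A - ρ
          = U * (Matrix.gmean (1/α) (cdiag s) A' - cdiag p) * star U := by
        rw [hσU, gmean_conj hU hA.1, hρU, hA'def, Matrix.mul_sub, Matrix.sub_mul]
      have h2 := posSemidef_of_conj hU (by rw [← hid]; exact hge)
      rwa [hgmA] at h2
    have hhalf : ∀ i, s i ^ (1/2 : ℝ) * s i ^ (1/2 : ℝ) = s i := by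
      intro i
      rw [← Real.rpow_add (hs i), show (1/2 + 1/2 : ℝ) = 1 from by norm_num, Real.rpow_one]
    have hkey : ∀ i, c i ≤ s i * (B i i).re := by
      intro i
      have h0 := psd_diag_re_nonneg hge' i
      have hBre0 : 0 ≤ (B i i).re := psd_diag_re_nonneg hBpsd i
      have hXre : ((cdiag (fun i => s i ^ (1/2 : ℝ)) * B.rpowH (1/α)
          * cdiag (fun i => s i ^ (1/2 : ℝ))) i i).re
          = s i * ((B.rpowH (1/α)) i i).re := by
        rw [conj_diag_entry, Complex.re_ofReal_mul]
        congr 1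
        exact hhalf i
      have h1 : p i ≤ s i * ((B.rpowH (1/α)) i i).re := by
        rw [Matrix.sub_apply, Complex.sub_re, hXre] at h0
        have hpe : ((cdiag p) i i).re = p i := by simp [cdiag]
        rw [hpe] at h0
        linarith
      have h2 : ((B.rpowH (1/α)) i i).re ≤ ((B i i).re) ^ (1/α : ℝ) :=
        rpowH_diag_entry_le hBpsd hα i
      have h3 : p i ≤ s i * ((B i i).re) ^ (1/α : ℝ) :=
        le_trans h1 (mul_le_mul_of_nonneg_left h2 (hs i).le)
      have h4 : p i / s i ≤ ((B i i).re) ^ (1/α : ℝ) := by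
        rw [div_le_iff₀ (hs i)]
        nlinarith [h3]
      have h5 : (p i / s i) ^ α ≤ (B i i).re := by
        have h6 := Real.rpow_le_rpow (div_nonneg (hp i) (hs i).le) h4 hα0.le
        rwa [← Real.rpow_mul hBre0, one_div_mul_cancel hαne, Real.rpow_one] at h6
      have h7 : c i = s i * (p i / s i) ^ α := by
        show p i ^ α * s i ^ (1-α) = _
        rw [Real.div_rpow (hp i) (hs i).le, Real.rpow_sub (hs i), Real.rpow_one]
        ring
      rw [h7]
      exact mul_le_mul_of_nonneg_left h5 (hs i).le
    have hAc : A = U * A' * star U := by rw [hA'def, conj_unconj hU]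
    have hA'B : A' = cdiag (fun i => s i ^ (1/2 : ℝ)) * B
        * cdiag (fun i => s i ^ (1/2 : ℝ)) := by
      rw [hBdef,
        show cdiag (fun i => s i ^ (1/2 : ℝ))
            * (cdiag (fun i => s i ^ (-(1/2) : ℝ)) * A' * cdiag (fun i => s i ^ (-(1/2) : ℝ)))
            * cdiag (fun i => s i ^ (1/2 : ℝ))
          = (cdiag (fun i => s i ^ (1/2 : ℝ)) * cdiag (fun i => s i ^ (-(1/2) : ℝ))) * A'
            * (cdiag (fun i => s i ^ (-(1/2) : ℝ)) * cdiag (fun i => s i ^ (1/2 : ℝ)))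
          from by simp only [mul_assoc], cdiag_mul, cdiag_mul]
      have hone : (fun i => s i ^ (1/2 : ℝ) * s i ^ (-(1/2) : ℝ)) = fun _ : n => (1:ℝ) := by
        funext i
        rw [← Real.rpow_add (hs i), show (1/2 + -(1/2) : ℝ) = 0 from by norm_num,
          Real.rpow_zero]
      have hone' : (fun i => s i ^ (-(1/2) : ℝ) * s i ^ (1/2 : ℝ)) = fun _ : n => (1:ℝ) := by
        funext i
        rw [← Real.rpow_add (hs i), show (-(1/2) + 1/2 : ℝ) = 0 from by norm_num,
          Real.rpow_zero]
      rw [hone, hone', show cdiag (fun _ : n => (1:ℝ)) = 1 from by simp [cdiag], one_mul,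
        mul_one]
    have htr : A.trace.re = ∑ i, s i * (B i i).re := by
      rw [hAc]
      have := congrArg Complex.re (conj_trace hU A')
      rw [this, hA'B, trace_re_eq_sum]
      refine Finset.sum_congr rfl fun i _ => ?_
      rw [conj_diag_entry, Complex.re_ofReal_mul, hhalf i]
    rw [htr, hQdef]
    exact Finset.sum_le_sum fun i _ => hkey i
  have hset : QSharp α ρ σ = Q := by
    unfold QSharp
    exact le_antisymm (csInf_le ⟨Q, fun t ht => hlow t ht⟩ hmem) (le_csInf ⟨Q, hmem⟩ hlow)
  have hRHS : (ρ.rpowH α * σ.rpowH (1-α)).trace.re = Q := by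
    rw [hρU, hσU, rpowH_conj_cdiag hU, rpowH_conj_cdiag hU, conj_mul_conj hU, cdiag_mul]
    have := congrArg Complex.re (conj_trace hU (cdiag fun i => p i ^ α * s i ^ (1-α)))
    rw [this, cdiag_trace_re]
  unfold DSharp
  rw [hset, hRHS]
end

section
/- Let α ∈ (1,∞). Let ρ₁, ρ₂ be positive semidefinite complex matrices and σ₁, σ₂ positive definite complex matrices, with ρ₁, σ₁ of the same size and ρ₂, σ₂ of the same size. Then Q^#_α(ρ₁ ⊗ ρ₂ ‖ σ₁ ⊗ σ₂) ≤ Q^#_α(ρ₁‖σ₁) · Q^#_α(ρ₂‖σ₂), where ⊗ denotes the Kronecker product; equivalently, D^#_α is subadditive under tensor products. -/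
open Matrix Filter
open scoped Kronecker Classical ComplexOrder

set_option linter.unusedSectionVars false

namespace Matrix
variable {n : Type*} [Fintype n] [DecidableEq n]

lemma rpowH_def {A : Matrix n n ℂ} (hA : A.IsHermitian) (r : ℝ) :
    A.rpowH r = (hA.eigenvectorUnitary : Matrix n n ℂ) *
      Matrix.diagonal (fun i => ((hA.eigenvalues i ^ r : ℝ) : ℂ)) *
      (hA.eigenvectorUnitary : Matrix n n ℂ)ᴴ := by
  rw [Matrix.rpowH, dif_pos hA, star_eq_conjTranspose]

lemma spectral' {A : Matrix n n ℂ} (hA : A.IsHermitian) :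
    A = (hA.eigenvectorUnitary : Matrix n n ℂ) *
      Matrix.diagonal (fun i => ((hA.eigenvalues i : ℝ) : ℂ)) *
      (hA.eigenvectorUnitary : Matrix n n ℂ)ᴴ := by
  rw [← star_eq_conjTranspose]; exact hA.spectral_theorem

lemma diagonal_real_conjTranspose (d : n → ℝ) :
    (Matrix.diagonal (fun i => (d i : ℂ)))ᴴ = Matrix.diagonal (fun i => (d i : ℂ)) := by
  ext i j
  by_cases h : i = j
  · subst h; simp [Matrix.conjTranspose_apply, Matrix.diagonal_apply_eq, Complex.conj_ofReal]
  · simp [Matrix.conjTranspose_apply, Matrix.diagonal_apply_ne _ h,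
      Matrix.diagonal_apply_ne _ (Ne.symm h)]

lemma isHermitian_decomp (U : Matrix n n ℂ) (d : n → ℝ) :
    (U * Matrix.diagonal (fun i => (d i : ℂ)) * Uᴴ).IsHermitian := by
  simp only [Matrix.IsHermitian, conjTranspose_mul, conjTranspose_conjTranspose,
    diagonal_real_conjTranspose, Matrix.mul_assoc]

/-- Functional calculus is independent of the chosen spectral decomposition. -/
lemma rpowH_eq_decomp {A U : Matrix n n ℂ} {d : n → ℝ}
    (hU1 : U * Uᴴ = 1) (hU2 : Uᴴ * U = 1)
    (hAd : A = U * Matrix.diagonal (fun i => (d i : ℂ)) * Uᴴ) (r : ℝ) :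
    A.rpowH r = U * Matrix.diagonal (fun i => ((d i ^ r : ℝ) : ℂ)) * Uᴴ := by
  have hA : A.IsHermitian := hAd ▸ isHermitian_decomp U d
  set V : Matrix n n ℂ := (hA.eigenvectorUnitary : Matrix n n ℂ) with hVdef
  have hVmem : V ∈ Matrix.unitaryGroup n ℂ := hA.eigenvectorUnitary.2
  have hV1 : V * Vᴴ = 1 := by
    rw [← star_eq_conjTranspose]; exact Matrix.mem_unitaryGroup_iff.mp hVmem
  have hV2 : Vᴴ * V = 1 := by
    rw [← star_eq_conjTranspose]; exact Matrix.mem_unitaryGroup_iff'.mp hVmem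
  set e : n → ℝ := hA.eigenvalues with hedef
  set W : Matrix n n ℂ := Vᴴ * U with hWdef
  have hAe : A = V * Matrix.diagonal (fun i => (e i : ℂ)) * Vᴴ := spectral' hA
  have hswap : Matrix.diagonal (fun i => (e i : ℂ)) * W
      = W * Matrix.diagonal (fun i => (d i : ℂ)) := by
    have h := hAe.symm.trans hAd
    calc Matrix.diagonal (fun i => (e i : ℂ)) * W
        = Vᴴ * (V * Matrix.diagonal (fun i => (e i : ℂ)) * Vᴴ) * U := by
          rw [hWdef, show Vᴴ * (V * Matrix.diagonal (fun i => (e i : ℂ)) * Vᴴ) * U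
            = (Vᴴ * V) * Matrix.diagonal (fun i => (e i : ℂ)) * (Vᴴ * U) by
              simp only [Matrix.mul_assoc], hV2, Matrix.one_mul]
      _ = Vᴴ * (U * Matrix.diagonal (fun i => (d i : ℂ)) * Uᴴ) * U := by rw [h]
      _ = W * Matrix.diagonal (fun i => (d i : ℂ)) := by
          rw [hWdef, show Vᴴ * (U * Matrix.diagonal (fun i => (d i : ℂ)) * Uᴴ) * U
            = (Vᴴ * U) * Matrix.diagonal (fun i => (d i : ℂ)) * (Uᴴ * U) by
              simp only [Matrix.mul_assoc], hU2, Matrix.mul_one]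
  have hswap' : Matrix.diagonal (fun i => ((e i ^ r : ℝ) : ℂ)) * W
      = W * Matrix.diagonal (fun i => ((d i ^ r : ℝ) : ℂ)) := by
    ext i j
    have hij := congrFun (congrFun hswap i) j
    simp only [Matrix.diagonal_mul, Matrix.mul_diagonal] at hij ⊢
    rcases eq_or_ne (W i j) 0 with h0 | h0
    · simp [h0]
    · have hij' : W i j * (e i : ℂ) = W i j * (d j : ℂ) := by
        rw [mul_comm (W i j)]; exact hij
      have hed : e i = d j := by
        have := mul_left_cancel₀ h0 hij'
        exact_mod_cast this
      rw [hed, mul_comm]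
  have hUVW : V * W = U := by
    rw [hWdef, ← Matrix.mul_assoc, hV1, Matrix.one_mul]
  have hWW : W * Wᴴ = 1 := by
    rw [hWdef, conjTranspose_mul, conjTranspose_conjTranspose]
    calc Vᴴ * U * (Uᴴ * V) = Vᴴ * (U * Uᴴ) * V := by simp only [Matrix.mul_assoc]
      _ = 1 := by rw [hU1, Matrix.mul_one, hV2]
  rw [rpowH_def hA r]
  show V * Matrix.diagonal (fun i => ((e i ^ r : ℝ) : ℂ)) * Vᴴ
      = U * Matrix.diagonal (fun i => ((d i ^ r : ℝ) : ℂ)) * Uᴴ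
  calc V * Matrix.diagonal (fun i => ((e i ^ r : ℝ) : ℂ)) * Vᴴ
      = V * (Matrix.diagonal (fun i => ((e i ^ r : ℝ) : ℂ)) * (W * Wᴴ)) * Vᴴ := by
        rw [hWW, Matrix.mul_one]
    _ = V * (Matrix.diagonal (fun i => ((e i ^ r : ℝ) : ℂ)) * W) * (Wᴴ * Vᴴ) := by
        simp only [Matrix.mul_assoc]
    _ = V * (W * Matrix.diagonal (fun i => ((d i ^ r : ℝ) : ℂ))) * (Wᴴ * Vᴴ) := by
        rw [hswap']
    _ = (V * W) * Matrix.diagonal (fun i => ((d i ^ r : ℝ) : ℂ)) * (V * W)ᴴ := by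
        conv_rhs => rw [conjTranspose_mul]
        simp only [Matrix.mul_assoc]
    _ = U * Matrix.diagonal (fun i => ((d i ^ r : ℝ) : ℂ)) * Uᴴ := by rw [hUVW]


lemma kron_conjTranspose {m : Type*} (A : Matrix n n ℂ) (B : Matrix m m ℂ) :
    (A ⊗ₖ B)ᴴ = Aᴴ ⊗ₖ Bᴴ := by
  ext ⟨i, j⟩ ⟨k, l⟩
  simp [conjTranspose_apply, kroneckerMap_apply, star_mul']

lemma kron_sub {m : Type*} (A : Matrix n n ℂ) (B C : Matrix m m ℂ) :
    A ⊗ₖ (B - C) = A ⊗ₖ B - A ⊗ₖ C := by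
  ext ⟨i, j⟩ ⟨k, l⟩
  simp [kroneckerMap_apply, mul_sub]

lemma sub_kron {m : Type*} (A B : Matrix n n ℂ) (C : Matrix m m ℂ) :
    (A - B) ⊗ₖ C = A ⊗ₖ C - B ⊗ₖ C := by
  ext ⟨i, j⟩ ⟨k, l⟩
  simp [kroneckerMap_apply, sub_mul]

lemma PosSemidef.kron {m : Type*} [Fintype m] [DecidableEq m]
    {A : Matrix n n ℂ} {B : Matrix m m ℂ}
    (hA : A.PosSemidef) (hB : B.PosSemidef) : (A ⊗ₖ B).PosSemidef := by
  exact hA.kronecker hB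

lemma diag_entry_nonneg {A : Matrix n n ℂ} (hA : A.PosSemidef) (i : n) :
    0 ≤ A i i := by
  have h := hA.dotProduct_mulVec_nonneg (Pi.single i 1)
  simpa [dotProduct, Pi.single_apply, apply_ite (star : ℂ → ℂ)] using h

lemma trace_re_nonneg_im_zero {A : Matrix n n ℂ} (hA : A.PosSemidef) :
    0 ≤ A.trace.re ∧ A.trace.im = 0 := by
  have h : (0 : ℂ) ≤ A.trace := Finset.sum_nonneg fun i _ => diag_entry_nonneg hA i
  rw [Complex.le_def] at h
  simpa using ⟨h.1, h.2.symm⟩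

end Matrix

namespace Matrix
section
variable {n : Type*} [Fintype n] [DecidableEq n]

lemma eigU_mul_conj {A : Matrix n n ℂ} (hA : A.IsHermitian) :
    (hA.eigenvectorUnitary : Matrix n n ℂ) * (hA.eigenvectorUnitary : Matrix n n ℂ)ᴴ = 1 := by
  rw [← star_eq_conjTranspose]
  exact Matrix.mem_unitaryGroup_iff.mp hA.eigenvectorUnitary.2

lemma conj_mul_eigU {A : Matrix n n ℂ} (hA : A.IsHermitian) :
    (hA.eigenvectorUnitary : Matrix n n ℂ)ᴴ * (hA.eigenvectorUnitary : Matrix n n ℂ) = 1 := by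
  rw [← star_eq_conjTranspose]
  exact Matrix.mem_unitaryGroup_iff'.mp hA.eigenvectorUnitary.2

lemma rpowH_isHermitian {A : Matrix n n ℂ} (hA : A.IsHermitian) (r : ℝ) :
    (A.rpowH r).IsHermitian := by
  rw [rpowH_def hA r]; exact isHermitian_decomp _ _

lemma rpowH_kron {m : Type*} [Fintype m] [DecidableEq m]
    {A : Matrix n n ℂ} {B : Matrix m m ℂ}
    (hA : A.PosSemidef) (hB : B.PosSemidef) (r : ℝ) :
    (A ⊗ₖ B).rpowH r = (A.rpowH r) ⊗ₖ (B.rpowH r) := by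
  set U : Matrix n n ℂ := (hA.1.eigenvectorUnitary : Matrix n n ℂ) with hUdef
  set V : Matrix m m ℂ := (hB.1.eigenvectorUnitary : Matrix m m ℂ) with hVdef
  set e : n → ℝ := hA.1.eigenvalues with hedef
  set f : m → ℝ := hB.1.eigenvalues with hfdef
  have hK1 : (U ⊗ₖ V) * (U ⊗ₖ V)ᴴ = 1 := by
    rw [kron_conjTranspose, ← Matrix.mul_kronecker_mul, eigU_mul_conj hA.1,
      eigU_mul_conj hB.1, Matrix.one_kronecker_one]
  have hK2 : (U ⊗ₖ V)ᴴ * (U ⊗ₖ V) = 1 := by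
    rw [kron_conjTranspose, ← Matrix.mul_kronecker_mul, conj_mul_eigU hA.1,
      conj_mul_eigU hB.1, Matrix.one_kronecker_one]
  have hdecomp : A ⊗ₖ B = (U ⊗ₖ V) *
      Matrix.diagonal (fun p : n × m => ((e p.1 * f p.2 : ℝ) : ℂ)) * (U ⊗ₖ V)ᴴ := by
    conv_lhs => rw [spectral' hA.1, spectral' hB.1]
    rw [Matrix.mul_kronecker_mul, Matrix.mul_kronecker_mul, ← kron_conjTranspose,
      Matrix.diagonal_kronecker_diagonal,
      show (fun p : n × m => ((e p.1 : ℝ) : ℂ) * ((f p.2 : ℝ) : ℂ))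
        = fun p : n × m => ((e p.1 * f p.2 : ℝ) : ℂ) from funext fun p => by push_cast; ring]
  rw [rpowH_eq_decomp hK1 hK2 hdecomp r, rpowH_def hA.1 r, rpowH_def hB.1 r,
    Matrix.mul_kronecker_mul, Matrix.mul_kronecker_mul, ← kron_conjTranspose,
    Matrix.diagonal_kronecker_diagonal,
    show (fun p : n × m => ((e p.1 ^ r : ℝ) : ℂ) * ((f p.2 ^ r : ℝ) : ℂ))
      = fun p : n × m => (((e p.1 * f p.2 : ℝ) ^ r : ℝ) : ℂ) from funext fun p => by
        rw [Real.mul_rpow (hA.eigenvalues_nonneg p.1) (hB.eigenvalues_nonneg p.2)]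
        push_cast; ring]

lemma rpowH_mul_rpowH {A : Matrix n n ℂ} (hA : A.PosDef) (a b : ℝ) :
    A.rpowH a * A.rpowH b = A.rpowH (a + b) := by
  rw [rpowH_def hA.1 a, rpowH_def hA.1 b, rpowH_def hA.1 (a + b)]
  set U : Matrix n n ℂ := (hA.1.eigenvectorUnitary : Matrix n n ℂ) with hUdef
  set e : n → ℝ := hA.1.eigenvalues with hedef
  have h2 : Uᴴ * U = 1 := conj_mul_eigU hA.1
  calc U * Matrix.diagonal (fun i => ((e i ^ a : ℝ) : ℂ)) * Uᴴ *
        (U * Matrix.diagonal (fun i => ((e i ^ b : ℝ) : ℂ)) * Uᴴ)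
      = U * (Matrix.diagonal (fun i => ((e i ^ a : ℝ) : ℂ)) * (Uᴴ * U) *
          Matrix.diagonal (fun i => ((e i ^ b : ℝ) : ℂ))) * Uᴴ := by
        simp only [Matrix.mul_assoc]
    _ = U * (Matrix.diagonal (fun i => ((e i ^ a : ℝ) : ℂ)) *
          Matrix.diagonal (fun i => ((e i ^ b : ℝ) : ℂ))) * Uᴴ := by
        rw [h2, Matrix.mul_one]
    _ = U * Matrix.diagonal (fun i => ((e i ^ (a + b) : ℝ) : ℂ)) * Uᴴ := by
        rw [Matrix.diagonal_mul_diagonal,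
          show (fun i => ((e i ^ a : ℝ) : ℂ) * ((e i ^ b : ℝ) : ℂ))
            = fun i => ((e i ^ (a + b) : ℝ) : ℂ) from funext fun i => by
              rw [Real.rpow_add (hA.eigenvalues_pos i)]; push_cast; ring]

lemma rpowH_zero {A : Matrix n n ℂ} (hA : A.IsHermitian) : A.rpowH 0 = 1 := by
  rw [rpowH_def hA 0]
  simp only [Real.rpow_zero, Complex.ofReal_one, Matrix.diagonal_one, Matrix.mul_one]
  exact eigU_mul_conj hA

lemma rpowH_one {A : Matrix n n ℂ} (hA : A.IsHermitian) : A.rpowH 1 = A := by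
  rw [rpowH_def hA 1]
  simp only [Real.rpow_one]
  exact (spectral' hA).symm

lemma rpowH_half_mul_self_mul {A : Matrix n n ℂ} (hA : A.PosDef) :
    A.rpowH (-(1/2)) * A * A.rpowH (-(1/2)) = 1 := by
  have h1 : A * A.rpowH (-(1/2)) = A.rpowH (1/2) := by
    have h := rpowH_mul_rpowH hA 1 (-(1/2))
    rw [rpowH_one hA.1] at h
    rw [h]; norm_num
  rw [Matrix.mul_assoc, h1, rpowH_mul_rpowH hA]
  norm_num
  exact rpowH_zero hA.1

lemma rpowH_half_cancel {A : Matrix n n ℂ} (hA : A.PosDef) :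
    A.rpowH (1/2) * A.rpowH (-(1/2)) = 1 := by
  rw [rpowH_mul_rpowH hA]
  norm_num
  exact rpowH_zero hA.1

lemma rpowH_neghalf_cancel {A : Matrix n n ℂ} (hA : A.PosDef) :
    A.rpowH (-(1/2)) * A.rpowH (1/2) = 1 := by
  rw [rpowH_mul_rpowH hA]
  norm_num
  exact rpowH_zero hA.1

lemma rpowH_half_mul_half {A : Matrix n n ℂ} (hA : A.PosDef) :
    A.rpowH (1/2) * A.rpowH (1/2) = A := by
  rw [rpowH_mul_rpowH hA]
  norm_num
  exact rpowH_one hA.1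

end
end Matrix

namespace Matrix
variable {n : Type*} [Fintype n] [DecidableEq n]

lemma rpowH_smul_one (c : ℝ) (r : ℝ) :
    (((c : ℂ) • 1 : Matrix n n ℂ)).rpowH r = ((c ^ r : ℝ) : ℂ) • (1 : Matrix n n ℂ) := by
  have hd : ((c : ℂ) • 1 : Matrix n n ℂ)
      = 1 * Matrix.diagonal (fun _ : n => (c : ℂ)) * (1 : Matrix n n ℂ)ᴴ := by
    rw [Matrix.smul_one_eq_diagonal]
    simp
  rw [rpowH_eq_decomp (by simp) (by simp) hd r, Matrix.smul_one_eq_diagonal]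
  simp

lemma sub_smul_one_posSemidef {M : Matrix n n ℂ} (hM : M.PosSemidef) :
    ∃ c : ℝ, 0 < c ∧ (((c : ℂ) • 1 - M) : Matrix n n ℂ).PosSemidef := by
  set U : Matrix n n ℂ := (hM.1.eigenvectorUnitary : Matrix n n ℂ) with hUdef
  set e : n → ℝ := hM.1.eigenvalues with hedef
  set c : ℝ := (∑ i, e i) + 1 with hcdef
  have hnn : ∀ i, 0 ≤ e i := fun i => hM.eigenvalues_nonneg i
  have hce : ∀ i, e i ≤ ∑ j, e j := fun i =>
    Finset.single_le_sum (fun j _ => hnn j) (Finset.mem_univ i)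
  have hsum : 0 ≤ ∑ i, e i := Finset.sum_nonneg fun i _ => hnn i
  have hc : 0 < c := by rw [hcdef]; linarith
  refine ⟨c, hc, ?_⟩
  have hdecomp : ((c : ℂ) • 1 - M : Matrix n n ℂ)
      = U * Matrix.diagonal (fun i => ((c - e i : ℝ) : ℂ)) * Uᴴ := by
    have h1 : ((c : ℂ) • 1 : Matrix n n ℂ) = U * Matrix.diagonal (fun _ : n => (c : ℂ)) * Uᴴ := by
      rw [← Matrix.smul_one_eq_diagonal, mul_smul_comm, smul_mul_assoc, Matrix.mul_one,
        eigU_mul_conj hM.1]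
    have h2 : Matrix.diagonal (fun i => ((c - e i : ℝ) : ℂ))
        = Matrix.diagonal (fun _ : n => (c : ℂ)) - Matrix.diagonal (fun i => (e i : ℂ)) := by
      rw [Matrix.diagonal_sub]
      congr 1
      funext i
      push_cast
      ring
    rw [h2, Matrix.mul_sub, Matrix.sub_mul, ← h1]
    conv_lhs => rw [spectral' hM.1]
  rw [hdecomp]
  refine Matrix.PosSemidef.mul_mul_conjTranspose_same (Matrix.PosSemidef.diagonal ?_) U
  intro i
  rw [Pi.zero_apply]
  rw [Complex.zero_le_real]
  have := hce i
  rw [hcdef]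
  linarith

lemma smul_posSemidef {c : ℝ} (hc : 0 ≤ c) {A : Matrix n n ℂ} (hA : A.PosSemidef) :
    (((c : ℂ) • A)).PosSemidef := by
  refine Matrix.PosSemidef.of_dotProduct_mulVec_nonneg ?_ ?_
  · rw [Matrix.IsHermitian, conjTranspose_smul, hA.1.eq]
    congr 1
    simp [Complex.star_def, Complex.conj_ofReal]
  · intro x
    rw [Matrix.smul_mulVec, dotProduct_smul]
    exact smul_nonneg (by exact_mod_cast Complex.zero_le_real.mpr hc) (hA.dotProduct_mulVec_nonneg x)

/-- Feasibility: the defining set of `QSharp` is nonempty. -/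
lemma qsharp_set_nonempty {α : ℝ} (hα : 1 < α) {ρ σ : Matrix n n ℂ}
    (hρ : ρ.PosSemidef) (hσ : σ.PosDef) :
    { t : ℝ | ∃ A : Matrix n n ℂ, A.PosSemidef ∧
      (Matrix.gmean (1/α) σ A - ρ).PosSemidef ∧ t = A.trace.re }.Nonempty := by
  have hR : (σ.rpowH (-(1/2))).IsHermitian := rpowH_isHermitian hσ.1 _
  set M : Matrix n n ℂ := σ.rpowH (-(1/2)) * ρ * σ.rpowH (-(1/2)) with hMdef
  have hM : M.PosSemidef := by
    have := hρ.mul_mul_conjTranspose_same (σ.rpowH (-(1/2)))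
    rwa [hR.eq] at this
  obtain ⟨c, hc, hsub⟩ := sub_smul_one_posSemidef hM
  set A : Matrix n n ℂ := ((c ^ α : ℝ) : ℂ) • σ with hAdef
  have hα0 : (0:ℝ) < α := by linarith
  have hA : A.PosSemidef := smul_posSemidef (Real.rpow_nonneg hc.le α) hσ.posSemidef
  have hinner : σ.rpowH (-(1/2)) * A * σ.rpowH (-(1/2)) = ((c ^ α : ℝ) : ℂ) • (1 : Matrix n n ℂ) := by
    rw [hAdef, mul_smul_comm, smul_mul_assoc, rpowH_half_mul_self_mul hσ]
  have hpow : ((c ^ α : ℝ) ^ (1/α) : ℝ) = c := by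
    rw [← Real.rpow_mul hc.le, mul_one_div_cancel (ne_of_gt hα0), Real.rpow_one]
  have hgm : Matrix.gmean (1/α) σ A = (c : ℂ) • σ := by
    rw [Matrix.gmean, hinner, rpowH_smul_one, hpow, mul_smul_comm, smul_mul_assoc,
      Matrix.mul_one, rpowH_half_mul_half hσ]
  refine ⟨A.trace.re, A, hA, ?_, rfl⟩
  have hρeq : σ.rpowH (1/2) * M * σ.rpowH (1/2) = ρ := by
    rw [hMdef]
    calc σ.rpowH (1/2) * (σ.rpowH (-(1/2)) * ρ * σ.rpowH (-(1/2))) * σ.rpowH (1/2)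
        = (σ.rpowH (1/2) * σ.rpowH (-(1/2))) * ρ * (σ.rpowH (-(1/2)) * σ.rpowH (1/2)) := by
          simp only [Matrix.mul_assoc]
      _ = ρ := by rw [rpowH_half_cancel hσ, rpowH_neghalf_cancel hσ, Matrix.one_mul,
          Matrix.mul_one]
  have hkey : Matrix.gmean (1/α) σ A - ρ
      = σ.rpowH (1/2) * ((c : ℂ) • 1 - M) * σ.rpowH (1/2) := by
    rw [Matrix.mul_sub, Matrix.sub_mul, hρeq, hgm, mul_smul_comm, smul_mul_assoc,
      Matrix.mul_one, rpowH_half_mul_half hσ]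
  rw [hkey]
  have hhalf : (σ.rpowH (1/2)).IsHermitian := rpowH_isHermitian hσ.1 _
  have := hsub.mul_mul_conjTranspose_same (σ.rpowH (1/2))
  rwa [hhalf.eq] at this

end Matrix

namespace Matrix

lemma hermitian_conj_posSemidef {n : Type*} [Fintype n] [DecidableEq n]
    {R A : Matrix n n ℂ} (hR : R.IsHermitian) (hA : A.PosSemidef) :
    (R * A * R).PosSemidef := by
  have := hA.mul_mul_conjTranspose_same R
  rwa [hR.eq] at this

lemma gmean_kron {n₁ n₂ : Type*} [Fintype n₁] [DecidableEq n₁] [Fintype n₂] [DecidableEq n₂]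
    (β : ℝ) {σ₁ A₁ : Matrix n₁ n₁ ℂ} {σ₂ A₂ : Matrix n₂ n₂ ℂ}
    (hσ₁ : σ₁.PosDef) (hσ₂ : σ₂.PosDef) (hA₁ : A₁.PosSemidef) (hA₂ : A₂.PosSemidef) :
    Matrix.gmean β (σ₁ ⊗ₖ σ₂) (A₁ ⊗ₖ A₂) = (Matrix.gmean β σ₁ A₁) ⊗ₖ (Matrix.gmean β σ₂ A₂) := by
  have h1 : (σ₁ ⊗ₖ σ₂).rpowH (1/2) = σ₁.rpowH (1/2) ⊗ₖ σ₂.rpowH (1/2) :=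
    rpowH_kron hσ₁.posSemidef hσ₂.posSemidef _
  have h2 : (σ₁ ⊗ₖ σ₂).rpowH (-(1/2)) = σ₁.rpowH (-(1/2)) ⊗ₖ σ₂.rpowH (-(1/2)) :=
    rpowH_kron hσ₁.posSemidef hσ₂.posSemidef _
  have hM₁ : (σ₁.rpowH (-(1/2)) * A₁ * σ₁.rpowH (-(1/2))).PosSemidef :=
    hermitian_conj_posSemidef (rpowH_isHermitian hσ₁.1 _) hA₁
  have hM₂ : (σ₂.rpowH (-(1/2)) * A₂ * σ₂.rpowH (-(1/2))).PosSemidef :=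
    hermitian_conj_posSemidef (rpowH_isHermitian hσ₂.1 _) hA₂
  have hmid : (σ₁ ⊗ₖ σ₂).rpowH (-(1/2)) * (A₁ ⊗ₖ A₂) * (σ₁ ⊗ₖ σ₂).rpowH (-(1/2))
      = (σ₁.rpowH (-(1/2)) * A₁ * σ₁.rpowH (-(1/2))) ⊗ₖ
        (σ₂.rpowH (-(1/2)) * A₂ * σ₂.rpowH (-(1/2))) := by
    rw [h2, ← Matrix.mul_kronecker_mul, ← Matrix.mul_kronecker_mul]
  simp only [Matrix.gmean]
  rw [hmid, rpowH_kron hM₁ hM₂ β, h1, ← Matrix.mul_kronecker_mul, ← Matrix.mul_kronecker_mul]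

lemma qsharp_mem_mul {n₁ n₂ : Type*} [Fintype n₁] [DecidableEq n₁] [Fintype n₂] [DecidableEq n₂]
    (α : ℝ) {ρ₁ σ₁ : Matrix n₁ n₁ ℂ} {ρ₂ σ₂ : Matrix n₂ n₂ ℂ}
    (hρ₁ : ρ₁.PosSemidef) (hρ₂ : ρ₂.PosSemidef)
    (hσ₁ : σ₁.PosDef) (hσ₂ : σ₂.PosDef) {t₁ t₂ : ℝ}
    (h₁ : t₁ ∈ { t : ℝ | ∃ A : Matrix n₁ n₁ ℂ, A.PosSemidef ∧
      (Matrix.gmean (1/α) σ₁ A - ρ₁).PosSemidef ∧ t = A.trace.re })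
    (h₂ : t₂ ∈ { t : ℝ | ∃ A : Matrix n₂ n₂ ℂ, A.PosSemidef ∧
      (Matrix.gmean (1/α) σ₂ A - ρ₂).PosSemidef ∧ t = A.trace.re }) :
    t₁ * t₂ ∈ { t : ℝ | ∃ A : Matrix (n₁ × n₂) (n₁ × n₂) ℂ, A.PosSemidef ∧
      (Matrix.gmean (1/α) (σ₁ ⊗ₖ σ₂) A - ρ₁ ⊗ₖ ρ₂).PosSemidef ∧ t = A.trace.re } := by
  obtain ⟨A₁, hA₁, hd₁, ht₁⟩ := h₁
  obtain ⟨A₂, hA₂, hd₂, ht₂⟩ := h₂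
  refine ⟨A₁ ⊗ₖ A₂, hA₁.kron hA₂, ?_, ?_⟩
  · rw [gmean_kron (1/α) hσ₁ hσ₂ hA₁ hA₂]
    have hG₂ : (Matrix.gmean (1/α) σ₂ A₂).PosSemidef := by
      have := hd₂.add hρ₂
      rwa [sub_add_cancel] at this
    have hid : (Matrix.gmean (1/α) σ₁ A₁) ⊗ₖ (Matrix.gmean (1/α) σ₂ A₂) - ρ₁ ⊗ₖ ρ₂
        = (Matrix.gmean (1/α) σ₁ A₁ - ρ₁) ⊗ₖ (Matrix.gmean (1/α) σ₂ A₂)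
          + ρ₁ ⊗ₖ (Matrix.gmean (1/α) σ₂ A₂ - ρ₂) := by
      rw [sub_kron, kron_sub]
      abel
    rw [hid]
    exact (hd₁.kron hG₂).add (hρ₁.kron hd₂)
  · rw [ht₁, ht₂, Matrix.trace_kronecker, Complex.mul_re,
      (trace_re_nonneg_im_zero hA₁).2, (trace_re_nonneg_im_zero hA₂).2]
    ring

end Matrix


/-- Q^#_α is submultiplicative under Kronecker (tensor) products,
i.e. D^#_α is subadditive under tensor products. -/
theorem QSharp_kronecker_submultiplicative
    {n₁ n₂ : Type*} [Fintype n₁] [DecidableEq n₁] [Fintype n₂] [DecidableEq n₂]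
    (α : ℝ) (hα : 1 < α)
    (ρ₁ : Matrix n₁ n₁ ℂ) (ρ₂ : Matrix n₂ n₂ ℂ)
    (σ₁ : Matrix n₁ n₁ ℂ) (σ₂ : Matrix n₂ n₂ ℂ)
    (hρ₁ : ρ₁.PosSemidef) (hρ₂ : ρ₂.PosSemidef)
    (hσ₁ : σ₁.PosDef) (hσ₂ : σ₂.PosDef) :
    QSharp α (ρ₁ ⊗ₖ ρ₂) (σ₁ ⊗ₖ σ₂) ≤ QSharp α ρ₁ σ₁ * QSharp α ρ₂ σ₂ := by
  have mem_nonneg₁ : ∀ t ∈ { t : ℝ | ∃ A : Matrix n₁ n₁ ℂ, A.PosSemidef ∧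
      (Matrix.gmean (1/α) σ₁ A - ρ₁).PosSemidef ∧ t = A.trace.re }, 0 ≤ t := by
    rintro t ⟨A, hA, -, rfl⟩
    exact (Matrix.trace_re_nonneg_im_zero hA).1
  have mem_nonneg₂ : ∀ t ∈ { t : ℝ | ∃ A : Matrix n₂ n₂ ℂ, A.PosSemidef ∧
      (Matrix.gmean (1/α) σ₂ A - ρ₂).PosSemidef ∧ t = A.trace.re }, 0 ≤ t := by
    rintro t ⟨A, hA, -, rfl⟩
    exact (Matrix.trace_re_nonneg_im_zero hA).1
  have mem_nonneg₁₂ : ∀ t ∈ { t : ℝ | ∃ A : Matrix (n₁ × n₂) (n₁ × n₂) ℂ, A.PosSemidef ∧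
      (Matrix.gmean (1/α) (σ₁ ⊗ₖ σ₂) A - ρ₁ ⊗ₖ ρ₂).PosSemidef ∧ t = A.trace.re }, 0 ≤ t := by
    rintro t ⟨A, hA, -, rfl⟩
    exact (Matrix.trace_re_nonneg_im_zero hA).1
  have hne₁ := Matrix.qsharp_set_nonempty hα hρ₁ hσ₁
  have hne₂ := Matrix.qsharp_set_nonempty hα hρ₂ hσ₂
  rw [QSharp, QSharp, QSharp]
  set a := sInf { t : ℝ | ∃ A : Matrix n₁ n₁ ℂ, A.PosSemidef ∧
      (Matrix.gmean (1/α) σ₁ A - ρ₁).PosSemidef ∧ t = A.trace.re } with hadef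
  set b := sInf { t : ℝ | ∃ A : Matrix n₂ n₂ ℂ, A.PosSemidef ∧
      (Matrix.gmean (1/α) σ₂ A - ρ₂).PosSemidef ∧ t = A.trace.re } with hbdef
  have ha0 : 0 ≤ a := Real.sInf_nonneg mem_nonneg₁
  have hb0 : 0 ≤ b := Real.sInf_nonneg mem_nonneg₂
  have hbdd : BddBelow { t : ℝ | ∃ A : Matrix (n₁ × n₂) (n₁ × n₂) ℂ, A.PosSemidef ∧
      (Matrix.gmean (1/α) (σ₁ ⊗ₖ σ₂) A - ρ₁ ⊗ₖ ρ₂).PosSemidef ∧ t = A.trace.re } :=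
    ⟨0, fun t ht => mem_nonneg₁₂ t ht⟩
  refine le_of_forall_pos_le_add fun ε hε => ?_
  have hq : (0:ℝ) < a + b + 1 := by linarith
  set ε' := min 1 (ε / (a + b + 1)) with hε'def
  have hε'pos : 0 < ε' := lt_min one_pos (div_pos hε hq)
  obtain ⟨t₁, ht₁S, ht₁lt⟩ := Real.lt_sInf_add_pos hne₁ hε'pos
  obtain ⟨t₂, ht₂S, ht₂lt⟩ := Real.lt_sInf_add_pos hne₂ hε'pos
  have ht₁0 : 0 ≤ t₁ := mem_nonneg₁ t₁ ht₁S
  have ht₂0 : 0 ≤ t₂ := mem_nonneg₂ t₂ ht₂S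
  have h12 : sInf { t : ℝ | ∃ A : Matrix (n₁ × n₂) (n₁ × n₂) ℂ, A.PosSemidef ∧
      (Matrix.gmean (1/α) (σ₁ ⊗ₖ σ₂) A - ρ₁ ⊗ₖ ρ₂).PosSemidef ∧ t = A.trace.re } ≤ t₁ * t₂ :=
    csInf_le hbdd (Matrix.qsharp_mem_mul α hρ₁ hρ₂ hσ₁ hσ₂ ht₁S ht₂S)
  have hmul : t₁ * t₂ ≤ (a + ε') * (b + ε') :=
    mul_le_mul ht₁lt.le ht₂lt.le ht₂0 (by linarith)
  have h1 : ε' ≤ 1 := min_le_left _ _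
  have h3 : ε' * (a + b + 1) ≤ ε := (le_div_iff₀ hq).mp (min_le_right _ _)
  have h4 : ε' * ε' ≤ ε' * 1 := mul_le_mul_of_nonneg_left h1 hε'pos.le
  nlinarith [h12, hmul, h3, h4, ha0, hb0]
end

section
/- Let ρ be a positive semidefinite complex matrix with tr(ρ) = 1 and σ a positive definite complex matrix of the same size. Then D^#_α(ρ‖σ) → D_max(ρ‖σ) as α → ∞, where D_max(ρ‖σ) := log₂ inf { λ ∈ ℝ : ρ ≤ λ·σ } (equivalently D_max(ρ‖σ) = log₂ ‖σ^(−1/2) ρ σ^(−1/2)‖_∞). -/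
open Matrix Filter
open scoped Kronecker Classical ComplexOrder

/-- Max-relative entropy D_max(ρ‖σ) := log₂ inf { λ : ρ ≤ λ·σ }. -/
noncomputable def Dmax {n : Type*} [Fintype n] [DecidableEq n]
    (ρ σ : Matrix n n ℂ) : ℝ :=
  Real.logb 2 (sInf { lam : ℝ | ((lam : ℂ) • σ - ρ).PosSemidef })

/-! ### Auxiliary lemmas -/

namespace SharpAux

variable {n : Type*} [Fintype n] [DecidableEq n]

lemma rpowH_eq {A : Matrix n n ℂ} (hA : A.IsHermitian) (r : ℝ) :
    A.rpowH r = (hA.eigenvectorUnitary : Matrix n n ℂ) *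
      Matrix.diagonal (fun i => ((hA.eigenvalues i ^ r : ℝ) : ℂ)) *
      star (hA.eigenvectorUnitary : Matrix n n ℂ) := by
  rw [Matrix.rpowH, dif_pos hA]

lemma conj_diag_posSemidef {A : Matrix n n ℂ} (hA : A.IsHermitian) {d : n → ℝ}
    (hd : ∀ i, 0 ≤ d i) :
    ((hA.eigenvectorUnitary : Matrix n n ℂ) * Matrix.diagonal (fun i => (d i : ℂ)) *
      star (hA.eigenvectorUnitary : Matrix n n ℂ)).PosSemidef := by
  rw [Matrix.star_eq_conjTranspose]
  exact (Matrix.PosSemidef.diagonal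
    (fun i => Complex.zero_le_real.mpr (hd i))).mul_mul_conjTranspose_same _

lemma rpowH_posSemidef {A : Matrix n n ℂ} (hA : A.PosSemidef) (r : ℝ) :
    (A.rpowH r).PosSemidef := by
  rw [rpowH_eq hA.1]
  exact conj_diag_posSemidef hA.1 fun i => Real.rpow_nonneg (hA.eigenvalues_nonneg i) r

lemma rpowH_mul_rpowH {A : Matrix n n ℂ} (hA : A.PosDef) (r t : ℝ) :
    A.rpowH r * A.rpowH t = A.rpowH (r + t) := by
  rw [rpowH_eq hA.1, rpowH_eq hA.1, rpowH_eq hA.1]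
  have hU : star (hA.1.eigenvectorUnitary : Matrix n n ℂ) *
      (hA.1.eigenvectorUnitary : Matrix n n ℂ) = 1 :=
    (Matrix.mem_unitaryGroup_iff').mp hA.1.eigenvectorUnitary.2
  have : Matrix.diagonal (fun i => ((hA.1.eigenvalues i ^ r : ℝ) : ℂ)) *
      Matrix.diagonal (fun i => ((hA.1.eigenvalues i ^ t : ℝ) : ℂ)) =
      Matrix.diagonal (fun i => ((hA.1.eigenvalues i ^ (r + t) : ℝ) : ℂ)) := by
    rw [Matrix.diagonal_mul_diagonal]
    exact congrArg _ (funext fun i => by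
      rw [← Complex.ofReal_mul, ← Real.rpow_add (hA.eigenvalues_pos i)])
  calc _ = (hA.1.eigenvectorUnitary : Matrix n n ℂ) *
      (Matrix.diagonal (fun i => ((hA.1.eigenvalues i ^ r : ℝ) : ℂ)) *
        ((star (hA.1.eigenvectorUnitary : Matrix n n ℂ) *
          (hA.1.eigenvectorUnitary : Matrix n n ℂ)) *
        Matrix.diagonal (fun i => ((hA.1.eigenvalues i ^ t : ℝ) : ℂ)))) *
      star (hA.1.eigenvectorUnitary : Matrix n n ℂ) := by
        simp only [Matrix.mul_assoc]
    _ = _ := by rw [hU, one_mul, this]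

lemma rpowH_one {A : Matrix n n ℂ} (hA : A.PosDef) : A.rpowH 1 = A := by
  rw [rpowH_eq hA.1]
  have hfun : (fun i => ((hA.1.eigenvalues i ^ (1:ℝ) : ℝ) : ℂ)) =
      (RCLike.ofReal ∘ hA.1.eigenvalues) := funext fun i => by
    rw [Real.rpow_one]; rfl
  rw [hfun]
  exact hA.1.spectral_theorem.symm

lemma rpowH_zero {A : Matrix n n ℂ} (hA : A.IsHermitian) : A.rpowH 0 = 1 := by
  rw [rpowH_eq hA]
  have : (fun i => ((hA.eigenvalues i ^ (0:ℝ) : ℝ) : ℂ)) = fun _ => (1:ℂ) := by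
    funext i; rw [Real.rpow_zero]; norm_num
  rw [this, Matrix.diagonal_one, mul_one]
  exact (Matrix.mem_unitaryGroup_iff).mp hA.eigenvectorUnitary.2

lemma rpowH_isHermitian {A : Matrix n n ℂ} (hA : A.IsHermitian) (r : ℝ) :
    (A.rpowH r).IsHermitian := by
  rw [rpowH_eq hA, Matrix.star_eq_conjTranspose]
  apply Matrix.isHermitian_mul_mul_conjTranspose
  exact Matrix.isHermitian_diagonal_of_self_adjoint _ (funext fun i => Complex.conj_ofReal _)

lemma rpowH_smul_one (c : ℝ) (r : ℝ) :
    (((c:ℂ) • (1 : Matrix n n ℂ)).rpowH r) = ((c ^ r : ℝ) : ℂ) • (1 : Matrix n n ℂ) := by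
  have hM : ((c:ℂ) • (1 : Matrix n n ℂ)).IsHermitian := by
    unfold Matrix.IsHermitian
    rw [Matrix.conjTranspose_smul, Matrix.conjTranspose_one]
    congr 1
    exact Complex.conj_ofReal c
  have hU : star (hM.eigenvectorUnitary : Matrix n n ℂ) *
      (hM.eigenvectorUnitary : Matrix n n ℂ) = 1 :=
    (Matrix.mem_unitaryGroup_iff').mp hM.eigenvectorUnitary.2
  have hU' : (hM.eigenvectorUnitary : Matrix n n ℂ) *
      star (hM.eigenvectorUnitary : Matrix n n ℂ) = 1 :=
    (Matrix.mem_unitaryGroup_iff).mp hM.eigenvectorUnitary.2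
  have heig : ∀ i, hM.eigenvalues i = c := by
    intro i
    have h1 := hM.conjStarAlgAut_star_eigenvectorUnitary
    rw [Unitary.conjStarAlgAut_star_apply] at h1
    have h2 : star (hM.eigenvectorUnitary : Matrix n n ℂ) * ((c:ℂ) • (1 : Matrix n n ℂ)) *
        (hM.eigenvectorUnitary : Matrix n n ℂ) = (c:ℂ) • (1 : Matrix n n ℂ) := by
      rw [Matrix.mul_smul, mul_one, Matrix.smul_mul, hU]
    rw [h2] at h1
    have h3 := congrFun (congrFun h1 i) i
    simp only [Matrix.smul_apply, Matrix.one_apply_eq, smul_eq_mul, mul_one,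
      Matrix.diagonal_apply_eq, Function.comp] at h3
    exact Complex.ofReal_inj.mp h3.symm
  rw [rpowH_eq hM]
  have hfun : (fun i => ((hM.eigenvalues i ^ r : ℝ) : ℂ)) = fun _ => ((c ^ r : ℝ) : ℂ) := by
    funext i; rw [heig i]
  rw [hfun]
  have hd : Matrix.diagonal (fun _ : n => ((c ^ r : ℝ) : ℂ)) = ((c ^ r : ℝ) : ℂ) • 1 := by
    rw [Matrix.smul_one_eq_diagonal]
  rw [hd, Matrix.mul_smul, mul_one, Matrix.smul_mul, hU']

lemma trace_eq_sum_eig {A : Matrix n n ℂ} (hA : A.IsHermitian) :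
    A.trace = ∑ i, ((hA.eigenvalues i : ℝ) : ℂ) := by
  have hU : star (hA.eigenvectorUnitary : Matrix n n ℂ) *
      (hA.eigenvectorUnitary : Matrix n n ℂ) = 1 :=
    (Matrix.mem_unitaryGroup_iff').mp hA.eigenvectorUnitary.2
  conv_lhs => rw [hA.spectral_theorem, Unitary.conjStarAlgAut_apply]
  rw [Matrix.trace_mul_cycle, hU, one_mul, Matrix.trace_diagonal]
  rfl

lemma trace_nonneg {A : Matrix n n ℂ} (hA : A.PosSemidef) : 0 ≤ A.trace := by
  rw [Matrix.trace]
  apply Finset.sum_nonneg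
  intro i _
  have := hA.dotProduct_mulVec_nonneg (Pi.single i 1)
  simpa [Matrix.mulVec_single, dotProduct, Pi.single_apply, apply_ite] using this

lemma trace_mul_nonneg {A B : Matrix n n ℂ} (hA : A.PosSemidef) (hB : B.PosSemidef) :
    0 ≤ (A * B).trace := by
  open scoped MatrixOrder in
  obtain ⟨C, rfl⟩ := CStarAlgebra.nonneg_iff_eq_star_mul_self.mp hA.nonneg
  rw [Matrix.mul_assoc, Matrix.trace_mul_comm]
  exact trace_nonneg (hB.mul_mul_conjTranspose_same _)

lemma conj_diag_le {A : Matrix n n ℂ} (hA : A.IsHermitian) {d e : n → ℝ}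
    (h : ∀ i, d i ≤ e i) :
    ((hA.eigenvectorUnitary : Matrix n n ℂ) * Matrix.diagonal (fun i => (e i : ℂ)) *
        star (hA.eigenvectorUnitary : Matrix n n ℂ) -
     (hA.eigenvectorUnitary : Matrix n n ℂ) * Matrix.diagonal (fun i => (d i : ℂ)) *
        star (hA.eigenvectorUnitary : Matrix n n ℂ)).PosSemidef := by
  have heq : (hA.eigenvectorUnitary : Matrix n n ℂ) * Matrix.diagonal (fun i => (e i : ℂ)) *
        star (hA.eigenvectorUnitary : Matrix n n ℂ) -
      (hA.eigenvectorUnitary : Matrix n n ℂ) * Matrix.diagonal (fun i => (d i : ℂ)) *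
        star (hA.eigenvectorUnitary : Matrix n n ℂ) =
      (hA.eigenvectorUnitary : Matrix n n ℂ) * Matrix.diagonal (fun i => ((e i - d i : ℝ) : ℂ)) *
        star (hA.eigenvectorUnitary : Matrix n n ℂ) := by
    rw [← Matrix.sub_mul, ← Matrix.mul_sub]
    have : (Matrix.diagonal fun i => ((e i : ℝ):ℂ)) - Matrix.diagonal (fun i => ((d i : ℝ):ℂ)) =
        Matrix.diagonal (fun i => ((e i - d i : ℝ) : ℂ)) := by
      rw [Matrix.diagonal_sub]
      exact congrArg _ (funext fun i => by push_cast; ring)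
    rw [this]
  rw [heq, Matrix.star_eq_conjTranspose]
  exact (Matrix.PosSemidef.diagonal
    (fun i => Complex.zero_le_real.mpr (sub_nonneg.mpr (h i)))).mul_mul_conjTranspose_same _

lemma smul_one_eq_conj {A : Matrix n n ℂ} (hA : A.IsHermitian) (c : ℂ) :
    c • (1 : Matrix n n ℂ) = (hA.eigenvectorUnitary : Matrix n n ℂ) *
      Matrix.diagonal (fun _ => c) * star (hA.eigenvectorUnitary : Matrix n n ℂ) := by
  have hU : (hA.eigenvectorUnitary : Matrix n n ℂ) *
      star (hA.eigenvectorUnitary : Matrix n n ℂ) = 1 :=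
    (Matrix.mem_unitaryGroup_iff).mp hA.eigenvectorUnitary.2
  rw [show Matrix.diagonal (fun _ : n => c) = c • 1 by rw [Matrix.smul_one_eq_diagonal],
    Matrix.mul_smul, mul_one, Matrix.smul_mul, hU]

lemma spectral' {A : Matrix n n ℂ} (hA : A.IsHermitian) :
    A = (hA.eigenvectorUnitary : Matrix n n ℂ) *
      Matrix.diagonal (fun i => ((hA.eigenvalues i : ℝ) : ℂ)) *
      star (hA.eigenvectorUnitary : Matrix n n ℂ) := by
  conv_lhs => rw [hA.spectral_theorem]
  rfl

lemma smul_conj {A : Matrix n n ℂ} (hA : A.IsHermitian) (c : ℝ) (d : n → ℝ) :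
    (c:ℂ) • ((hA.eigenvectorUnitary : Matrix n n ℂ) *
        Matrix.diagonal (fun i => ((d i : ℝ) : ℂ)) * star (hA.eigenvectorUnitary : Matrix n n ℂ)) =
      (hA.eigenvectorUnitary : Matrix n n ℂ) *
        Matrix.diagonal (fun i => ((c * d i : ℝ) : ℂ)) *
        star (hA.eigenvectorUnitary : Matrix n n ℂ) := by
  have hD : Matrix.diagonal (fun i => ((c * d i : ℝ):ℂ)) =
      (c:ℂ) • Matrix.diagonal (fun i => ((d i : ℝ):ℂ)) := by
    rw [← Matrix.diagonal_smul]
    exact congrArg _ (funext fun i => by push_cast; simp [smul_eq_mul])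
  rw [hD, Matrix.mul_smul, Matrix.smul_mul]

lemma smul_hermitian {r : ℝ} {A : Matrix n n ℂ} (hA : A.IsHermitian) :
    ((r:ℂ) • A).IsHermitian := by
  unfold Matrix.IsHermitian
  rw [Matrix.conjTranspose_smul, hA.eq]
  congr 1
  exact Complex.conj_ofReal r

lemma smul_posSemidef {r : ℝ} (hr : 0 ≤ r) {A : Matrix n n ℂ} (hA : A.PosSemidef) :
    ((r:ℂ) • A).PosSemidef := by
  refine .of_dotProduct_mulVec_nonneg (smul_hermitian hA.1) fun x => ?_
  rw [Matrix.smul_mulVec, dotProduct_smul, smul_eq_mul]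
  exact mul_nonneg (Complex.zero_le_real.mpr hr) (hA.dotProduct_mulVec_nonneg x)

lemma dot_expand (σ ρ : Matrix n n ℂ) (lam : ℝ) (x : n → ℂ) :
    dotProduct (star x) ((((lam:ℂ) • σ - ρ)) *ᵥ x) =
      (lam:ℂ) * dotProduct (star x) (σ *ᵥ x) - dotProduct (star x) (ρ *ᵥ x) := by
  rw [Matrix.sub_mulVec, Matrix.smul_mulVec, dotProduct_sub,
    dotProduct_smul, smul_eq_mul]

end SharpAux

/-- D^#_α(ρ‖σ) → D_max(ρ‖σ) as α → ∞, for a density matrix ρ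
and positive definite σ. -/
theorem DSharp_tendsto_Dmax
    {n : Type*} [Fintype n] [DecidableEq n]
    (ρ σ : Matrix n n ℂ) (hρ : ρ.PosSemidef) (hρtr : ρ.trace = 1) (hσ : σ.PosDef) :
    Tendsto (fun α : ℝ => DSharp α ρ σ) atTop (nhds (Dmax ρ σ)) := by
  classical
  open SharpAux in
  -- n is nonempty
  have hne : Nonempty n := by
    by_contra h
    rw [not_nonempty_iff] at h
    rw [Matrix.trace, Finset.univ_eq_empty, Finset.sum_empty] at hρtr
    exact zero_ne_one hρtr
  have hune : (Finset.univ : Finset n).Nonempty := Finset.univ_nonempty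
  -- square roots of σ
  set s := σ.rpowH (1/2) with hs_def
  set si := σ.rpowH (-(1/2)) with hsi_def
  have hs_si : s * si = 1 := by
    rw [hs_def, hsi_def, SharpAux.rpowH_mul_rpowH hσ,
      show (1/2 + -(1/2) : ℝ) = 0 by ring, SharpAux.rpowH_zero hσ.1]
  have hsi_s : si * s = 1 := by
    rw [hs_def, hsi_def, SharpAux.rpowH_mul_rpowH hσ,
      show (-(1/2) + 1/2 : ℝ) = 0 by ring, SharpAux.rpowH_zero hσ.1]
  have hss : s * s = σ := by
    rw [hs_def, SharpAux.rpowH_mul_rpowH hσ, show (1/2 + 1/2 : ℝ) = 1 by ring,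
      SharpAux.rpowH_one hσ]
  have hsH : s.IsHermitian := SharpAux.rpowH_isHermitian hσ.1 _
  have hsiH : si.IsHermitian := SharpAux.rpowH_isHermitian hσ.1 _
  have hsi_σ_si : si * σ * si = 1 := by
    rw [← hss, show si * (s * s) * si = (si * s) * (s * si) by noncomm_ring,
      hsi_s, hs_si, one_mul]
  -- the D_max set
  set S : Set ℝ := { lam : ℝ | ((lam : ℂ) • σ - ρ).PosSemidef } with hS_def
  -- eigenvalue bounds for σ
  set mσ : ℝ := Finset.univ.inf' hune hσ.1.eigenvalues with hmσ_def
  have hmσ_pos : 0 < mσ := by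
    rw [hmσ_def, Finset.lt_inf'_iff]
    exact fun i _ => hσ.eigenvalues_pos i
  have hσ_ge : (σ - (mσ:ℂ) • 1).PosSemidef := by
    have heq : σ - (mσ:ℂ) • 1 =
        (hσ.1.eigenvectorUnitary : Matrix n n ℂ) *
          Matrix.diagonal (fun i => ((hσ.1.eigenvalues i : ℝ) : ℂ)) *
          star (hσ.1.eigenvectorUnitary : Matrix n n ℂ) -
        (hσ.1.eigenvectorUnitary : Matrix n n ℂ) *
          Matrix.diagonal (fun _ => ((mσ : ℝ) : ℂ)) *
          star (hσ.1.eigenvectorUnitary : Matrix n n ℂ) := by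
      rw [← SharpAux.spectral' hσ.1, ← SharpAux.smul_one_eq_conj hσ.1]
    rw [heq]
    exact SharpAux.conj_diag_le hσ.1 (d := fun _ => mσ) (e := hσ.1.eigenvalues)
      (fun i => Finset.inf'_le _ (Finset.mem_univ i))
  -- positivity of trace σ
  have htrσ : σ.trace.re = ∑ i, hσ.1.eigenvalues i := by
    rw [SharpAux.trace_eq_sum_eig hσ.1, Complex.re_sum]
    simp
  have htrσ_pos : 0 < σ.trace.re := by
    rw [htrσ]
    exact Finset.sum_pos (fun i _ => hσ.eigenvalues_pos i) hune
  -- S is nonempty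
  have hSne : S.Nonempty := by
    set Mρ : ℝ := Finset.univ.sup' hune hρ.1.eigenvalues with hMρ_def
    have hMρ0 : 0 ≤ Mρ := le_trans (hρ.eigenvalues_nonneg (Classical.arbitrary n))
      (Finset.le_sup' _ (Finset.mem_univ _))
    refine ⟨Mρ / mσ, ?_⟩
    have h1 : ((Mρ:ℂ) • (1 : Matrix n n ℂ) - ρ).PosSemidef := by
      have heq : (Mρ:ℂ) • (1 : Matrix n n ℂ) - ρ =
          (hρ.1.eigenvectorUnitary : Matrix n n ℂ) *
            Matrix.diagonal (fun _ => ((Mρ : ℝ) : ℂ)) *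
            star (hρ.1.eigenvectorUnitary : Matrix n n ℂ) -
          (hρ.1.eigenvectorUnitary : Matrix n n ℂ) *
            Matrix.diagonal (fun i => ((hρ.1.eigenvalues i : ℝ) : ℂ)) *
            star (hρ.1.eigenvectorUnitary : Matrix n n ℂ) := by
        rw [← SharpAux.spectral' hρ.1, ← SharpAux.smul_one_eq_conj hρ.1]
      rw [heq]
      exact SharpAux.conj_diag_le hρ.1 (d := hρ.1.eigenvalues) (e := fun _ => Mρ)
        (fun i => Finset.le_sup' _ (Finset.mem_univ i))
    have h2 : (((1/mσ : ℝ):ℂ) • σ - (1 : Matrix n n ℂ)).PosSemidef := by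
      have hc : ((1/mσ : ℝ):ℂ) • σ =
          (hσ.1.eigenvectorUnitary : Matrix n n ℂ) *
            Matrix.diagonal (fun i => ((1/mσ * hσ.1.eigenvalues i : ℝ) : ℂ)) *
            star (hσ.1.eigenvectorUnitary : Matrix n n ℂ) := by
        conv_lhs => rw [SharpAux.spectral' hσ.1]
        exact SharpAux.smul_conj hσ.1 _ _
      have hone : (1 : Matrix n n ℂ) =
          (hσ.1.eigenvectorUnitary : Matrix n n ℂ) *
            Matrix.diagonal (fun _ => (((1:ℝ)) : ℂ)) *
            star (hσ.1.eigenvectorUnitary : Matrix n n ℂ) := by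
        have := SharpAux.smul_one_eq_conj hσ.1 (((1:ℝ)):ℂ)
        rw [← this]
        norm_num
      rw [hc, hone]
      refine SharpAux.conj_diag_le hσ.1 (d := fun _ => (1:ℝ))
        (e := fun i => 1/mσ * hσ.1.eigenvalues i) (fun i => ?_)
      show (1:ℝ) ≤ 1/mσ * hσ.1.eigenvalues i
      rw [one_div, inv_mul_eq_div, le_div_iff₀ hmσ_pos, one_mul]
      exact Finset.inf'_le _ (Finset.mem_univ i)
    have heq3 : ((Mρ/mσ : ℝ):ℂ) • σ - ρ =
        (Mρ:ℂ) • (((1/mσ : ℝ):ℂ) • σ - (1 : Matrix n n ℂ)) +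
          ((Mρ:ℂ) • (1 : Matrix n n ℂ) - ρ) := by
      have hcoef : ((Mρ/mσ : ℝ):ℂ) = (Mρ:ℂ) * ((1/mσ : ℝ):ℂ) := by push_cast; ring
      rw [smul_sub, smul_smul, ← hcoef]
      abel
    show (((Mρ/mσ : ℝ):ℂ) • σ - ρ).PosSemidef
    rw [heq3]
    exact (SharpAux.smul_posSemidef hMρ0 h2).add h1
  -- ## Part 2: lower/positivity facts about S
  set lamS := sInf S with hlamS_def
  have key1 : ∀ lam ∈ S, 1/σ.trace.re ≤ lam := by
    intro lam hlam
    have h0 := SharpAux.trace_nonneg hlam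
    rw [Matrix.trace_sub, Matrix.trace_smul, hρtr, smul_eq_mul] at h0
    have h1 := (Complex.le_def.mp h0).1
    simp only [Complex.zero_re, Complex.sub_re, Complex.mul_re, Complex.ofReal_re,
      Complex.ofReal_im, Complex.one_re, zero_mul, sub_zero] at h1
    rw [div_le_iff₀ htrσ_pos]
    linarith
  have hSbdd : BddBelow S := ⟨_, key1⟩
  have hlam_pos : 0 < lamS := lt_of_lt_of_le (by positivity) (le_csInf hSne key1)
  have key2 : ∀ lam ∈ S, ∀ x : n → ℂ,
      (dotProduct (star x) (ρ *ᵥ x)).re ≤ lam * (dotProduct (star x) (σ *ᵥ x)).re := by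
    intro lam hlam x
    have h0 := hlam.dotProduct_mulVec_nonneg x
    rw [SharpAux.dot_expand] at h0
    have h1 := (Complex.le_def.mp h0).1
    simp only [Complex.zero_re, Complex.sub_re, Complex.mul_re, Complex.ofReal_re,
      Complex.ofReal_im, zero_mul, sub_zero] at h1
    linarith
  have hmem : lamS ∈ S := by
    refine .of_dotProduct_mulVec_nonneg ((SharpAux.smul_hermitian hσ.1).sub hρ.1) fun x => ?_
    rw [SharpAux.dot_expand]
    have ha := hσ.posSemidef.dotProduct_mulVec_nonneg x
    have hb := hρ.dotProduct_mulVec_nonneg x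
    have haim : (dotProduct (star x) (σ *ᵥ x)).im = 0 := ((Complex.le_def.mp ha).2).symm
    have hbim : (dotProduct (star x) (ρ *ᵥ x)).im = 0 := ((Complex.le_def.mp hb).2).symm
    have hare : 0 ≤ (dotProduct (star x) (σ *ᵥ x)).re := by
      simpa using (Complex.le_def.mp ha).1
    have hbre : 0 ≤ (dotProduct (star x) (ρ *ᵥ x)).re := by
      simpa using (Complex.le_def.mp hb).1
    have hre : (dotProduct (star x) (ρ *ᵥ x)).re ≤
        lamS * (dotProduct (star x) (σ *ᵥ x)).re := by
      rcases eq_or_lt_of_le hare with h | h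
      · obtain ⟨lam₀, hlam₀⟩ := hSne
        have h2 := key2 lam₀ hlam₀ x
        rw [← h] at h2 ⊢
        simpa using h2
      · have hdiv : (dotProduct (star x) (ρ *ᵥ x)).re /
            (dotProduct (star x) (σ *ᵥ x)).re ≤ lamS :=
          le_csInf hSne fun lam hlam => (div_le_iff₀ h).mpr (key2 lam hlam x)
        calc (dotProduct (star x) (ρ *ᵥ x)).re
            = (dotProduct (star x) (ρ *ᵥ x)).re / (dotProduct (star x) (σ *ᵥ x)).re *
              (dotProduct (star x) (σ *ᵥ x)).re := by field_simp
          _ ≤ lamS * (dotProduct (star x) (σ *ᵥ x)).re :=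
              mul_le_mul_of_nonneg_right hdiv hare
    rw [Complex.le_def]
    constructor
    · simpa [Complex.sub_re, Complex.mul_re, haim] using hre
    · simp [Complex.sub_im, Complex.mul_im, haim, hbim]
  -- ## Part 3: bounds on QSharp for α > 1
  have hQbound : ∀ α : ℝ, 1 < α →
      mσ * lamS ^ α ≤ QSharp α ρ σ ∧ QSharp α ρ σ ≤ lamS ^ α * σ.trace.re := by
    intro α hα
    have hα0 : (0:ℝ) < α := lt_trans one_pos hα
    have hαne : α ≠ 0 := ne_of_gt hα0
    have hc0 : 0 < lamS ^ α := Real.rpow_pos_of_pos hlam_pos α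
    have hcα : (lamS ^ α) ^ (1/α : ℝ) = lamS := by
      rw [← Real.rpow_mul hlam_pos.le, mul_one_div, div_self hαne, Real.rpow_one]
    -- the witness
    have hwit : lamS ^ α * σ.trace.re ∈
        { t : ℝ | ∃ A : Matrix n n ℂ, A.PosSemidef ∧
          (Matrix.gmean (1/α) σ A - ρ).PosSemidef ∧ t = A.trace.re } := by
      refine ⟨((lamS ^ α : ℝ):ℂ) • σ, SharpAux.smul_posSemidef hc0.le hσ.posSemidef, ?_, ?_⟩
      · have hconj : si * (((lamS ^ α : ℝ):ℂ) • σ) * si =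
            ((lamS ^ α : ℝ):ℂ) • (1 : Matrix n n ℂ) := by
          rw [Matrix.mul_smul, Matrix.smul_mul, hsi_σ_si]
        have hg : Matrix.gmean (1/α) σ (((lamS ^ α : ℝ):ℂ) • σ) = (lamS:ℂ) • σ := by
          rw [Matrix.gmean, ← hs_def, ← hsi_def, hconj,
            SharpAux.rpowH_smul_one (lamS ^ α) (1/α), hcα,
            Matrix.mul_smul, mul_one, Matrix.smul_mul, hss]
        rw [hg]
        exact hmem
      · rw [Matrix.trace_smul, smul_eq_mul]
        simp [Complex.mul_re]
    -- the lower bound for every element of the feasible set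
    have hlb : ∀ t ∈ { t : ℝ | ∃ A : Matrix n n ℂ, A.PosSemidef ∧
        (Matrix.gmean (1/α) σ A - ρ).PosSemidef ∧ t = A.trace.re },
        mσ * lamS ^ α ≤ t := by
      rintro t ⟨A, hA, hg, rfl⟩
      set B := si * A * si with hB_def
      have hB : B.PosSemidef := by
        have h := hA.conjTranspose_mul_mul_same (B := si)
        rwa [hsiH] at h
      have hBH : B.IsHermitian := hB.1
      set b := Finset.univ.sup' hune hBH.eigenvalues with hb_def
      have hb0 : 0 ≤ b := le_trans (hB.eigenvalues_nonneg (Classical.arbitrary n))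
        (Finset.le_sup' _ (Finset.mem_univ _))
      have hstep2 : (((b ^ (1/α:ℝ) : ℝ):ℂ) • (1 : Matrix n n ℂ) - B.rpowH (1/α)).PosSemidef := by
        have heq : ((b ^ (1/α:ℝ) : ℝ):ℂ) • (1 : Matrix n n ℂ) - B.rpowH (1/α) =
            (hBH.eigenvectorUnitary : Matrix n n ℂ) *
              Matrix.diagonal (fun _ => ((b ^ (1/α:ℝ) : ℝ):ℂ)) *
              star (hBH.eigenvectorUnitary : Matrix n n ℂ) -
            (hBH.eigenvectorUnitary : Matrix n n ℂ) *
              Matrix.diagonal (fun i => ((hBH.eigenvalues i ^ (1/α:ℝ) : ℝ):ℂ)) *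
              star (hBH.eigenvectorUnitary : Matrix n n ℂ) := by
          rw [← SharpAux.rpowH_eq hBH, ← SharpAux.smul_one_eq_conj hBH]
        rw [heq]
        exact SharpAux.conj_diag_le hBH (fun i => Real.rpow_le_rpow (hB.eigenvalues_nonneg i)
          (Finset.le_sup' _ (Finset.mem_univ i)) (by positivity))
      have hstep3 : (((b ^ (1/α:ℝ) : ℝ):ℂ) • σ - s * B.rpowH (1/α) * s).PosSemidef := by
        have h3 := hstep2.mul_mul_conjTranspose_same (B := s)
        rw [hsH] at h3
        have heq : s * (((b ^ (1/α:ℝ) : ℝ):ℂ) • (1 : Matrix n n ℂ) - B.rpowH (1/α)) * s =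
            ((b ^ (1/α:ℝ) : ℝ):ℂ) • σ - s * B.rpowH (1/α) * s := by
          rw [Matrix.mul_sub, Matrix.sub_mul, Matrix.mul_smul, mul_one, Matrix.smul_mul, hss]
        rwa [heq] at h3
      have hgmean : Matrix.gmean (1/α) σ A = s * B.rpowH (1/α) * s := by
        rw [Matrix.gmean, ← hs_def, ← hsi_def]
      have hmemb : b ^ (1/α:ℝ) ∈ S := by
        have hsum : (((b ^ (1/α:ℝ) : ℝ):ℂ) • σ - ρ) =
            (((b ^ (1/α:ℝ) : ℝ):ℂ) • σ - s * B.rpowH (1/α) * s) +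
              (Matrix.gmean (1/α) σ A - ρ) := by
          rw [hgmean]; abel
        show (((b ^ (1/α:ℝ) : ℝ):ℂ) • σ - ρ).PosSemidef
        rw [hsum]
        exact hstep3.add hg
      have hblam : lamS ^ α ≤ b := by
        have h1 : lamS ≤ b ^ (1/α:ℝ) := csInf_le hSbdd hmemb
        calc lamS ^ α ≤ (b ^ (1/α:ℝ)) ^ α := Real.rpow_le_rpow hlam_pos.le h1 hα0.le
          _ = b := by
            rw [← Real.rpow_mul hb0, one_div, inv_mul_cancel₀ hαne, Real.rpow_one]
      have hAeq : A = s * B * s := by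
        rw [hB_def, show s * (si * A * si) * s = (s * si) * A * (si * s) by noncomm_ring,
          hs_si, hsi_s, one_mul, mul_one]
      have htr : A.trace = (σ * B).trace := by
        rw [hAeq, Matrix.trace_mul_cycle, hss]
      have h5 : 0 ≤ ((σ - (mσ:ℂ) • 1) * B).trace := SharpAux.trace_mul_nonneg hσ_ge hB
      have h5' : mσ * B.trace.re ≤ (σ * B).trace.re := by
        rw [Matrix.sub_mul, Matrix.trace_sub, Matrix.smul_mul, one_mul,
          Matrix.trace_smul, smul_eq_mul] at h5
        have h5r := (Complex.le_def.mp h5).1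
        simp only [Complex.zero_re, Complex.sub_re, Complex.mul_re, Complex.ofReal_re,
          Complex.ofReal_im, zero_mul, sub_zero] at h5r
        linarith
      have h6 : b ≤ B.trace.re := by
        obtain ⟨i₀, _, hi₀⟩ := Finset.exists_mem_eq_sup' hune hBH.eigenvalues
        rw [SharpAux.trace_eq_sum_eig hBH, Complex.re_sum]
        simp only [Complex.ofReal_re]
        rw [hb_def, hi₀]
        exact Finset.single_le_sum (fun i _ => hB.eigenvalues_nonneg i) (Finset.mem_univ i₀)
      calc mσ * lamS ^ α ≤ mσ * b := mul_le_mul_of_nonneg_left hblam hmσ_pos.le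
        _ ≤ mσ * B.trace.re := mul_le_mul_of_nonneg_left h6 hmσ_pos.le
        _ ≤ (σ * B).trace.re := h5'
        _ = A.trace.re := by rw [htr]
    exact ⟨le_csInf ⟨_, hwit⟩ hlb, csInf_le ⟨_, fun t ht => hlb t ht⟩ hwit⟩
  -- ## Part 4: limits
  set L := Real.logb 2 lamS with hL_def
  have hDmax : Dmax ρ σ = L := rfl
  have hlogQ : ∀ᶠ α : ℝ in atTop,
      1/(α-1) * (Real.logb 2 mσ + α * L) ≤ DSharp α ρ σ ∧
      DSharp α ρ σ ≤ 1/(α-1) * (Real.logb 2 σ.trace.re + α * L) := by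
    filter_upwards [eventually_gt_atTop 1] with α hα
    obtain ⟨h1, h2⟩ := hQbound α hα
    have hc1 : (0:ℝ) ≤ 1/(α-1) := le_of_lt (one_div_pos.mpr (by linarith))
    have hrpos : 0 < lamS ^ α := Real.rpow_pos_of_pos hlam_pos α
    have hlog1 : Real.logb 2 (mσ * lamS ^ α) = Real.logb 2 mσ + α * L := by
      rw [Real.logb_mul (ne_of_gt hmσ_pos) (ne_of_gt hrpos)]
      congr 1
      rw [hL_def, Real.logb, Real.logb, Real.log_rpow hlam_pos]
      ring
    have hlog2 : Real.logb 2 (lamS ^ α * σ.trace.re) = Real.logb 2 σ.trace.re + α * L := by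
      rw [Real.logb_mul (ne_of_gt hrpos) (ne_of_gt htrσ_pos)]
      rw [hL_def, Real.logb, Real.logb, Real.logb, Real.log_rpow hlam_pos]
      ring
    constructor
    · show _ ≤ 1/(α-1) * Real.logb 2 (QSharp α ρ σ)
      rw [← hlog1]
      exact mul_le_mul_of_nonneg_left
        (Real.logb_le_logb_of_le (by norm_num) (by positivity) h1) hc1
    · show 1/(α-1) * Real.logb 2 (QSharp α ρ σ) ≤ _
      rw [← hlog2]
      have hq : 0 < QSharp α ρ σ := lt_of_lt_of_le (by positivity) h1
      exact mul_le_mul_of_nonneg_left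
        (Real.logb_le_logb_of_le (by norm_num) hq h2) hc1
  have hlim : ∀ c : ℝ, Tendsto (fun α : ℝ => 1/(α-1) * (c + α * L)) atTop (nhds L) := by
    intro c
    have h0 : Tendsto (fun α : ℝ => (α - 1)⁻¹) atTop (nhds 0) := by
      have := tendsto_inv_atTop_zero.comp
        (tendsto_atTop_add_const_right atTop (-1 : ℝ) tendsto_id)
      refine this.congr fun α => ?_
      simp [Function.comp, sub_eq_add_neg]
    have h1 : Tendsto (fun α : ℝ => L + (c + L) * (α - 1)⁻¹) atTop (nhds (L + (c + L) * 0)) :=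
      (h0.const_mul (c + L)).const_add L
    rw [mul_zero, add_zero] at h1
    apply h1.congr'
    filter_upwards [eventually_gt_atTop 1] with α hα
    have hne1 : α - 1 ≠ 0 := sub_ne_zero.mpr (ne_of_gt hα)
    field_simp
    ring
  rw [hDmax]
  exact tendsto_of_tendsto_of_tendsto_of_le_of_le' (hlim (Real.logb 2 mσ))
    (hlim (Real.logb 2 σ.trace.re))
    (hlogQ.mono fun α h => h.1) (hlogQ.mono fun α h => h.2)
end

section
/- Let n, d be positive integers and let X be a complex matrix indexed by the type of functions (Fin n → Fin d) that is permutation-invariant: for every permutation π of Fin n, P(π) · X = X · P(π), where P(π) is the permutation matrix with entries P(π)(f,g) = 1 if f = g ∘ π⁻¹ and 0 otherwise. Then the spectrum of X (the set of eigenvalues of X in ℂ) has cardinality at most (n+1)^d · (n+d)^(d²). -/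
open Matrix

/-- The permutation matrix P(π) on (ℂ^d)^{⊗n}, with entries
P(π)(f,g) = 1 if f = g ∘ π⁻¹ and 0 otherwise. -/
noncomputable def permMatrix (n d : ℕ) (π : Equiv.Perm (Fin n)) :
    Matrix (Fin n → Fin d) (Fin n → Fin d) ℂ :=
  Matrix.of fun f g => if f = g ∘ ⇑π⁻¹ then 1 else 0

section Aux

variable (n d : ℕ)

/-- The "commutant" submodule: matrices invariant under simultaneous permutation
of row and column indices. -/
noncomputable def permComm : Submodule ℂ (Matrix (Fin n → Fin d) (Fin n → Fin d) ℂ) where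
  carrier := {Y | ∀ (π : Equiv.Perm (Fin n)) (f g : Fin n → Fin d),
    Y (f ∘ ⇑π) (g ∘ ⇑π) = Y f g}
  add_mem' := by
    intro a b ha hb π f g
    simp [Matrix.add_apply, ha π f g, hb π f g]
  zero_mem' := by intro π f g; simp
  smul_mem' := by
    intro c a ha π f g
    simp [Matrix.smul_apply, ha π f g]

lemma permComm_mul_mem {Y Z : Matrix (Fin n → Fin d) (Fin n → Fin d) ℂ}
    (hY : Y ∈ permComm n d) (hZ : Z ∈ permComm n d) : Y * Z ∈ permComm n d := by
  intro π f g
  rw [Matrix.mul_apply, Matrix.mul_apply]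
  have hbij : Function.Bijective (fun h : Fin n → Fin d => h ∘ ⇑π) :=
    (Equiv.mk (fun h : Fin n → Fin d => h ∘ ⇑π) (fun h => h ∘ ⇑π⁻¹)
      (fun h => by funext i; simp) (fun h => by funext i; simp)).bijective
  have key := Fintype.sum_bijective _ hbij
    (fun h => Y f h * Z h g) (fun h => Y (f ∘ ⇑π) h * Z h (g ∘ ⇑π))
    (fun h => by simp only [hY π f h, hZ π h g])
  exact key.symm

lemma permComm_one_mem : (1 : Matrix (Fin n → Fin d) (Fin n → Fin d) ℂ) ∈ permComm n d := by
  intro π f g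
  have : (f ∘ ⇑π = g ∘ ⇑π) ↔ f = g := by
    constructor
    · intro h; funext i
      have := congrFun h (π.symm i)
      simpa using this
    · rintro rfl; rfl
  simp [Matrix.one_apply, this]

/-- The type of a pair of functions: the count of indices realizing each pair of values. -/
def typeOf (p : (Fin n → Fin d) × (Fin n → Fin d)) : Fin d × Fin d → ℕ :=
  fun c => (Finset.univ.filter (fun i => (p.1 i, p.2 i) = c)).card

lemma typeOf_lt (p : (Fin n → Fin d) × (Fin n → Fin d)) (c : Fin d × Fin d) :
    typeOf n d p c < n + 1 := by
  have : typeOf n d p c ≤ n := by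
    simpa [typeOf] using (Finset.card_filter_le Finset.univ (fun i => (p.1 i, p.2 i) = c))
  omega

/-- Pairs with the same type are in the same orbit of the diagonal Sₙ action. -/
lemma exists_perm_of_typeOf_eq {p q : (Fin n → Fin d) × (Fin n → Fin d)}
    (h : typeOf n d p = typeOf n d q) :
    ∃ e : Equiv.Perm (Fin n), p.1 = q.1 ∘ ⇑e ∧ p.2 = q.2 ∘ ⇑e := by
  set F : Fin n → Fin d × Fin d := fun i => (p.1 i, p.2 i) with hF
  set G : Fin n → Fin d × Fin d := fun i => (q.1 i, q.2 i) with hG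
  have hcard : ∀ c, Fintype.card {i // F i = c} = Fintype.card {i // G i = c} := by
    intro c
    have h1 : Fintype.card {i // F i = c} = typeOf n d p c := by
      simp [Fintype.card_subtype, typeOf, hF]
    have h2 : Fintype.card {i // G i = c} = typeOf n d q c := by
      simp [Fintype.card_subtype, typeOf, hG]
    rw [h1, h2, h]
  have fib : ∀ c, {i // F i = c} ≃ {i // G i = c} := fun c =>
    Fintype.equivOfCardEq (hcard c)
  refine ⟨Equiv.ofFiberEquiv fib, ?_, ?_⟩
  · funext i
    have := Equiv.ofFiberEquiv_map fib i
    exact (congrArg Prod.fst this).symm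
  · funext i
    have := Equiv.ofFiberEquiv_map fib i
    exact (congrArg Prod.snd this).symm

/-- Bounded type map, into `Fin (n+1)`. -/
def typeOf' (p : (Fin n → Fin d) × (Fin n → Fin d)) : Fin d × Fin d → Fin (n + 1) :=
  fun c => ⟨typeOf n d p c, typeOf_lt n d p c⟩

/-- The evaluation-at-representatives linear map. -/
noncomputable def evalRep :
    Matrix (Fin n → Fin d) (Fin n → Fin d) ℂ →ₗ[ℂ] ((Fin d × Fin d → Fin (n + 1)) → ℂ) where
  toFun Y := fun t =>
    if h : ∃ p : (Fin n → Fin d) × (Fin n → Fin d), typeOf' n d p = t then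
      Y h.choose.1 h.choose.2 else 0
  map_add' Y Z := by
    funext t
    by_cases h : ∃ p : (Fin n → Fin d) × (Fin n → Fin d), typeOf' n d p = t
    · simp only [Pi.add_apply, dif_pos h, Matrix.add_apply]
    · simp only [Pi.add_apply, dif_neg h, add_zero]
  map_smul' c Y := by
    funext t
    by_cases h : ∃ p : (Fin n → Fin d) × (Fin n → Fin d), typeOf' n d p = t
    · simp only [Pi.smul_apply, dif_pos h, Matrix.smul_apply, RingHom.id_apply, smul_eq_mul]
    · simp only [Pi.smul_apply, dif_neg h, smul_zero, RingHom.id_apply]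

lemma evalRep_inj {Y : Matrix (Fin n → Fin d) (Fin n → Fin d) ℂ}
    (hY : Y ∈ permComm n d) (h0 : evalRep n d Y = 0) : Y = 0 := by
  ext f g
  have hex : ∃ p : (Fin n → Fin d) × (Fin n → Fin d), typeOf' n d p = typeOf' n d (f, g) :=
    ⟨(f, g), rfl⟩
  have h1 : evalRep n d Y (typeOf' n d (f, g)) = Y hex.choose.1 hex.choose.2 := by
    simp only [evalRep, LinearMap.coe_mk, AddHom.coe_mk, dif_pos hex]
  have htype : typeOf n d (f, g) = typeOf n d hex.choose := by
    funext c
    have := congrFun hex.choose_spec c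
    simpa [typeOf', Fin.ext_iff] using this.symm
  obtain ⟨e, h2, h3⟩ := exists_perm_of_typeOf_eq n d htype
  have : Y f g = Y hex.choose.1 hex.choose.2 := by
    have hperm := hY e hex.choose.1 hex.choose.2
    rw [← h2, ← h3] at hperm
    exact hperm
  rw [this, ← h1, h0]
  simp

lemma finrank_permComm_le :
    Module.finrank ℂ (permComm n d) ≤ (n + 1) ^ (d ^ 2) := by
  have hinj : Function.Injective ((evalRep n d).comp (permComm n d).subtype) := by
    intro ⟨Y, hY⟩ ⟨Z, hZ⟩ hYZ
    have : evalRep n d (Y - Z) = 0 := by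
      simp only [LinearMap.comp_apply, Submodule.coe_subtype] at hYZ
      rw [map_sub, hYZ, sub_self]
    have := evalRep_inj n d (Submodule.sub_mem _ hY hZ) this
    exact Subtype.ext (sub_eq_zero.mp this)
  have := LinearMap.finrank_le_finrank_of_injective hinj
  calc Module.finrank ℂ (permComm n d)
      ≤ Module.finrank ℂ ((Fin d × Fin d → Fin (n + 1)) → ℂ) := this
    _ = Fintype.card (Fin d × Fin d → Fin (n + 1)) := Module.finrank_fintype_fun_eq_card ℂ
    _ = (n + 1) ^ (d ^ 2) := by simp [Fintype.card_fun]; ring_nf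

end Aux

/-- a permutation-invariant operator on (ℂ^d)^{⊗n} has at most
(n+1)^d · (n+d)^(d²) distinct eigenvalues. -/
theorem perm_invariant_spectrum_card
    (n d : ℕ) (hn : 0 < n) (hd : 0 < d)
    (X : Matrix (Fin n → Fin d) (Fin n → Fin d) ℂ)
    (hX : ∀ π : Equiv.Perm (Fin n), permMatrix n d π * X = X * permMatrix n d π) :
    (spectrum ℂ X).ncard ≤ (n + 1) ^ d * (n + d) ^ (d ^ 2) := by
  classical
  -- X belongs to the commutant submodule
  have hXmem : X ∈ permComm n d := by
    intro π f g
    have hcomm := congrFun (congrFun (hX π) f) (g ∘ ⇑π)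
    have hL : (permMatrix n d π * X) f (g ∘ ⇑π) = X (f ∘ ⇑π) (g ∘ ⇑π) := by
      rw [Matrix.mul_apply]
      have key : ∀ h : Fin n → Fin d,
          (permMatrix n d π f h : ℂ) = if h = f ∘ ⇑π then 1 else 0 := by
        intro h
        have : (f = h ∘ ⇑π⁻¹) ↔ (h = f ∘ ⇑π) := by
          constructor
          · rintro rfl; funext i; simp
          · rintro rfl; funext i; simp
        simp only [permMatrix, Matrix.of_apply, this]
      simp_rw [key]
      simp
    have hR : (X * permMatrix n d π) f (g ∘ ⇑π) = X f g := by
      rw [Matrix.mul_apply]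
      have key : ∀ h : Fin n → Fin d,
          (permMatrix n d π h (g ∘ ⇑π) : ℂ) = if h = g then 1 else 0 := by
        intro h
        have : (h = (g ∘ ⇑π) ∘ ⇑π⁻¹) ↔ (h = g) := by
          have : (g ∘ ⇑π) ∘ ⇑π⁻¹ = g := by funext i; simp
          rw [this]
        simp only [permMatrix, Matrix.of_apply, this]
      simp_rw [key]
      simp
    rw [← hL, hcomm, hR]
  -- powers of X belong to the commutant
  have hpow : ∀ k : ℕ, X ^ k ∈ permComm n d := by
    intro k
    induction k with
    | zero => simpa [pow_zero] using permComm_one_mem n d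
    | succ k ih => rw [pow_succ]; exact permComm_mul_mem n d ih hXmem
  set N : ℕ := (n + 1) ^ (d ^ 2) with hN
  -- the N+1 powers of X are linearly dependent in the commutant
  have hdep : ¬ LinearIndependent ℂ
      (fun i : Fin (N + 1) => (⟨X ^ (i : ℕ), hpow i⟩ : permComm n d)) := by
    intro hli
    have := hli.fintype_card_le_finrank
    rw [Fintype.card_fin] at this
    have := le_trans this (finrank_permComm_le n d)
    omega
  rw [Fintype.not_linearIndependent_iff] at hdep
  obtain ⟨c, hsum, i0, hi0⟩ := hdep
  -- extract a nonzero annihilating polynomial of degree ≤ N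
  have hsum' : ∑ i : Fin (N + 1), c i • X ^ (i : ℕ) = 0 := by
    have := congrArg (Subtype.val) hsum
    simpa using this
  set p : Polynomial ℂ := ∑ i : Fin (N + 1), Polynomial.C (c i) * Polynomial.X ^ (i : ℕ)
    with hp
  have hpcoeff : ∀ j : Fin (N + 1), p.coeff (j : ℕ) = c j := by
    intro j
    rw [hp, Polynomial.finset_sum_coeff]
    simp_rw [Polynomial.coeff_C_mul, Polynomial.coeff_X_pow]
    rw [Finset.sum_eq_single j]
    · simp
    · intro b _ hb
      have : (j : ℕ) ≠ (b : ℕ) := fun h => hb (Fin.ext h.symm)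
      simp [this]
    · simp
  have hpne : p ≠ 0 := fun h => hi0 (by rw [← hpcoeff i0, h]; simp)
  have hpdeg : p.natDegree ≤ N := by
    refine Polynomial.natDegree_sum_le_of_forall_le _ _ fun i _ => ?_
    refine le_trans (Polynomial.natDegree_mul_le) ?_
    have : (i : ℕ) ≤ N := Fin.is_le i
    simpa using this
  have hpX : Polynomial.aeval X p = 0 := by
    rw [hp, map_sum, ← hsum']
    refine Finset.sum_congr rfl fun i _ => ?_
    simp [Algebra.smul_def]
  -- the spectrum is contained in the roots of p
  haveI : Nonempty (Fin n → Fin d) := ⟨fun _ => ⟨0, hd⟩⟩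
  have hsub : spectrum ℂ X ⊆ ↑p.roots.toFinset := by
    intro μ hμ
    have h1 : Polynomial.eval μ p ∈ spectrum ℂ (Polynomial.aeval X p) :=
      spectrum.subset_polynomial_aeval X p ⟨μ, hμ, rfl⟩
    rw [hpX, spectrum.zero_eq] at h1
    have hroot : Polynomial.eval μ p = 0 := h1
    simp only [Finset.coe_sort_coe, Multiset.mem_toFinset, Finset.mem_coe]
    exact (Polynomial.mem_roots hpne).mpr hroot
  have hcard : (spectrum ℂ X).ncard ≤ N := by
    calc (spectrum ℂ X).ncard ≤ (↑p.roots.toFinset : Set ℂ).ncard :=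
          Set.ncard_le_ncard hsub (p.roots.toFinset.finite_toSet)
      _ = p.roots.toFinset.card := Set.ncard_coe_finset _
      _ ≤ Multiset.card p.roots := Multiset.toFinset_card_le _
      _ ≤ p.natDegree := Polynomial.card_roots' p
      _ ≤ N := hpdeg
  refine le_trans hcard ?_
  calc N = (n + 1) ^ (d ^ 2) := rfl
    _ ≤ (n + d) ^ (d ^ 2) := Nat.pow_le_pow_left (by omega) _
    _ ≤ (n + 1) ^ d * (n + d) ^ (d ^ 2) :=
        Nat.le_mul_of_pos_left _ (Nat.pow_pos (by omega))
end
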